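/- arXiv:2404.06379 — 3 statements merged into one kernel-verified Lean document; each statement's English description precedes it below -/
import Mathlib

section
/- Let n ≥ 3 and let w be an element of the affine symmetric group 𝑆̃_n. Then dis(w)/2 = ℓ(w) if and only if w globally avoids the pattern 321, i.e., there are no integers i < j < k with w(i) > w(j) > w(k). -/
namespace Stmt6


/-- `w` is an element of the affine symmetric group `𝑆̃_n`: a bijection of `ℤ`
with `w(i + n) = w(i) + n` for all `i` and `∑_{i=1}^n (w(i) - i) = 0`. -/
def IsAffinePerm (n : ℕ) (w : Equiv.Perm ℤ) : Prop :=
  (∀ i : ℤ, w (i + (n : ℤ)) = w i + (n : ℤ)) ∧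
    ∑ i ∈ Finset.Icc (1 : ℤ) (n : ℤ), (w i - i) = 0

/-- `σ` is the Coxeter generator `sᵢ` of `𝑆̃_n`: it swaps `j` and `j + 1` for
every integer `j ≡ i (mod n)` and fixes all other integers. -/
def IsGenA (n : ℕ) (i : ℕ) (σ : Equiv.Perm ℤ) : Prop :=
  ∀ j : ℤ, (j ≡ (i : ℤ) [ZMOD (n : ℤ)] → σ j = j + 1 ∧ σ (j + 1) = j) ∧
    ((¬ j ≡ (i : ℤ) [ZMOD (n : ℤ)] ∧ ¬ j ≡ (i : ℤ) + 1 [ZMOD (n : ℤ)]) → σ j = j)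

/-- `l` is a word for `w` in the letters `{0, …, n-1}`:
`w = s_{i₁} ⋯ s_{i_ℓ}` where `l = [i₁, …, i_ℓ]`. -/
def IsWordA (n : ℕ) (w : Equiv.Perm ℤ) (l : List ℕ) : Prop :=
  (∀ i ∈ l, i < n) ∧
    ∃ σs : List (Equiv.Perm ℤ), List.Forall₂ (IsGenA n) l σs ∧ σs.prod = w

/-- The Coxeter length of `w`: the minimal length of a word for `w`. -/
noncomputable def lenA (n : ℕ) (w : Equiv.Perm ℤ) : ℕ :=
  sInf {m | ∃ l : List ℕ, IsWordA n w l ∧ l.length = m}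

/-- The disarray `dis(w) = ∑_{i=1}^n |w(i) - i|`. -/
noncomputable def disA (n : ℕ) (w : Equiv.Perm ℤ) : ℤ :=
  ∑ i ∈ Finset.Icc (1 : ℤ) (n : ℤ), |w i - i|




variable {n : ℕ}

/-- the underlying function of the generator -/
def genF (n i : ℕ) (j : ℤ) : ℤ :=
  if j ≡ (i : ℤ) [ZMOD (n : ℤ)] then j + 1
  else if j ≡ (i : ℤ) + 1 [ZMOD (n : ℤ)] then j - 1 else j

lemma not_self_modEq_succ (hn : 2 ≤ n) (i : ℤ) : ¬ i ≡ i + 1 [ZMOD (n : ℤ)] := by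
  intro h
  have := Int.ModEq.dvd h
  simp only [add_sub_cancel_left] at this
  have := Int.le_of_dvd one_pos this
  omega

lemma modEq_succ_not_self (hn : 2 ≤ n) {j : ℤ} {i : ℤ}
    (h : j ≡ i + 1 [ZMOD (n : ℤ)]) : ¬ j ≡ i [ZMOD (n : ℤ)] := by
  intro h2
  exact not_self_modEq_succ hn i (h2.symm.trans h)

lemma genF_involutive (hn : 2 ≤ n) (i : ℕ) : Function.Involutive (genF n i) := by
  intro j
  unfold genF
  by_cases h1 : j ≡ (i : ℤ) [ZMOD (n : ℤ)]
  · simp only [h1, if_pos]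
    have h2 : j + 1 ≡ (i : ℤ) + 1 [ZMOD (n : ℤ)] := h1.add_right 1
    rw [if_neg (modEq_succ_not_self hn h2), if_pos h2]
    ring
  · rw [if_neg h1]
    by_cases h2 : j ≡ (i : ℤ) + 1 [ZMOD (n : ℤ)]
    · rw [if_pos h2]
      have h3 : j - 1 ≡ (i : ℤ) [ZMOD (n : ℤ)] := by
        have := h2.sub_right 1
        simpa using this
      rw [if_pos h3]; ring
    · rw [if_neg h2, if_neg h1, if_neg h2]

/-- The generator as a permutation. -/
noncomputable def genPerm (n i : ℕ) : Equiv.Perm ℤ :=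
  if h : 2 ≤ n then (genF_involutive h i).toPerm else 1

lemma genPerm_apply (hn : 2 ≤ n) (i : ℕ) (j : ℤ) : genPerm n i j = genF n i j := by
  rw [genPerm, dif_pos hn]; rfl

lemma genPerm_apply_of_modEq (hn : 2 ≤ n) {i : ℕ} {j : ℤ}
    (h : j ≡ (i : ℤ) [ZMOD (n : ℤ)]) : genPerm n i j = j + 1 := by
  rw [genPerm_apply hn, genF, if_pos h]

lemma genPerm_apply_of_modEq_succ (hn : 2 ≤ n) {i : ℕ} {j : ℤ}
    (h : j ≡ (i : ℤ) + 1 [ZMOD (n : ℤ)]) : genPerm n i j = j - 1 := by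
  rw [genPerm_apply hn, genF, if_neg (modEq_succ_not_self hn h), if_pos h]

lemma genPerm_apply_of_ne (hn : 2 ≤ n) {i : ℕ} {j : ℤ}
    (h1 : ¬ j ≡ (i : ℤ) [ZMOD (n : ℤ)]) (h2 : ¬ j ≡ (i : ℤ) + 1 [ZMOD (n : ℤ)]) :
    genPerm n i j = j := by
  rw [genPerm_apply hn, genF, if_neg h1, if_neg h2]

lemma isGenA_genPerm (hn : 2 ≤ n) (i : ℕ) : IsGenA n i (genPerm n i) := by
  intro j
  constructor
  · intro h
    refine ⟨genPerm_apply_of_modEq hn h, ?_⟩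
    have h2 : j + 1 ≡ (i : ℤ) + 1 [ZMOD (n : ℤ)] := h.add_right 1
    rw [genPerm_apply_of_modEq_succ hn h2]; ring
  · intro ⟨h1, h2⟩
    exact genPerm_apply_of_ne hn h1 h2

lemma IsGenA.eq_genPerm (hn : 2 ≤ n) {i : ℕ} {σ : Equiv.Perm ℤ} (h : IsGenA n i σ) :
    σ = genPerm n i := by
  apply Equiv.ext
  intro j
  by_cases h1 : j ≡ (i : ℤ) [ZMOD (n : ℤ)]
  · rw [genPerm_apply_of_modEq hn h1]; exact ((h j).1 h1).1
  · by_cases h2 : j ≡ (i : ℤ) + 1 [ZMOD (n : ℤ)]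
    · rw [genPerm_apply_of_modEq_succ hn h2]
      have h3 : j - 1 ≡ (i : ℤ) [ZMOD (n : ℤ)] := by
        have := h2.sub_right 1; simpa using this
      have := ((h (j-1)).1 h3).2
      simpa using this
    · rw [genPerm_apply_of_ne hn h1 h2]; exact (h j).2 ⟨h1, h2⟩

lemma genPerm_mul_self (hn : 2 ≤ n) (i : ℕ) : genPerm n i * genPerm n i = 1 := by
  apply Equiv.ext
  intro j
  simp only [Equiv.Perm.mul_apply, Equiv.Perm.one_apply]
  rw [genPerm_apply hn, genPerm_apply hn]
  exact genF_involutive hn i j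



variable {n : ℕ} {w : Equiv.Perm ℤ}

/-- periodicity -/
def Per (n : ℕ) (w : Equiv.Perm ℤ) : Prop := ∀ j : ℤ, w (j + (n : ℤ)) = w j + (n : ℤ)

lemma Per.one : Per n 1 := fun _ => rfl

lemma Per.mul {u v : Equiv.Perm ℤ} (hu : Per n u) (hv : Per n v) : Per n (u * v) := by
  intro j
  simp only [Equiv.Perm.mul_apply, hv j, hu (v j)]

lemma Per.int (hp : Per n w) : ∀ (k j : ℤ), w (j + k * (n : ℤ)) = w j + k * (n : ℤ) := by
  have hsub : ∀ j : ℤ, w (j - (n:ℤ)) = w j - (n:ℤ) := by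
    intro j
    have h1 := hp (j - n)
    rw [show j - (n:ℤ) + (n:ℤ) = j by ring] at h1
    omega
  intro k
  induction k using Int.induction_on with
  | zero => simp
  | succ k ih =>
    intro j
    have h := hp (j + k * n)
    rw [ih j] at h
    rw [show j + ((k:ℤ)+1)*(n:ℤ) = j + k*n + n by ring, h]
    ring
  | pred k ih =>
    intro j
    have h := hsub (j + (-(k:ℤ)) * n)
    rw [ih j] at h
    rw [show j + (-(k:ℤ)-1)*(n:ℤ) = (j + (-(k:ℤ))*n) - n by ring, h]
    ring

lemma modEq_iff_exists {a b : ℤ} (h : a ≡ b [ZMOD (n : ℤ)]) : ∃ t : ℤ, b = a + t * n := by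
  obtain ⟨t, ht⟩ := h.dvd
  exact ⟨t, by linarith⟩

/-- transfer of a comparison along periodicity -/
lemma per_cmp_transfer (hp : Per n w) {a b : ℤ} (t : ℤ) :
    (w (a + t * n) < w (b + t * n)) ↔ (w a < w b) := by
  rw [hp.int t a, hp.int t b]
  omega

def cset (w : Equiv.Perm ℤ) (i : ℤ) : Set ℤ := {j | i < j ∧ w j < w i}
def bset (w : Equiv.Perm ℤ) (i : ℤ) : Set ℤ := {j | j < i ∧ w i < w j}

/-- a crude bound on displacement -/
noncomputable def DD (n : ℕ) (w : Equiv.Perm ℤ) : ℤ := ∑ r ∈ Finset.Icc (1 : ℤ) (n : ℤ), |w r - r|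

lemma abs_diff_le (hp : Per n w) (hn : 1 ≤ n) (j : ℤ) : |w j - j| ≤ DD n w := by
  set r : ℤ := (j - 1) % (n : ℤ) + 1 with hr
  have hn0 : (0:ℤ) < n := by exact_mod_cast hn
  have hr1 : 1 ≤ r := by have := Int.emod_nonneg (j-1) (by omega : (n:ℤ) ≠ 0); omega
  have hr2 : r ≤ n := by have := Int.emod_lt_of_pos (j-1) hn0; omega
  have hj : j = r + ((j-1) / (n:ℤ)) * n := by
    have h := Int.mul_ediv_add_emod (j-1) (n:ℤ)
    have h2 := mul_comm ((j-1) / (n:ℤ)) (n:ℤ)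
    linarith
  have hw : w j = w r + ((j-1) / (n:ℤ)) * n := by
    conv_lhs => rw [hj]
    exact hp.int _ r
  have habs : |w j - j| = |w r - r| := by
    have h3 : w j - j = w r - r := by linarith [hw, hj]
    rw [h3]
  rw [habs]
  exact Finset.single_le_sum (f := fun r => |w r - r|) (fun i _ => abs_nonneg _)
    (Finset.mem_Icc.mpr ⟨hr1, hr2⟩)

lemma cset_finite (hp : Per n w) (hn : 1 ≤ n) (i : ℤ) : (cset w i).Finite := by
  apply Set.Finite.subset (Set.finite_Ioo i (w i + DD n w + 1))
  intro j hj
  obtain ⟨h1, h2⟩ := hj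
  have := abs_diff_le hp hn j
  simp only [Set.mem_Ioo]
  constructor
  · exact h1
  · have : j - w j ≤ DD n w := by have := abs_le.mp this; omega
    omega

lemma bset_finite (hp : Per n w) (hn : 1 ≤ n) (i : ℤ) : (bset w i).Finite := by
  apply Set.Finite.subset (Set.finite_Ioo (w i - DD n w - 1) i)
  intro j hj
  obtain ⟨h1, h2⟩ := hj
  have := abs_diff_le hp hn j
  simp only [Set.mem_Ioo]
  constructor
  · have : w j - j ≤ DD n w := by have := abs_le.mp this; omega
    omega
  · exact h1

noncomputable def cc (w : Equiv.Perm ℤ) (i : ℤ) : ℤ := ((cset w i).ncard : ℤ)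
noncomputable def bb (w : Equiv.Perm ℤ) (i : ℤ) : ℤ := ((bset w i).ncard : ℤ)

lemma cc_nonneg (w : Equiv.Perm ℤ) (i : ℤ) : 0 ≤ cc w i := Int.ofNat_nonneg _
lemma bb_nonneg (w : Equiv.Perm ℤ) (i : ℤ) : 0 ≤ bb w i := Int.ofNat_nonneg _

lemma cset_shift (hp : Per n w) (i t : ℤ) :
    cset w (i + t * n) = (fun j => j + t * n) '' cset w i := by
  ext j
  simp only [cset, Set.mem_setOf_eq, Set.mem_image]
  constructor
  · intro ⟨h1, h2⟩
    refine ⟨j - t * n, ⟨by omega, ?_⟩, by ring⟩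
    have hj : w j = w (j - t*n) + t * n := by
      have := hp.int t (j - t*n); rw [show j - t*(n:ℤ) + t*n = j by ring] at this; omega
    rw [hp.int t i] at h2
    omega
  · intro ⟨k, ⟨h1, h2⟩, h3⟩
    subst h3
    refine ⟨by omega, ?_⟩
    rw [hp.int t i, hp.int t k]
    omega

lemma cc_shift (hp : Per n w) (i t : ℤ) : cc w (i + t * n) = cc w i := by
  unfold cc
  rw [cset_shift hp i t, Set.ncard_image_of_injective _ (fun a b h => by omega)]

lemma bset_shift (hp : Per n w) (i t : ℤ) :
    bset w (i + t * n) = (fun j => j + t * n) '' bset w i := by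
  ext j
  simp only [bset, Set.mem_setOf_eq, Set.mem_image]
  constructor
  · intro ⟨h1, h2⟩
    refine ⟨j - t * n, ⟨by omega, ?_⟩, by ring⟩
    have hj : w j = w (j - t*n) + t * n := by
      have := hp.int t (j - t*n); rw [show j - t*(n:ℤ) + t*n = j by ring] at this; omega
    rw [hp.int t i] at h2
    omega
  · intro ⟨k, ⟨h1, h2⟩, h3⟩
    subst h3
    refine ⟨by omega, ?_⟩
    rw [hp.int t i, hp.int t k]
    omega

lemma bb_shift (hp : Per n w) (i t : ℤ) : bb w (i + t * n) = bb w i := by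
  unfold bb
  rw [bset_shift hp i t, Set.ncard_image_of_injective _ (fun a b h => by omega)]


variable {n : ℕ}

/-- canonical representative in the window `[1, n]` -/
def repW (n : ℕ) (a : ℤ) : ℤ := (a - 1) % (n : ℤ) + 1

lemma repW_spec (hn : 1 ≤ n) (a : ℤ) :
    repW n a ∈ Finset.Icc (1:ℤ) (n:ℤ) ∧ ∃ t : ℤ, repW n a = a + t * n := by
  have hn0 : (0:ℤ) < n := by exact_mod_cast hn
  constructor
  · have h1 := Int.emod_nonneg (a-1) (by omega : (n:ℤ) ≠ 0)
    have h2 := Int.emod_lt_of_pos (a-1) hn0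
    simp only [Finset.mem_Icc, repW]
    omega
  · refine ⟨-((a-1)/(n:ℤ)), ?_⟩
    have h := Int.mul_ediv_add_emod (a-1) (n:ℤ)
    have h2 := mul_comm ((a-1) / (n:ℤ)) (n:ℤ)
    simp only [repW]
    linarith

lemma repW_modEq (hn : 1 ≤ n) (a : ℤ) : repW n a ≡ a [ZMOD (n:ℤ)] := by
  obtain ⟨_, t, ht⟩ := repW_spec hn a
  show repW n a % (n:ℤ) = a % (n:ℤ)
  rw [ht, Int.add_mul_emod_self_right]

lemma window_unique {a b : ℤ} (ha : a ∈ Finset.Icc (1:ℤ) (n:ℤ))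
    (hb : b ∈ Finset.Icc (1:ℤ) (n:ℤ)) (h : a ≡ b [ZMOD (n:ℤ)]) : a = b := by
  obtain ⟨t, ht⟩ := h.dvd
  simp only [Finset.mem_Icc] at ha hb
  have ht0 : t = 0 := by
    by_contra hc
    rcases (by omega : 1 ≤ t ∨ t ≤ -1) with h1 | h1
    · nlinarith
    · nlinarith
  subst ht0
  simp only [mul_zero] at ht
  omega

lemma repW_eq_self (hn : 1 ≤ n) {a : ℤ} (ha : a ∈ Finset.Icc (1:ℤ) (n:ℤ)) :
    repW n a = a :=
  window_unique (repW_spec hn a).1 ha (repW_modEq hn a)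

lemma repW_add_mul (a t : ℤ) : repW n (a + t * (n:ℤ)) = repW n a := by
  show (a + t*(n:ℤ) - 1) % (n:ℤ) + 1 = (a - 1) % (n:ℤ) + 1
  rw [show a + t*(n:ℤ) - 1 = (a - 1) + t * (n:ℤ) by ring, Int.add_mul_emod_self_right]

lemma periodic_int {f : ℤ → ℤ} (hf : ∀ j, f (j + (n:ℤ)) = f j) :
    ∀ (t j : ℤ), f (j + t * (n:ℤ)) = f j := by
  have hsub : ∀ j : ℤ, f (j - (n:ℤ)) = f j := by
    intro j
    have h1 := hf (j - n)
    rw [show j - (n:ℤ) + (n:ℤ) = j by ring] at h1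
    omega
  intro t
  induction t using Int.induction_on with
  | zero => simp
  | succ k ih =>
    intro j
    have h := hf (j + k * n)
    rw [ih j] at h
    rw [show j + ((k:ℤ)+1)*(n:ℤ) = j + k*n + n by ring, h]
  | pred k ih =>
    intro j
    have h := hsub (j + (-(k:ℤ)) * n)
    rw [ih j] at h
    rw [show j + (-(k:ℤ)-1)*(n:ℤ) = (j + (-(k:ℤ))*n) - n by ring, h]

lemma repW_apply_periodic (hn : 1 ≤ n) {f : ℤ → ℤ} (hf : ∀ j, f (j + (n:ℤ)) = f j)
    (a : ℤ) : f (repW n a) = f a := by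
  obtain ⟨_, t, ht⟩ := repW_spec hn a
  rw [ht, periodic_int hf]

/-- reindexing a periodic sum along a periodic permutation -/
lemma sum_comp_per (hn : 1 ≤ n) (g : Equiv.Perm ℤ) (hg : Per n g)
    {f : ℤ → ℤ} (hf : ∀ j, f (j + (n:ℤ)) = f j) :
    ∑ i ∈ Finset.Icc (1:ℤ) (n:ℤ), f (g i) = ∑ i ∈ Finset.Icc (1:ℤ) (n:ℤ), f i := by
  apply Finset.sum_nbij' (fun a => repW n (g a)) (fun b => repW n (g⁻¹ b))
  · intro a _; exact (repW_spec hn (g a)).1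
  · intro b _; exact (repW_spec hn (g⁻¹ b)).1
  · intro a ha
    obtain ⟨_, t, ht⟩ := repW_spec hn (g a)
    have h1 : repW n (g a) = g (a + t * n) := by rw [hg.int t a]; exact ht
    rw [h1, (by simp : g⁻¹ (g (a + t * (n:ℤ))) = a + t * n), repW_add_mul, repW_eq_self hn ha]
  · intro b hb
    obtain ⟨_, t, ht⟩ := repW_spec hn (g⁻¹ b)
    have h1 : g (repW n (g⁻¹ b)) = b + t * n := by
      rw [ht, hg.int t (g⁻¹ b), (by simp : g (g⁻¹ b) = b)]
    rw [h1, repW_add_mul, repW_eq_self hn hb]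
  · intro a _
    exact (repW_apply_periodic hn hf (g a)).symm

/-- sum of a function supported on two residue classes -/
lemma sum_eq_pair (hn : 2 ≤ n) (cl : ℕ) (δ : ℤ → ℤ)
    (h0 : ∀ i, ¬ i ≡ (cl:ℤ) [ZMOD (n:ℤ)] → ¬ i ≡ (cl:ℤ)+1 [ZMOD (n:ℤ)] → δ i = 0) :
    ∑ i ∈ Finset.Icc (1:ℤ) (n:ℤ), δ i = δ (repW n cl) + δ (repW n ((cl:ℤ)+1)) := by
  have hn1 : 1 ≤ n := by omega
  set r1 := repW n cl with hr1
  set r2 := repW n ((cl:ℤ)+1) with hr2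
  have hne : r1 ≠ r2 := by
    intro h
    have h1 := repW_modEq hn1 (cl:ℤ)
    have h2 := repW_modEq hn1 ((cl:ℤ)+1)
    rw [← hr1] at h1; rw [← hr2] at h2
    have : (cl:ℤ) ≡ (cl:ℤ)+1 [ZMOD (n:ℤ)] := (h1.symm.trans (h ▸ h2))
    obtain ⟨t, ht⟩ := this.dvd
    have hn0 : (2:ℤ) ≤ n := by exact_mod_cast hn
    rcases (by omega : t = 0 ∨ 1 ≤ t ∨ t ≤ -1) with h|h|h <;> nlinarith
  have hsub : {r1, r2} ⊆ Finset.Icc (1:ℤ) (n:ℤ) := by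
    intro x hx
    simp only [Finset.mem_insert, Finset.mem_singleton] at hx
    rcases hx with h|h <;> subst h
    · exact (repW_spec hn1 _).1
    · exact (repW_spec hn1 _).1
  rw [← Finset.sum_subset hsub, Finset.sum_pair hne]
  intro x hx hnx
  simp only [Finset.mem_insert, Finset.mem_singleton] at hnx
  push_neg at hnx
  apply h0
  · intro hc
    exact hnx.1 (window_unique hx (repW_spec hn1 _).1 (hc.trans (repW_modEq hn1 _).symm))
  · intro hc
    exact hnx.2 (window_unique hx (repW_spec hn1 _).1 (hc.trans (repW_modEq hn1 _).symm))


lemma lt_genPerm_iff (hn : 2 ≤ n) (cl : ℕ) {i k : ℤ} (h1 : k ≠ i) (h2 : k ≠ i + 1) :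
    i < genPerm n cl k ↔ i < k := by
  by_cases hc : k ≡ (cl:ℤ) [ZMOD (n:ℤ)]
  · rw [genPerm_apply_of_modEq hn hc]; omega
  · by_cases hc2 : k ≡ (cl:ℤ)+1 [ZMOD (n:ℤ)]
    · rw [genPerm_apply_of_modEq_succ hn hc2]; omega
    · rw [genPerm_apply_of_ne hn hc hc2]

lemma genPerm_lt_iff (hn : 2 ≤ n) (cl : ℕ) {i k : ℤ} (h1 : k ≠ i) (h2 : k ≠ i - 1) :
    genPerm n cl k < i ↔ k < i := by
  by_cases hc : k ≡ (cl:ℤ) [ZMOD (n:ℤ)]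
  · rw [genPerm_apply_of_modEq hn hc]; omega
  · by_cases hc2 : k ≡ (cl:ℤ)+1 [ZMOD (n:ℤ)]
    · rw [genPerm_apply_of_modEq_succ hn hc2]; omega
    · rw [genPerm_apply_of_ne hn hc hc2]

lemma genPerm_sq_apply (hn : 2 ≤ n) (cl : ℕ) (j : ℤ) :
    genPerm n cl (genPerm n cl j) = j := by
  have := genPerm_mul_self hn cl
  calc genPerm n cl (genPerm n cl j) = (genPerm n cl * genPerm n cl) j := rfl
    _ = j := by rw [this]; rfl

lemma mulgen_cset (hn : 2 ≤ n) (cl : ℕ) (i : ℤ) :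
    cset (w * genPerm n cl) i =
      (genPerm n cl) '' {k | i < genPerm n cl k ∧ w k < w (genPerm n cl i)} := by
  ext j
  simp only [cset, Set.mem_setOf_eq, Set.mem_image, Equiv.Perm.mul_apply]
  constructor
  · intro ⟨hj1, hj2⟩
    exact ⟨genPerm n cl j, ⟨by rw [genPerm_sq_apply hn]; exact hj1, hj2⟩,
      genPerm_sq_apply hn cl j⟩
  · intro ⟨k, ⟨hk1, hk2⟩, hk3⟩
    subst hk3
    exact ⟨hk1, by rw [genPerm_sq_apply hn]; exact hk2⟩

lemma mulgen_bset (hn : 2 ≤ n) (cl : ℕ) (i : ℤ) :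
    bset (w * genPerm n cl) i =
      (genPerm n cl) '' {k | genPerm n cl k < i ∧ w (genPerm n cl i) < w k} := by
  ext j
  simp only [bset, Set.mem_setOf_eq, Set.mem_image, Equiv.Perm.mul_apply]
  constructor
  · intro ⟨hj1, hj2⟩
    exact ⟨genPerm n cl j, ⟨by rw [genPerm_sq_apply hn]; exact hj1, hj2⟩,
      genPerm_sq_apply hn cl j⟩
  · intro ⟨k, ⟨hk1, hk2⟩, hk3⟩
    subst hk3
    exact ⟨hk1, by rw [genPerm_sq_apply hn]; exact hk2⟩
variable {i : ℤ}
lemma modEq_close {x y : ℤ} (h : x ≡ y [ZMOD (n:ℤ)]) (hlt : |x - y| < (n:ℤ)) : x = y := by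
  obtain ⟨t, ht⟩ := h.dvd
  rw [abs_lt] at hlt
  have ht0 : t = 0 := by
    by_contra hc
    rcases (by omega : 1 ≤ t ∨ t ≤ -1) with h1 | h1
    · have h2 : (n:ℤ) ≤ (n:ℤ)*t := by nlinarith
      omega
    · have h2 : (n:ℤ)*t ≤ -(n:ℤ) := by nlinarith
      omega
  subst ht0; simp only [mul_zero] at ht; omega

section CaseLemmas

variable {cl : ℕ}

lemma cc_mulgen_a (hn : 3 ≤ n) (hp : Per n w) (h : i ≡ (cl:ℤ) [ZMOD (n:ℤ)]) :
    cc (w * genPerm n cl) i = cc w (i+1) + (if w i < w (i+1) then 1 else 0) := by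
  have hn2 : 2 ≤ n := by omega
  have hn1 : 1 ≤ n := by omega
  have hsi : genPerm n cl i = i + 1 := genPerm_apply_of_modEq hn2 h
  have hsi1 : genPerm n cl (i+1) = i := by
    rw [genPerm_apply_of_modEq_succ hn2 (h.add_right 1)]; ring
  have hmem : ∀ k, k ≠ i → k ≠ i + 1 →
      (k ∈ {k | i < genPerm n cl k ∧ w k < w (genPerm n cl i)} ↔ k ∈ cset w (i+1)) := by
    intro k hk hk1
    simp only [Set.mem_setOf_eq, cset, hsi, lt_genPerm_iff hn2 cl hk hk1]
    constructor
    · intro ⟨h1, h2⟩; exact ⟨by omega, h2⟩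
    · intro ⟨h1, h2⟩; exact ⟨by omega, h2⟩
  have himg : cc (w * genPerm n cl) i =
      (({k | i < genPerm n cl k ∧ w k < w (genPerm n cl i)}).ncard : ℤ) := by
    unfold cc
    rw [mulgen_cset hn2, Set.ncard_image_of_injective _ (genPerm n cl).injective]
  by_cases hlt : w i < w (i+1)
  · have hT : {k | i < genPerm n cl k ∧ w k < w (genPerm n cl i)} =
        insert i (cset w (i+1)) := by
      ext k
      by_cases hk : k = i
      · subst hk
        constructor
        · intro _; exact Set.mem_insert _ _
        · intro _
          refine ⟨?_, ?_⟩
          · rw [hsi]; omega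
          · rw [hsi]; exact hlt
      · by_cases hk1 : k = i + 1
        · subst hk1
          simp only [Set.mem_setOf_eq, hsi1, hsi, Set.mem_insert_iff, cset]
          constructor
          · intro ⟨h1, _⟩; omega
          · intro hc
            rcases hc with hc | ⟨hc, _⟩ <;> omega
        · rw [Set.mem_insert_iff]
          rw [hmem k hk hk1]
          simp only [iff_or_self]
          intro hc; exact absurd hc hk
    rw [himg, hT, Set.ncard_insert_of_notMem (by simp [cset]) (cset_finite hp hn1 _),
      if_pos hlt]
    push_cast [cc]; ring
  · have hT : {k | i < genPerm n cl k ∧ w k < w (genPerm n cl i)} = cset w (i+1) := by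
      ext k
      by_cases hk : k = i
      · subst hk
        simp only [Set.mem_setOf_eq, hsi, cset]
        constructor
        · intro ⟨_, h2⟩; exact absurd h2 hlt
        · intro ⟨h1, _⟩; omega
      · by_cases hk1 : k = i + 1
        · subst hk1
          simp only [Set.mem_setOf_eq, hsi1, hsi, cset]
          constructor
          · intro ⟨h1, _⟩; omega
          · intro ⟨h1, _⟩; omega
        · exact hmem k hk hk1
    rw [himg, hT, if_neg hlt, add_zero]; rfl
lemma bb_mulgen_a (hn : 3 ≤ n) (hp : Per n w) (h : i ≡ (cl:ℤ) [ZMOD (n:ℤ)]) :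
    bb (w * genPerm n cl) i = bb w (i+1) - (if w (i+1) < w i then 1 else 0) := by
  have hn2 : 2 ≤ n := by omega
  have hn1 : 1 ≤ n := by omega
  have hsi : genPerm n cl i = i + 1 := genPerm_apply_of_modEq hn2 h
  have hm1 : genPerm n cl (i-1) = i - 1 := by
    apply genPerm_apply_of_ne hn2
    · intro hc
      have := modEq_close (n := n) (hc.trans h.symm) (by rw [abs_lt]; omega)
      omega
    · intro hc
      have := modEq_close (n := n) (hc.trans (h.add_right 1).symm)
        (by rw [abs_lt]; push_cast; omega)
      omega
  have hmem : ∀ k, k ≠ i → k ≠ i - 1 →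
      (k ∈ {k | genPerm n cl k < i ∧ w (genPerm n cl i) < w k} ↔ k ∈ bset w (i+1)) := by
    intro k hk hk1
    by_cases hki : k = i - 1
    · exact absurd hki hk1
    · simp only [Set.mem_setOf_eq, bset, hsi, genPerm_lt_iff hn2 cl hk hk1]
      constructor
      · intro ⟨h1, h2⟩; exact ⟨by omega, h2⟩
      · intro ⟨h1, h2⟩; exact ⟨by omega, h2⟩
  have himg : bb (w * genPerm n cl) i =
      (({k | genPerm n cl k < i ∧ w (genPerm n cl i) < w k}).ncard : ℤ) := by
    unfold bb
    rw [mulgen_bset hn2, Set.ncard_image_of_injective _ (genPerm n cl).injective]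
  by_cases hlt : w (i+1) < w i
  · have hT : {k | genPerm n cl k < i ∧ w (genPerm n cl i) < w k} =
        bset w (i+1) \ {i} := by
      ext k
      by_cases hk : k = i
      · subst hk
        simp only [Set.mem_setOf_eq, hsi, Set.mem_diff, Set.mem_singleton_iff]
        constructor
        · intro ⟨h1, _⟩; omega
        · intro ⟨_, h2⟩; exact absurd trivial h2
      · by_cases hk1 : k = i - 1
        · subst hk1
          simp only [Set.mem_setOf_eq, hm1, hsi, Set.mem_diff, Set.mem_singleton_iff, bset]
          constructor
          · intro ⟨h1, h2⟩; exact ⟨⟨by omega, h2⟩, by omega⟩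
          · intro ⟨⟨h1, h2⟩, _⟩; exact ⟨by omega, h2⟩
        · rw [Set.mem_diff, hmem k hk hk1, Set.mem_singleton_iff]
          constructor
          · intro hx; exact ⟨hx, hk⟩
          · intro hx; exact hx.1
    have hi : i ∈ bset w (i+1) := ⟨by omega, hlt⟩
    have hfin := bset_finite hp hn1 (w := w) (i+1)
    have h1le : 1 ≤ (bset w (i+1)).ncard := (Set.ncard_pos hfin).mpr ⟨i, hi⟩
    rw [himg, hT, Set.ncard_diff_singleton_of_mem hi, if_pos hlt]
    unfold bb
    rw [Nat.cast_sub h1le]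
    norm_num
  · have hT : {k | genPerm n cl k < i ∧ w (genPerm n cl i) < w k} = bset w (i+1) := by
      ext k
      by_cases hk : k = i
      · subst hk
        simp only [Set.mem_setOf_eq, hsi, bset]
        constructor
        · intro ⟨h1, _⟩; omega
        · intro ⟨_, h2⟩; exact absurd h2 hlt
      · by_cases hk1 : k = i - 1
        · subst hk1
          simp only [Set.mem_setOf_eq, hm1, hsi, bset]
          constructor
          · intro ⟨h1, h2⟩; exact ⟨by omega, h2⟩
          · intro ⟨h1, h2⟩; exact ⟨by omega, h2⟩
        · exact hmem k hk hk1
    rw [himg, hT, if_neg hlt, sub_zero]; rfl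

lemma cc_mulgen_b (hn : 3 ≤ n) (hp : Per n w) (h : i ≡ (cl:ℤ)+1 [ZMOD (n:ℤ)]) :
    cc (w * genPerm n cl) i = cc w (i-1) - (if w i < w (i-1) then 1 else 0) := by
  have hn2 : 2 ≤ n := by omega
  have hn1 : 1 ≤ n := by omega
  have hsi : genPerm n cl i = i - 1 := genPerm_apply_of_modEq_succ hn2 h
  have hmod1 : i - 1 ≡ (cl:ℤ) [ZMOD (n:ℤ)] := by
    have := h.sub_right 1; simpa using this
  have hp1 : genPerm n cl (i+1) = i + 1 := by
    apply genPerm_apply_of_ne hn2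
    · intro hc
      have := modEq_close (n := n) (hc.trans hmod1.symm) (by rw [abs_lt]; push_cast; omega)
      omega
    · intro hc
      have := modEq_close (n := n) (hc.trans h.symm) (by rw [abs_lt]; omega)
      omega
  have hm1 : genPerm n cl (i-1) = i := by
    rw [genPerm_apply_of_modEq hn2 hmod1]; ring
  have hmem : ∀ k, k ≠ i → k ≠ i + 1 →
      (k ∈ {k | i < genPerm n cl k ∧ w k < w (genPerm n cl i)} ↔ k ∈ cset w (i-1)) := by
    intro k hk hk1
    by_cases hki : k = i - 1
    · subst hki
      simp only [Set.mem_setOf_eq, hm1, hsi, cset]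
      constructor
      · intro ⟨h1, _⟩; omega
      · intro ⟨h1, _⟩; omega
    · simp only [Set.mem_setOf_eq, cset, hsi, lt_genPerm_iff hn2 cl hk hk1]
      constructor
      · intro ⟨h1, h2⟩; exact ⟨by omega, h2⟩
      · intro ⟨h1, h2⟩; exact ⟨by omega, h2⟩
  have himg : cc (w * genPerm n cl) i =
      (({k | i < genPerm n cl k ∧ w k < w (genPerm n cl i)}).ncard : ℤ) := by
    unfold cc
    rw [mulgen_cset hn2, Set.ncard_image_of_injective _ (genPerm n cl).injective]
  by_cases hlt : w i < w (i-1)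
  · have hT : {k | i < genPerm n cl k ∧ w k < w (genPerm n cl i)} =
        cset w (i-1) \ {i} := by
      ext k
      by_cases hk : k = i
      · subst hk
        simp only [Set.mem_setOf_eq, hsi, Set.mem_diff, Set.mem_singleton_iff]
        constructor
        · intro ⟨h1, _⟩; omega
        · intro ⟨_, h2⟩; exact absurd trivial h2
      · by_cases hk1 : k = i + 1
        · subst hk1
          simp only [Set.mem_setOf_eq, hp1, hsi, Set.mem_diff, Set.mem_singleton_iff, cset]
          constructor
          · intro ⟨h1, h2⟩; exact ⟨⟨by omega, h2⟩, by omega⟩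
          · intro ⟨⟨h1, h2⟩, _⟩; exact ⟨by omega, h2⟩
        · rw [Set.mem_diff, hmem k hk hk1, Set.mem_singleton_iff]
          constructor
          · intro hx; exact ⟨hx, hk⟩
          · intro hx; exact hx.1
    have hi : i ∈ cset w (i-1) := ⟨by omega, hlt⟩
    have hfin := cset_finite hp hn1 (w := w) (i-1)
    have h1le : 1 ≤ (cset w (i-1)).ncard := (Set.ncard_pos hfin).mpr ⟨i, hi⟩
    rw [himg, hT, Set.ncard_diff_singleton_of_mem hi, if_pos hlt]
    unfold cc
    rw [Nat.cast_sub h1le]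
    norm_num
  · have hT : {k | i < genPerm n cl k ∧ w k < w (genPerm n cl i)} = cset w (i-1) := by
      ext k
      by_cases hk : k = i
      · subst hk
        simp only [Set.mem_setOf_eq, hsi, cset]
        constructor
        · intro ⟨h1, _⟩; omega
        · intro ⟨_, h2⟩; exact absurd h2 hlt
      · by_cases hk1 : k = i + 1
        · subst hk1
          simp only [Set.mem_setOf_eq, hp1, hsi, cset]
          constructor
          · intro ⟨h1, h2⟩; exact ⟨by omega, h2⟩
          · intro ⟨h1, h2⟩; exact ⟨by omega, h2⟩
        · exact hmem k hk hk1
    rw [himg, hT, if_neg hlt, sub_zero]; rfl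

lemma bb_mulgen_b (hn : 3 ≤ n) (hp : Per n w) (h : i ≡ (cl:ℤ)+1 [ZMOD (n:ℤ)]) :
    bb (w * genPerm n cl) i = bb w (i-1) + (if w (i-1) < w i then 1 else 0) := by
  have hn2 : 2 ≤ n := by omega
  have hn1 : 1 ≤ n := by omega
  have hsi : genPerm n cl i = i - 1 := genPerm_apply_of_modEq_succ hn2 h
  have hmod1 : i - 1 ≡ (cl:ℤ) [ZMOD (n:ℤ)] := by
    have := h.sub_right 1; simpa using this
  have hm1 : genPerm n cl (i-1) = i := by
    rw [genPerm_apply_of_modEq hn2 hmod1]; ring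
  have hmem : ∀ k, k ≠ i → k ≠ i - 1 →
      (k ∈ {k | genPerm n cl k < i ∧ w (genPerm n cl i) < w k} ↔ k ∈ bset w (i-1)) := by
    intro k hk hk1
    simp only [Set.mem_setOf_eq, bset, hsi, genPerm_lt_iff hn2 cl hk hk1]
    constructor
    · intro ⟨h1, h2⟩; exact ⟨by omega, h2⟩
    · intro ⟨h1, h2⟩; exact ⟨by omega, h2⟩
  have himg : bb (w * genPerm n cl) i =
      (({k | genPerm n cl k < i ∧ w (genPerm n cl i) < w k}).ncard : ℤ) := by
    unfold bb
    rw [mulgen_bset hn2, Set.ncard_image_of_injective _ (genPerm n cl).injective]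
  by_cases hlt : w (i-1) < w i
  · have hT : {k | genPerm n cl k < i ∧ w (genPerm n cl i) < w k} =
        insert i (bset w (i-1)) := by
      ext k
      by_cases hk : k = i
      · subst hk
        constructor
        · intro _; exact Set.mem_insert _ _
        · intro _
          refine ⟨?_, ?_⟩
          · rw [hsi]; omega
          · rw [hsi]; exact hlt
      · by_cases hk1 : k = i - 1
        · subst hk1
          simp only [Set.mem_setOf_eq, hm1, hsi, Set.mem_insert_iff, bset]
          constructor
          · intro ⟨h1, _⟩; omega
          · intro hc
            rcases hc with hc | ⟨hc, _⟩ <;> omega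
        · rw [Set.mem_insert_iff, hmem k hk hk1]
          simp only [iff_or_self]
          intro hc; exact absurd hc hk
    rw [himg, hT, Set.ncard_insert_of_notMem (by simp [bset]) (bset_finite hp hn1 _),
      if_pos hlt]
    push_cast [bb]; ring
  · have hT : {k | genPerm n cl k < i ∧ w (genPerm n cl i) < w k} = bset w (i-1) := by
      ext k
      by_cases hk : k = i
      · subst hk
        simp only [Set.mem_setOf_eq, hsi, bset]
        constructor
        · intro ⟨_, h2⟩; exact absurd h2 hlt
        · intro ⟨h1, _⟩; omega
      · by_cases hk1 : k = i - 1
        · subst hk1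
          simp only [Set.mem_setOf_eq, hm1, hsi, bset]
          constructor
          · intro ⟨h1, _⟩; omega
          · intro ⟨h1, _⟩; omega
        · exact hmem k hk hk1
    rw [himg, hT, if_neg hlt, add_zero]; rfl

lemma cc_mulgen_c (hn : 3 ≤ n) (hp : Per n w) (h1 : ¬ i ≡ (cl:ℤ) [ZMOD (n:ℤ)])
    (h2 : ¬ i ≡ (cl:ℤ)+1 [ZMOD (n:ℤ)]) :
    cc (w * genPerm n cl) i = cc w i := by
  have hn2 : 2 ≤ n := by omega
  have hsi : genPerm n cl i = i := genPerm_apply_of_ne hn2 h1 h2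
  have himg : cc (w * genPerm n cl) i =
      (({k | i < genPerm n cl k ∧ w k < w (genPerm n cl i)}).ncard : ℤ) := by
    unfold cc
    rw [mulgen_cset hn2, Set.ncard_image_of_injective _ (genPerm n cl).injective]
  have hT : {k | i < genPerm n cl k ∧ w k < w (genPerm n cl i)} = cset w i := by
    ext k
    by_cases hk : k = i
    · subst hk
      simp only [Set.mem_setOf_eq, hsi, cset]
    · by_cases hk1 : k = i + 1
      · subst hk1
        have hps : i < genPerm n cl (i+1) := by
          by_cases hc : (i+1 : ℤ) ≡ (cl:ℤ) [ZMOD (n:ℤ)]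
          · rw [genPerm_apply_of_modEq hn2 hc]; omega
          · by_cases hc2 : (i+1 : ℤ) ≡ (cl:ℤ)+1 [ZMOD (n:ℤ)]
            · exact absurd (by have := hc2.sub_right 1; simpa using this) h1
            · rw [genPerm_apply_of_ne hn2 hc hc2]; omega
        simp only [Set.mem_setOf_eq, hsi, cset]
        constructor
        · intro ⟨_, hb⟩; exact ⟨by omega, hb⟩
        · intro ⟨_, hb⟩; exact ⟨hps, hb⟩
      · simp only [Set.mem_setOf_eq, cset, hsi, lt_genPerm_iff hn2 cl hk hk1]
  rw [himg, hT]; rfl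

lemma bb_mulgen_c (hn : 3 ≤ n) (hp : Per n w) (h1 : ¬ i ≡ (cl:ℤ) [ZMOD (n:ℤ)])
    (h2 : ¬ i ≡ (cl:ℤ)+1 [ZMOD (n:ℤ)]) :
    bb (w * genPerm n cl) i = bb w i := by
  have hn2 : 2 ≤ n := by omega
  have hsi : genPerm n cl i = i := genPerm_apply_of_ne hn2 h1 h2
  have himg : bb (w * genPerm n cl) i =
      (({k | genPerm n cl k < i ∧ w (genPerm n cl i) < w k}).ncard : ℤ) := by
    unfold bb
    rw [mulgen_bset hn2, Set.ncard_image_of_injective _ (genPerm n cl).injective]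
  have hT : {k | genPerm n cl k < i ∧ w (genPerm n cl i) < w k} = bset w i := by
    ext k
    by_cases hk : k = i
    · subst hk
      simp only [Set.mem_setOf_eq, hsi, bset]
    · by_cases hk1 : k = i - 1
      · subst hk1
        have hps : genPerm n cl (i-1) < i := by
          by_cases hc : (i-1 : ℤ) ≡ (cl:ℤ) [ZMOD (n:ℤ)]
          · exact absurd (by have := hc.add_right 1; simpa using this) h2
          · by_cases hc2 : (i-1 : ℤ) ≡ (cl:ℤ)+1 [ZMOD (n:ℤ)]
            · rw [genPerm_apply_of_modEq_succ hn2 hc2]; omega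
            · rw [genPerm_apply_of_ne hn2 hc hc2]; omega
        simp only [Set.mem_setOf_eq, hsi, bset]
        constructor
        · intro ⟨_, hb⟩; exact ⟨by omega, hb⟩
        · intro ⟨_, hb⟩; exact ⟨hps, hb⟩
      · simp only [Set.mem_setOf_eq, bset, hsi, genPerm_lt_iff hn2 cl hk hk1]
  rw [himg, hT]; rfl


/-- delta for cc under right multiplication -/
noncomputable def dC (n cl : ℕ) (w : Equiv.Perm ℤ) (i : ℤ) : ℤ :=
  if i ≡ (cl:ℤ) [ZMOD (n:ℤ)] then (if w i < w (i+1) then 1 else 0)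
  else if i ≡ (cl:ℤ)+1 [ZMOD (n:ℤ)] then -(if w i < w (i-1) then 1 else 0) else 0

lemma cc_mulgen (hn : 3 ≤ n) (hp : Per n w) (cl : ℕ) (i : ℤ) :
    cc (w * genPerm n cl) i = cc w (genPerm n cl i) + dC n cl w i := by
  have hn2 : 2 ≤ n := by omega
  unfold dC
  by_cases h : i ≡ (cl:ℤ) [ZMOD (n:ℤ)]
  · rw [if_pos h, genPerm_apply_of_modEq hn2 h, cc_mulgen_a hn hp h]
  · rw [if_neg h]
    by_cases h2 : i ≡ (cl:ℤ)+1 [ZMOD (n:ℤ)]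
    · rw [if_pos h2, genPerm_apply_of_modEq_succ hn2 h2, cc_mulgen_b hn hp h2]
      ring
    · rw [if_neg h2, genPerm_apply_of_ne hn2 h h2, cc_mulgen_c hn hp h h2, add_zero]

noncomputable def dB (n cl : ℕ) (w : Equiv.Perm ℤ) (i : ℤ) : ℤ :=
  if i ≡ (cl:ℤ) [ZMOD (n:ℤ)] then -(if w (i+1) < w i then 1 else 0)
  else if i ≡ (cl:ℤ)+1 [ZMOD (n:ℤ)] then (if w (i-1) < w i then 1 else 0) else 0

lemma bb_mulgen (hn : 3 ≤ n) (hp : Per n w) (cl : ℕ) (i : ℤ) :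
    bb (w * genPerm n cl) i = bb w (genPerm n cl i) + dB n cl w i := by
  have hn2 : 2 ≤ n := by omega
  unfold dB
  by_cases h : i ≡ (cl:ℤ) [ZMOD (n:ℤ)]
  · rw [if_pos h, genPerm_apply_of_modEq hn2 h, bb_mulgen_a hn hp h]
    ring
  · rw [if_neg h]
    by_cases h2 : i ≡ (cl:ℤ)+1 [ZMOD (n:ℤ)]
    · rw [if_pos h2, genPerm_apply_of_modEq_succ hn2 h2, bb_mulgen_b hn hp h2]
    · rw [if_neg h2, genPerm_apply_of_ne hn2 h h2, bb_mulgen_c hn hp h h2, add_zero]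

lemma genPerm_per (hn : 2 ≤ n) (cl : ℕ) : Per n (genPerm n cl) := by
  intro j
  have hmod : j + (n:ℤ) ≡ j [ZMOD (n:ℤ)] := by
    show (j + (n:ℤ)) % (n:ℤ) = j % (n:ℤ)
    rw [show j + (n:ℤ) = j + 1 * (n:ℤ) by ring, Int.add_mul_emod_self_right]
  by_cases h : j ≡ (cl:ℤ) [ZMOD (n:ℤ)]
  · rw [genPerm_apply_of_modEq hn h, genPerm_apply_of_modEq hn (hmod.trans h)]
    ring
  · by_cases h2 : j ≡ (cl:ℤ)+1 [ZMOD (n:ℤ)]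
    · rw [genPerm_apply_of_modEq_succ hn h2, genPerm_apply_of_modEq_succ hn (hmod.trans h2)]
      ring
    · rw [genPerm_apply_of_ne hn h h2,
        genPerm_apply_of_ne hn (fun hc => h (hmod.symm.trans hc)) (fun hc => h2 (hmod.symm.trans hc))]

lemma cc_per (hp : Per n w) (j : ℤ) : cc w (j + (n:ℤ)) = cc w j := by
  have := cc_shift hp j 1
  rw [one_mul] at this
  exact this

lemma bb_per (hp : Per n w) (j : ℤ) : bb w (j + (n:ℤ)) = bb w j := by
  have := bb_shift hp j 1
  rw [one_mul] at this
  exact this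

/-- transfer of the descent indicator along a congruence -/
lemma cmp_succ_transfer (hp : Per n w) {a b : ℤ} (h : a ≡ b [ZMOD (n:ℤ)]) :
    (w a < w (a+1)) ↔ (w b < w (b+1)) := by
  obtain ⟨t, ht⟩ := modEq_iff_exists h
  subst ht
  rw [show a + t*(n:ℤ) + 1 = (a+1) + t*(n:ℤ) by ring, hp.int t a, hp.int t (a+1)]
  omega

noncomputable def invL (n : ℕ) (w : Equiv.Perm ℤ) : ℤ :=
  ∑ i ∈ Finset.Icc (1:ℤ) (n:ℤ), cc w i

noncomputable def invB (n : ℕ) (w : Equiv.Perm ℤ) : ℤ :=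
  ∑ i ∈ Finset.Icc (1:ℤ) (n:ℤ), bb w i

lemma invL_nonneg (w : Equiv.Perm ℤ) : 0 ≤ invL n w :=
  Finset.sum_nonneg (fun i _ => cc_nonneg w i)

lemma invL_mulgen (hn : 3 ≤ n) (hp : Per n w) (cl : ℕ) :
    invL n (w * genPerm n cl) = invL n w
      + (if w (repW n cl) < w (repW n cl + 1) then 1 else 0)
      - (if w (repW n cl + 1) < w (repW n cl) then 1 else 0) := by
  have hn2 : 2 ≤ n := by omega
  have hn1 : 1 ≤ n := by omega
  have h1 : invL n (w * genPerm n cl) =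
      (∑ i ∈ Finset.Icc (1:ℤ) (n:ℤ), cc w (genPerm n cl i))
      + ∑ i ∈ Finset.Icc (1:ℤ) (n:ℤ), dC n cl w i := by
    unfold invL
    rw [← Finset.sum_add_distrib]
    exact Finset.sum_congr rfl (fun i _ => cc_mulgen hn hp cl i)
  have h2 : (∑ i ∈ Finset.Icc (1:ℤ) (n:ℤ), cc w (genPerm n cl i)) = invL n w :=
    sum_comp_per hn1 (genPerm n cl) (genPerm_per hn2 cl) (cc_per hp)
  have h3 : (∑ i ∈ Finset.Icc (1:ℤ) (n:ℤ), dC n cl w i) =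
      dC n cl w (repW n cl) + dC n cl w (repW n ((cl:ℤ)+1)) := by
    apply sum_eq_pair hn2
    intro i hi1 hi2
    unfold dC
    rw [if_neg hi1, if_neg hi2]
  set r1 := repW n (cl:ℤ) with hr1
  set r2 := repW n ((cl:ℤ)+1) with hr2
  have hm1 : r1 ≡ (cl:ℤ) [ZMOD (n:ℤ)] := repW_modEq hn1 _
  have hm2 : r2 ≡ (cl:ℤ)+1 [ZMOD (n:ℤ)] := repW_modEq hn1 _
  have hd1 : dC n cl w r1 = (if w r1 < w (r1+1) then 1 else 0) := by
    unfold dC; rw [if_pos hm1]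
  have hd2 : dC n cl w r2 = -(if w r2 < w (r2-1) then 1 else 0) := by
    unfold dC
    rw [if_neg, if_pos hm2]
    intro hc
    exact not_self_modEq_succ hn2 (cl:ℤ) ((hc.symm.trans hm2))
  have htrans : (w r2 < w (r2-1)) ↔ (w (r1+1) < w r1) := by
    have hmm : r2 - 1 ≡ r1 [ZMOD (n:ℤ)] := by
      have := hm2.sub_right 1
      simp only [add_sub_cancel_right] at this
      exact this.trans hm1.symm
    obtain ⟨t, ht⟩ := modEq_iff_exists hmm
    have hw1 : w r1 = w (r2-1) + t * n := by
      have h5 := hp.int t (r2-1)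
      rw [← ht] at h5
      exact h5
    have hw2 : w (r1+1) = w r2 + t * n := by
      have h5 := hp.int t r2
      have h6 : r1 + 1 = r2 + t * (n:ℤ) := by omega
      rw [← h6] at h5
      exact h5
    omega
  rw [h1, h2, h3, hd1, hd2]
  rw [if_congr htrans rfl rfl]
  ring


/-- the balance identity `c_i - b_i = w(i) - i` -/
def GoodCB (w : Equiv.Perm ℤ) : Prop := ∀ i : ℤ, cc w i - bb w i = w i - i

lemma cset_one (i : ℤ) : cset (1 : Equiv.Perm ℤ) i = ∅ := by
  ext j
  simp only [cset, Set.mem_setOf_eq, Set.mem_empty_iff_false, iff_false]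
  intro ⟨h1, h2⟩
  simp only [Equiv.Perm.one_apply] at h2
  omega

lemma bset_one (i : ℤ) : bset (1 : Equiv.Perm ℤ) i = ∅ := by
  ext j
  simp only [bset, Set.mem_setOf_eq, Set.mem_empty_iff_false, iff_false]
  intro ⟨h1, h2⟩
  simp only [Equiv.Perm.one_apply] at h2
  omega

lemma goodCB_one : GoodCB (1 : Equiv.Perm ℤ) := by
  intro i
  unfold cc bb
  rw [cset_one, bset_one]
  simp

lemma goodCB_mulgen (hn : 3 ≤ n) (hp : Per n w) (hg : GoodCB w) (cl : ℕ) :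
    GoodCB (w * genPerm n cl) := by
  intro i
  have hn2 : 2 ≤ n := by omega
  have hmul : (w * genPerm n cl) i = w (genPerm n cl i) := rfl
  rw [cc_mulgen hn hp cl i, bb_mulgen hn hp cl i, hmul]
  unfold dC dB
  by_cases h : i ≡ (cl:ℤ) [ZMOD (n:ℤ)]
  · rw [if_pos h, if_pos h, genPerm_apply_of_modEq hn2 h]
    have hne : w i ≠ w (i+1) := by
      intro hc
      have := w.injective hc
      omega
    have := hg (i+1)
    rcases lt_trichotomy (w i) (w (i+1)) with hlt | hlt | hlt
    · rw [if_pos hlt, if_neg (by omega)]; omega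
    · exact absurd hlt hne
    · rw [if_neg (by omega), if_pos hlt]; omega
  · rw [if_neg h, if_neg h]
    by_cases h2 : i ≡ (cl:ℤ)+1 [ZMOD (n:ℤ)]
    · rw [if_pos h2, if_pos h2, genPerm_apply_of_modEq_succ hn2 h2]
      have hne : w i ≠ w (i-1) := by
        intro hc
        have := w.injective hc
        omega
      have := hg (i-1)
      rcases lt_trichotomy (w i) (w (i-1)) with hlt | hlt | hlt
      · rw [if_pos hlt, if_neg (by omega)]; omega
      · exact absurd hlt hne
      · rw [if_neg (by omega), if_pos hlt]; omega
    · rw [if_neg h2, if_neg h2, genPerm_apply_of_ne hn2 h h2]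
      have := hg i
      omega

/-- the sum-zero condition -/
def Zs (n : ℕ) (w : Equiv.Perm ℤ) : Prop :=
  ∑ i ∈ Finset.Icc (1:ℤ) (n:ℤ), (w i - i) = 0

lemma zs_mulgen (hn : 3 ≤ n) (hp : Per n w) (hz : Zs n w) (cl : ℕ) :
    Zs n (w * genPerm n cl) := by
  have hn2 : 2 ≤ n := by omega
  have hn1 : 1 ≤ n := by omega
  unfold Zs
  have hsplit : ∀ i : ℤ, (w * genPerm n cl) i - i =
      (w (genPerm n cl i) - genPerm n cl i) + (genPerm n cl i - i) := by
    intro i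
    have : (w * genPerm n cl) i = w (genPerm n cl i) := rfl
    rw [this]; ring
  rw [Finset.sum_congr rfl (fun i _ => hsplit i), Finset.sum_add_distrib]
  have hf : ∀ j : ℤ, (fun j => w j - j) (j + (n:ℤ)) = (fun j => w j - j) j := by
    intro j
    simp only
    rw [hp j]; ring
  have hA := sum_comp_per hn1 (genPerm n cl) (genPerm_per hn2 cl) (f := fun j => w j - j) hf
  rw [hA, hz]
  have hδ : (∑ i ∈ Finset.Icc (1:ℤ) (n:ℤ), (genPerm n cl i - i)) =
      (genPerm n cl (repW n cl) - repW n cl) +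
      (genPerm n cl (repW n ((cl:ℤ)+1)) - repW n ((cl:ℤ)+1)) := by
    apply sum_eq_pair hn2
    intro i h1 h2
    rw [genPerm_apply_of_ne hn2 h1 h2]
    ring
  rw [hδ, genPerm_apply_of_modEq hn2 (repW_modEq hn1 _),
    genPerm_apply_of_modEq_succ hn2 (repW_modEq hn1 _)]
  ring

/-- if there is no descent, `w` is the identity -/
lemma eq_one_of_no_descent (hn : 1 ≤ n) (hp : Per n w) (hz : Zs n w)
    (h : ∀ a : ℤ, ¬ w (a+1) < w a) : w = 1 := by
  have hmono : ∀ a : ℤ, w a < w (a+1) := by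
    intro a
    have h1 := h a
    have h2 : w a ≠ w (a+1) := fun hc => by have := w.injective hc; omega
    omega
  have hstep : ∀ (a : ℤ) (k : ℕ), w a + (k:ℤ) ≤ w (a + (k:ℤ)) := by
    intro a k
    induction k with
    | zero => simp
    | succ m ih =>
      have h5 := hmono (a + (m:ℤ))
      have h6 : a + ((m:ℤ)+1) = (a + (m:ℤ)) + 1 := by ring
      push_cast
      rw [h6]
      omega
  have hsucc : ∀ a : ℤ, w (a+1) = w a + 1 := by
    intro a
    have h1 := hstep (a+1) (n-1)
    have h2 : ((n - 1 : ℕ) : ℤ) = (n:ℤ) - 1 := by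
      rw [Nat.cast_sub hn]; norm_num
    rw [h2] at h1
    have h3 : a + 1 + ((n:ℤ) - 1) = a + (n:ℤ) := by ring
    rw [h3, hp a] at h1
    have h4 := hmono a
    omega
  have hall : ∀ a : ℤ, w a = a + w 0 := by
    intro a
    induction a using Int.induction_on with
    | zero => simp
    | succ k ih => rw [hsucc k, ih]; ring
    | pred k ih =>
      have := hsucc (-(k:ℤ)-1)
      rw [show -(k:ℤ)-1+1 = -(k:ℤ) by ring] at this
      omega
  have hz0 : w 0 = 0 := by
    unfold Zs at hz
    have hconst : ∀ i ∈ Finset.Icc (1:ℤ) (n:ℤ), w i - i = w 0 := by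
      intro i _
      rw [hall i]; ring
    rw [Finset.sum_congr rfl hconst, Finset.sum_const] at hz
    have hcard : (Finset.Icc (1:ℤ) (n:ℤ)).card = n := by
      rw [Int.card_Icc]
      simp
    rw [hcard, nsmul_eq_mul] at hz
    have hn0 : ((n:ℤ)) ≠ 0 := by exact_mod_cast (by omega : n ≠ 0)
    exact (mul_eq_zero.mp hz).resolve_left hn0
  apply Equiv.ext
  intro j
  rw [hall j, hz0, Equiv.Perm.one_apply]
  ring
lemma invL_one : invL n (1 : Equiv.Perm ℤ) = 0 := by
  unfold invL cc
  have hzero : ∀ i ∈ Finset.Icc (1:ℤ) (n:ℤ), ((cset (1:Equiv.Perm ℤ) i).ncard : ℤ) = 0 := by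
    intro i _
    rw [cset_one i]
    simp
  rw [Finset.sum_congr rfl hzero]
  simp

lemma exists_word_aux (hn : 3 ≤ n) : ∀ m : ℕ, ∀ w : Equiv.Perm ℤ, Per n w → Zs n w →
    (invL n w).toNat = m → ∃ l : List ℕ, IsWordA n w l ∧ (l.length : ℤ) = invL n w := by
  intro m
  induction m using Nat.strong_induction_on with
  | _ m ih =>
    intro w hp hz hm
    have hn1 : 1 ≤ n := by omega
    have hn2 : 2 ≤ n := by omega
    by_cases hd : ∃ a : ℤ, w (a+1) < w a
    · obtain ⟨a, ha⟩ := hd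
      set cl : ℕ := (a % (n:ℤ)).toNat with hcl
      have hn0 : (0:ℤ) < n := by exact_mod_cast hn1
      have hcast : (cl:ℤ) = a % (n:ℤ) := by
        rw [hcl, Int.toNat_of_nonneg (Int.emod_nonneg a (by omega))]
      have hclmod : a ≡ (cl:ℤ) [ZMOD (n:ℤ)] := by
        show a % (n:ℤ) = (cl:ℤ) % (n:ℤ)
        rw [hcast, Int.emod_emod_of_dvd a dvd_rfl]
      have hcln : cl < n := by
        have := Int.emod_lt_of_pos a hn0
        omega
      set s := genPerm n cl with hs
      set w' := w * s with hw'
      have hps : Per n s := genPerm_per hn2 cl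
      have hp' : Per n w' := hp.mul hps
      have hz' : Zs n w' := zs_mulgen hn hp hz cl
      have hr1 : repW n (cl:ℤ) ≡ (cl:ℤ) [ZMOD (n:ℤ)] := repW_modEq hn1 _
      obtain ⟨t, ht⟩ := modEq_iff_exists (hclmod.trans hr1.symm)
      have hx1 : w (repW n (cl:ℤ)) = w a + t * n := by
        have h5 := hp.int t a
        rw [← ht] at h5
        exact h5
      have hx2 : w (repW n (cl:ℤ) + 1) = w (a+1) + t * n := by
        have h5 := hp.int t (a+1)
        have h6 : repW n (cl:ℤ) + 1 = (a+1) + t * (n:ℤ) := by omega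
        rw [← h6] at h5
        exact h5
      have hinv : invL n w' = invL n w - 1 := by
        rw [hw', hs, invL_mulgen hn hp cl, if_neg (by omega), if_pos (by omega)]
        ring
      have hpos : 0 ≤ invL n w' := invL_nonneg w'
      have hlt' : (invL n w').toNat < m := by omega
      obtain ⟨l', hl', hlen⟩ := ih _ hlt' w' hp' hz' rfl
      refine ⟨l' ++ [cl], ?_, ?_⟩
      · obtain ⟨hltl, σs, hfor, hprod⟩ := hl'
        refine ⟨?_, σs ++ [s], List.rel_append hfor
          (List.Forall₂.cons (hs ▸ isGenA_genPerm hn2 cl) List.Forall₂.nil), ?_⟩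
        · intro x hx
          rcases List.mem_append.mp hx with h | h
          · exact hltl x h
          · simp only [List.mem_singleton] at h
            omega
        · rw [List.prod_append, List.prod_singleton, hprod, hw', mul_assoc, hs,
            genPerm_mul_self hn2, mul_one]
      · rw [List.length_append, List.length_singleton]
        push_cast
        omega
    · push_neg at hd
      have h1 : w = 1 := eq_one_of_no_descent hn1 hp hz (fun a => by have := hd a; omega)
      subst h1
      exact ⟨[], ⟨by simp, [], List.Forall₂.nil, rfl⟩, by simp [invL_one]⟩

lemma prod_props (hn : 3 ≤ n) : ∀ σs : List (Equiv.Perm ℤ),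
    (∀ σ ∈ σs, ∃ i : ℕ, IsGenA n i σ) →
    Per n σs.prod ∧ GoodCB σs.prod ∧ invL n σs.prod ≤ (σs.length : ℤ) := by
  intro σs
  induction σs using List.reverseRecOn with
  | nil =>
    intro _
    refine ⟨Per.one, goodCB_one, ?_⟩
    simp [invL_one]
  | append_singleton τs σ ih =>
    intro h
    obtain ⟨hper, hgood, hlen⟩ := ih (fun x hx => h x (by simp [hx]))
    obtain ⟨i, hgen⟩ := h σ (by simp)
    have hσ : σ = genPerm n i := hgen.eq_genPerm (by omega)
    rw [List.prod_append, List.prod_singleton, hσ, List.length_append]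
    refine ⟨hper.mul (genPerm_per (by omega) i), goodCB_mulgen hn hper hgood i, ?_⟩
    rw [invL_mulgen hn hper i]
    simp only [List.length_singleton]
    push_cast
    split_ifs <;> omega

lemma word_gens {l : List ℕ} {σs : List (Equiv.Perm ℤ)}
    (hfor : List.Forall₂ (IsGenA n) l σs) : ∀ σ ∈ σs, ∃ i : ℕ, IsGenA n i σ := by
  induction hfor with
  | nil => simp
  | cons h1 h2 ih =>
    intro σ hσ
    rcases List.mem_cons.mp hσ with h | h
    · exact ⟨_, h ▸ h1⟩
    · exact ih σ h

lemma lenA_eq_invL (hn : 3 ≤ n) (hp : Per n w) (hz : Zs n w) :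
    (lenA n w : ℤ) = invL n w ∧ GoodCB w := by
  obtain ⟨l, hword, hlen⟩ := exists_word_aux hn (invL n w).toNat w hp hz rfl
  have hmem : l.length ∈ {m | ∃ l : List ℕ, IsWordA n w l ∧ l.length = m} :=
    ⟨l, hword, rfl⟩
  have hub : ∀ m ∈ {m | ∃ l : List ℕ, IsWordA n w l ∧ l.length = m}, invL n w ≤ (m:ℤ) := by
    intro m hm
    obtain ⟨l2, ⟨hlt2, σs, hfor, hprod⟩, hl2⟩ := hm
    have h1 := prod_props hn σs (word_gens hfor)
    rw [hprod] at h1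
    have h2 : σs.length = m := by rw [← hfor.length_eq, hl2]
    rw [h2] at h1
    exact h1.2.2
  constructor
  · have h1 : lenA n w ≤ l.length := Nat.sInf_le hmem
    have h2 : invL n w ≤ (lenA n w : ℤ) := hub _ (Nat.sInf_mem ⟨_, hmem⟩)
    have h3 : (lenA n w : ℤ) ≤ (l.length : ℤ) := by exact_mod_cast h1
    omega
  · obtain ⟨hlt2, σs, hfor, hprod⟩ := hword
    have h1 := prod_props hn σs (word_gens hfor)
    rw [hprod] at h1
    exact h1.2.1
theorem stmt_6 (n : ℕ) (hn : 3 ≤ n) (w : Equiv.Perm ℤ) (hw : IsAffinePerm n w) :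
    disA n w = 2 * (lenA n w : ℤ) ↔
      ¬ ∃ i j k : ℤ, i < j ∧ j < k ∧ w i > w j ∧ w j > w k := by
  have hn1 : 1 ≤ n := by omega
  have hp : Per n w := hw.1
  have hz : Zs n w := hw.2
  obtain ⟨hlen, hgood⟩ := lenA_eq_invL hn hp hz
  have hzero : invL n w - invB n w = 0 := by
    unfold invL invB
    rw [← Finset.sum_sub_distrib, Finset.sum_congr rfl (fun i _ => hgood i)]
    exact hz
  have hdis : disA n w = ∑ i ∈ Finset.Icc (1:ℤ) (n:ℤ), |cc w i - bb w i| :=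
    Finset.sum_congr rfl (fun i _ => by rw [hgood i])
  have hsum : (∑ i ∈ Finset.Icc (1:ℤ) (n:ℤ), (cc w i + bb w i - |cc w i - bb w i|))
      = 2 * invL n w - disA n w := by
    rw [hdis, Finset.sum_sub_distrib, Finset.sum_add_distrib]
    unfold invL invB at hzero
    unfold invL
    linarith
  have hiff1 : (disA n w = 2 * (lenA n w : ℤ)) ↔
      (∑ i ∈ Finset.Icc (1:ℤ) (n:ℤ), (cc w i + bb w i - |cc w i - bb w i|)) = 0 := by
    rw [hlen]
    constructor <;> intro h <;> linarith
  rw [hiff1]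
  have hnonneg : ∀ i ∈ Finset.Icc (1:ℤ) (n:ℤ),
      0 ≤ cc w i + bb w i - |cc w i - bb w i| := by
    intro i _
    have hc := cc_nonneg w i
    have hb := bb_nonneg w i
    rcases abs_cases (cc w i - bb w i) with ⟨h,_⟩|⟨h,_⟩ <;> omega
  rw [Finset.sum_eq_zero_iff_of_nonneg hnonneg]
  constructor
  · intro hall hpat
    obtain ⟨i, j, k, hij, hjk, h1, h2⟩ := hpat
    obtain ⟨hrmem, t, ht⟩ := repW_spec hn1 j
    have hcmem : (k + t*(n:ℤ)) ∈ cset w (repW n j) := by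
      refine ⟨by omega, ?_⟩
      rw [ht, hp.int t k, hp.int t j]
      omega
    have hbmem : (i + t*(n:ℤ)) ∈ bset w (repW n j) := by
      refine ⟨by omega, ?_⟩
      rw [ht, hp.int t i, hp.int t j]
      omega
    have hc1 : 1 ≤ cc w (repW n j) := by
      have h3 := (Set.ncard_pos (cset_finite hp hn1 (repW n j))).mpr ⟨_, hcmem⟩
      unfold cc
      exact_mod_cast h3
    have hb1 : 1 ≤ bb w (repW n j) := by
      have h3 := (Set.ncard_pos (bset_finite hp hn1 (repW n j))).mpr ⟨_, hbmem⟩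
      unfold bb
      exact_mod_cast h3
    have h4 := hall (repW n j) hrmem
    rcases abs_cases (cc w (repW n j) - bb w (repW n j)) with ⟨h,_⟩|⟨h,_⟩ <;> omega
  · intro hnp i _
    have hor : cc w i = 0 ∨ bb w i = 0 := by
      by_contra hc
      push_neg at hc
      obtain ⟨h1, h2⟩ := hc
      have hc1 : (cset w i).Nonempty := by
        apply Set.nonempty_of_ncard_ne_zero
        intro h0
        exact h1 (by unfold cc; rw [h0]; rfl)
      have hb1 : (bset w i).Nonempty := by
        apply Set.nonempty_of_ncard_ne_zero
        intro h0
        exact h2 (by unfold bb; rw [h0]; rfl)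
      obtain ⟨k, hk1, hk2⟩ := hc1
      obtain ⟨j, hj1, hj2⟩ := hb1
      exact hnp ⟨j, i, k, hj1, hk1, hj2, hk2⟩
    have hc := cc_nonneg w i
    have hb := bb_nonneg w i
    rcases abs_cases (cc w i - bb w i) with ⟨h,_⟩|⟨h,_⟩ <;> rcases hor with h'|h' <;> omega
end CaseLemmas

end Stmt6
end

section
/- Let n ≥ 3 and let w be an element of the affine symmetric group 𝑆̃_n. Then dis(w)/2 = ℓ(w) if and only if no reduced word for w contains three consecutive letters of the form i (i±1) i for some i ∈ {1,…,n−1}, where letter indices are read modulo n (so i+1 means 0 when i = n−1). -/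
namespace Stmt7

/-- `w` is an element of the affine symmetric group `𝑆̃_n`: a bijection of `ℤ`
with `w(i + n) = w(i) + n` for all `i` and `∑_{i=1}^n (w(i) - i) = 0`. -/
def IsAffinePerm (n : ℕ) (w : Equiv.Perm ℤ) : Prop :=
  (∀ i : ℤ, w (i + (n : ℤ)) = w i + (n : ℤ)) ∧
    ∑ i ∈ Finset.Icc (1 : ℤ) (n : ℤ), (w i - i) = 0

/-- `σ` is the Coxeter generator `sᵢ` of `𝑆̃_n`: it swaps `j` and `j + 1` for
every integer `j ≡ i (mod n)` and fixes all other integers. -/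
def IsGenA (n : ℕ) (i : ℕ) (σ : Equiv.Perm ℤ) : Prop :=
  ∀ j : ℤ, (j ≡ (i : ℤ) [ZMOD (n : ℤ)] → σ j = j + 1 ∧ σ (j + 1) = j) ∧
    ((¬ j ≡ (i : ℤ) [ZMOD (n : ℤ)] ∧ ¬ j ≡ (i : ℤ) + 1 [ZMOD (n : ℤ)]) → σ j = j)

/-- `l` is a word for `w` in the letters `{0, …, n-1}`:
`w = s_{i₁} ⋯ s_{i_ℓ}` where `l = [i₁, …, i_ℓ]`. -/
def IsWordA (n : ℕ) (w : Equiv.Perm ℤ) (l : List ℕ) : Prop :=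
  (∀ i ∈ l, i < n) ∧
    ∃ σs : List (Equiv.Perm ℤ), List.Forall₂ (IsGenA n) l σs ∧ σs.prod = w

/-- The Coxeter length of `w`: the minimal length of a word for `w`. -/
noncomputable def lenA (n : ℕ) (w : Equiv.Perm ℤ) : ℕ :=
  sInf {m | ∃ l : List ℕ, IsWordA n w l ∧ l.length = m}

/-- The disarray `dis(w) = ∑_{i=1}^n |w(i) - i|`. -/
noncomputable def disA (n : ℕ) (w : Equiv.Perm ℤ) : ℤ :=
  ∑ i ∈ Finset.Icc (1 : ℤ) (n : ℤ), |w i - i|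

/-- `l` is a reduced word for `w`. -/
def IsReducedWordA (n : ℕ) (w : Equiv.Perm ℤ) (l : List ℕ) : Prop :=
  IsWordA n w l ∧ l.length = lenA n w

/-- `l` contains three consecutive letters of the form `i (i±1) i` for some
`i ∈ {1, …, n-1}`, where letter indices are read modulo `n`
(so `i + 1` means `0` when `i = n - 1`). -/
def HasBadFactorA (n : ℕ) (l : List ℕ) : Prop :=
  ∃ i j : ℕ, 1 ≤ i ∧ i + 1 ≤ n ∧ (j = (i + 1) % n ∨ i = j + 1) ∧ [i, j, i] <:+: l

section S1
variable {n : ℕ} (hn : 3 ≤ n)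

/-- The generator as a bare function on `ℤ`. -/
def sFun (n : ℕ) (i : ℤ) : ℤ → ℤ := fun j =>
  if (n:ℤ) ∣ (j - i) then j + 1 else if (n:ℤ) ∣ (j - (i+1)) then j - 1 else j

lemma not_dvd_one (hn : 3 ≤ n) : ¬ (n:ℤ) ∣ 1 := by
  intro h
  have := Int.le_of_dvd one_pos h
  omega

lemma not_dvd_two (hn : 3 ≤ n) : ¬ (n:ℤ) ∣ 2 := by
  intro h
  have := Int.le_of_dvd two_pos h
  omega

lemma sFun_eq1 {i j : ℤ} (h : (n:ℤ) ∣ (j - i)) : sFun n i j = j + 1 := by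
  simp [sFun, h]

lemma sFun_eq2 (hn : 3 ≤ n) {i j : ℤ} (h : (n:ℤ) ∣ (j - (i+1))) : sFun n i j = j - 1 := by
  have h1 : ¬ (n:ℤ) ∣ (j - i) := by
    intro h2
    exact not_dvd_one hn (by have := dvd_sub h2 h; simpa using this)
  simp [sFun, h1, h]

lemma sFun_eq3 {i j : ℤ} (h1 : ¬(n:ℤ) ∣ (j - i)) (h2 : ¬(n:ℤ) ∣ (j - (i+1))) :
    sFun n i j = j := by
  simp [sFun, h1, h2]

lemma sFun_invol (hn : 3 ≤ n) (i : ℤ) : Function.Involutive (sFun n i) := by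
  intro j
  by_cases h1 : (n:ℤ) ∣ (j - i)
  · rw [sFun_eq1 h1, sFun_eq2 hn (by simpa using h1)]
    ring
  · by_cases h2 : (n:ℤ) ∣ (j - (i+1))
    · have e : j - 1 - i = j - (i+1) := by ring
      rw [sFun_eq2 hn h2, sFun_eq1 (by rw [e]; exact h2)]
      ring
    · rw [sFun_eq3 h1 h2, sFun_eq3 h1 h2]

/-- The Coxeter generator `s_i` as a permutation of `ℤ`. -/
def sA (hn : 3 ≤ n) (i : ℤ) : Equiv.Perm ℤ := (sFun_invol hn i).toPerm

lemma sA_apply (i j : ℤ) : sA hn i j = sFun n i j := rfl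

lemma sA_sq (i : ℤ) : sA hn i * sA hn i = 1 := by
  ext j
  simp [sA_apply, sFun_invol hn i j, Equiv.Perm.mul_apply]

lemma sA_congr {i i' : ℤ} (h : (n:ℤ) ∣ (i - i')) : sA hn i = sA hn i' := by
  ext j
  simp only [sA_apply, sFun]
  have e1 : (n:ℤ) ∣ (j - i) ↔ (n:ℤ) ∣ (j - i') := by
    constructor <;> intro h2
    · have := dvd_add h2 h; simpa [sub_add_sub_cancel] using this
    · have := dvd_sub h2 h; simpa [sub_sub_sub_cancel_right] using this
  have e2 : (n:ℤ) ∣ (j - (i+1)) ↔ (n:ℤ) ∣ (j - (i'+1)) := by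
    constructor <;> intro h2
    · have := dvd_add h2 h
      have e : j - (i + 1) + (i - i') = j - (i' + 1) := by ring
      rwa [e] at this
    · have := dvd_sub h2 h
      have e : j - (i' + 1) - (i - i') = j - (i + 1) := by ring
      rwa [e] at this
  rw [if_congr e1 rfl rfl, if_congr e2 rfl rfl]

/-- `IsGenA n i σ` holds iff `σ = sA n i`. -/
lemma isGenA_iff (i : ℕ) (σ : Equiv.Perm ℤ) :
    IsGenA n i σ ↔ σ = sA hn (i : ℤ) := by
  have hmod : ∀ j c : ℤ, (j ≡ c [ZMOD (n:ℤ)]) ↔ (n:ℤ) ∣ (j - c) := by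
    intro j c
    rw [Int.modEq_iff_dvd, ← neg_sub j c, dvd_neg]
  constructor
  · intro hσ
    ext j
    by_cases h1 : (n:ℤ) ∣ (j - i)
    · rw [sA_apply, sFun_eq1 h1]
      exact ((hσ j).1 ((hmod j i).2 h1)).1
    · by_cases h2 : (n:ℤ) ∣ (j - ((i:ℤ)+1))
      · rw [sA_apply, sFun_eq2 hn h2]
        have h3 : (j - 1) ≡ (i:ℤ) [ZMOD (n:ℤ)] := by
          rw [hmod]
          have e : j - 1 - i = j - (i + 1) := by ring
          rw [e]; exact h2
        have := ((hσ (j-1)).1 h3).2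
        simpa using this
      · rw [sA_apply, sFun_eq3 h1 h2]
        exact (hσ j).2 ⟨fun h => h1 ((hmod j i).1 h), fun h => h2 ((hmod j (i+1)).1 h)⟩
  · rintro rfl j
    constructor
    · intro h
      rw [hmod] at h
      refine ⟨sFun_eq1 h, ?_⟩
      rw [sA_apply, sFun_eq2 hn (by simpa using h)]
      ring
    · rintro ⟨h1, h2⟩
      rw [hmod] at h1 h2
      exact sFun_eq3 h1 h2

end S1

section S2
variable {n : ℕ}

lemma eq_zero_of_dvd_small (hn : 3 ≤ n) {d : ℤ} (h : (n:ℤ) ∣ d) (h2 : |d| < n) : d = 0 := by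
  rcases h with ⟨k, rfl⟩
  rcases eq_or_ne k 0 with rfl | hk
  · ring
  · exfalso
    have h1 : (1:ℤ) ≤ |k| := Int.one_le_abs (by simpa using hk)
    have : (n:ℤ) ≤ |(n:ℤ) * k| := by
      rw [abs_mul, abs_of_nonneg (by positivity : (0:ℤ) ≤ (n:ℤ))]
      nlinarith [abs_nonneg k]
    omega

end S2

section S3
variable {n : ℕ} {M : Type*} [AddCommMonoid M]

lemma Ioc_insert_bot {a b : ℤ} (h : a < b) :
    Finset.Ioc a b = insert (a+1) (Finset.Ioc (a+1) b) := by
  ext x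
  simp only [Finset.mem_Ioc, Finset.mem_insert]
  omega

lemma Ioc_insert_top {a b : ℤ} (h : a < b) :
    Finset.Ioc a b = insert b (Finset.Ioc a (b-1)) := by
  ext x
  simp only [Finset.mem_Ioc, Finset.mem_insert]
  omega

lemma sum_Ioc_shift_one (hn : 3 ≤ n) (g : ℤ → M) (hg : ∀ x : ℤ, g (x + n) = g x) (a : ℤ) :
    ∑ x ∈ Finset.Ioc a (a + n), g x = ∑ x ∈ Finset.Ioc (a+1) (a+1+n), g x := by
  have h1 : Finset.Ioc a (a+n) = insert (a+1) (Finset.Ioc (a+1) (a+n)) :=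
    Ioc_insert_bot (by omega)
  have h2 : Finset.Ioc (a+1) (a+1+n) = insert (a+1+n) (Finset.Ioc (a+1) (a+n)) := by
    have e : a+1+(n:ℤ)-1 = a+n := by ring
    rw [Ioc_insert_top (by omega), e]
  rw [h1, h2, Finset.sum_insert (by simp), Finset.sum_insert (by simp)]
  have : g (a+1+n) = g (a+1) := hg (a+1)
  rw [this, add_comm]

lemma sum_Ioc_window (hn : 3 ≤ n) (g : ℤ → M) (hg : ∀ x : ℤ, g (x + n) = g x) (a b : ℤ) :
    ∑ x ∈ Finset.Ioc a (a + n), g x = ∑ x ∈ Finset.Ioc b (b + n), g x := by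
  have key : ∀ t : ℤ, ∑ x ∈ Finset.Ioc (a+t) (a+t+n), g x = ∑ x ∈ Finset.Ioc a (a + n), g x := by
    intro t
    induction t using Int.induction_on with
    | zero => norm_num
    | succ k ih =>
        rw [show a + ((k:ℤ)+1) = (a+(k:ℤ))+1 from by ring, ← sum_Ioc_shift_one hn g hg (a+(k:ℤ)), ih]
    | pred k ih =>
        rw [sum_Ioc_shift_one hn g hg (a + (-(k:ℤ)-1)),
          show a + (-(k:ℤ)-1)+1 = a + (-(k:ℤ)) from by ring, ih]
  have := key (b - a)
  rw [← this]
  congr 2 <;> ring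

lemma Icc_one_eq_Ioc : Finset.Icc (1:ℤ) (n:ℤ) = Finset.Ioc (0:ℤ) ((0:ℤ)+n) := by
  ext x
  simp only [Finset.mem_Icc, Finset.mem_Ioc]
  omega

end S3

section S4
variable {n : ℕ}

lemma one_affine : IsAffinePerm n 1 := ⟨by simp, by simp⟩

lemma aff_shift {w : Equiv.Perm ℤ} (hw : IsAffinePerm n w) : ∀ (j t : ℤ), w (j + t * n) = w j + t * n := by
  intro j t
  induction t using Int.induction_on with
  | zero => simp
  | succ k ih =>
      have h := hw.1 (j + (k:ℤ) * n)
      rw [show j + ((k:ℤ)+1)*n = (j + (k:ℤ)*n) + n from by ring, h, ih]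
      ring
  | pred k ih =>
      have h := hw.1 (j + (-((k:ℤ)+1)) * n)
      rw [show j + (-((k:ℤ)+1))*n + n = j + (-(k:ℤ))*n from by ring, ih] at h
      have e : w (j + -((k:ℤ)+1) * n) = w j + -(k:ℤ)*n - n := by omega
      rw [show j + (-(k:ℤ)-1)*(n:ℤ) = j + -((k:ℤ)+1)*(n:ℤ) from by ring, e]; ring

lemma aff_dvd_shift {w : Equiv.Perm ℤ} (hw : IsAffinePerm n w) {j j' : ℤ}
    (h : (n:ℤ) ∣ (j' - j)) : w j' = w j + (j' - j) := by
  obtain ⟨t, ht⟩ := h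
  have e : j' = j + t * n := by rw [mul_comm]; linarith
  rw [e, aff_shift hw j t]
  have : j + t * n - j = t * n := by ring
  rw [this]

lemma aff_h_per {w : Equiv.Perm ℤ} (hw : IsAffinePerm n w) (x : ℤ) :
    w (x + n) - (x + n) = w x - x := by
  rw [hw.1 x]; ring

lemma aff_abs_per {w : Equiv.Perm ℤ} (hw : IsAffinePerm n w) (x : ℤ) :
    |w (x + n) - (x + n)| = |w x - x| := by
  rw [aff_h_per hw]


lemma disA_eq_window (hn : 3 ≤ n) {w : Equiv.Perm ℤ} (hw : IsAffinePerm n w) (a : ℤ) :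
    disA n w = ∑ x ∈ Finset.Ioc a (a + n), |w x - x| := by
  rw [disA, Icc_one_eq_Ioc,
    sum_Ioc_window hn (fun x => |w x - x|) (fun x => aff_abs_per hw x) 0 a]

lemma sum_h_window (hn : 3 ≤ n) {w : Equiv.Perm ℤ} (hw : IsAffinePerm n w) (a : ℤ) :
    ∑ x ∈ Finset.Ioc a (a + n), (w x - x) = 0 := by
  rw [sum_Ioc_window hn (fun x => w x - x) (fun x => aff_h_per hw x) a 0,
    ← Icc_one_eq_Ioc, hw.2]

lemma disA_nonneg (w : Equiv.Perm ℤ) : 0 ≤ disA n w :=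
  Finset.sum_nonneg fun i _ => abs_nonneg _

lemma disA_one : disA n (1 : Equiv.Perm ℤ) = 0 := by
  simp [disA]

lemma abs_le_disA (hn : 3 ≤ n) {w : Equiv.Perm ℤ} (hw : IsAffinePerm n w) (j : ℤ) :
    |w j - j| ≤ disA n w := by
  rw [disA_eq_window hn hw (j-1)]
  exact Finset.single_le_sum (fun x _ => abs_nonneg (w x - x))
    (by simp only [Finset.mem_Ioc]; omega)

lemma sFun_add (hn : 3 ≤ n) (i : ℤ) (x : ℤ) : sFun n i (x + n) = sFun n i x + n := by
  have d1 : x + (n:ℤ) - i = x - i + n := by ring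
  have d2 : x + (n:ℤ) - (i+1) = x - (i+1) + n := by ring
  have d3 : x + (n:ℤ) - i - n = x - i := by ring
  have d4 : x + (n:ℤ) - (i+1) - n = x - (i+1) := by ring
  have hdn : (n:ℤ) ∣ (n:ℤ) := dvd_refl _
  by_cases h1 : (n:ℤ) ∣ (x - i)
  · have h1' : (n:ℤ) ∣ (x + n - i) := by rw [d1]; exact dvd_add h1 hdn
    rw [sFun_eq1 h1, sFun_eq1 h1']
    ring
  · by_cases h2 : (n:ℤ) ∣ (x - (i+1))
    · have h2' : (n:ℤ) ∣ (x + n - (i+1)) := by rw [d2]; exact dvd_add h2 hdn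
      rw [sFun_eq2 hn h2, sFun_eq2 hn h2']
      ring
    · have h1' : ¬ (n:ℤ) ∣ (x + n - i) := fun hc => h1 (by have := dvd_sub hc hdn; rwa [d3] at this)
      have h2' : ¬ (n:ℤ) ∣ (x + n - (i+1)) := fun hc => h2 (by have := dvd_sub hc hdn; rwa [d4] at this)
      rw [sFun_eq3 h1 h2, sFun_eq3 h1' h2']

lemma sA_add (hn : 3 ≤ n) (i x : ℤ) : sA hn i (x + n) = sA hn i x + n := sFun_add hn i x

lemma sA_maps_window (hn : 3 ≤ n) (i : ℤ) :
    ∀ x ∈ Finset.Ioc (i-1) (i-1+n), sA hn i x ∈ Finset.Ioc (i-1) (i-1+n) := by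
  intro x hx
  simp only [Finset.mem_Ioc] at hx ⊢
  by_cases h1 : (n:ℤ) ∣ (x - i)
  · have : x - i = 0 := eq_zero_of_dvd_small hn h1 (by rw [abs_lt]; omega)
    rw [sA_apply, sFun_eq1 h1]
    omega
  · by_cases h2 : (n:ℤ) ∣ (x - (i+1))
    · have : x - (i+1) = 0 := eq_zero_of_dvd_small hn h2 (by rw [abs_lt]; omega)
      rw [sA_apply, sFun_eq2 hn h2]
      omega
    · rw [sA_apply, sFun_eq3 h1 h2]
      omega

lemma sA_mem_window_iff (hn : 3 ≤ n) (i x : ℤ) :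
    x ∈ Finset.Ioc (i-1) (i-1+n) ↔ sA hn i x ∈ Finset.Ioc (i-1) (i-1+n) := by
  constructor
  · exact sA_maps_window hn i x
  · intro h
    have := sA_maps_window hn i _ h
    rwa [show sA hn i (sA hn i x) = x from sFun_invol hn i x] at this

lemma sum_window_comp (hn : 3 ≤ n) {M : Type*} [AddCommMonoid M] (i : ℤ) (f : ℤ → M) :
    ∑ x ∈ Finset.Ioc (i-1) (i-1+n), f (sA hn i x) = ∑ x ∈ Finset.Ioc (i-1) (i-1+n), f x :=
  Finset.sum_equiv (sA hn i) (fun x => sA_mem_window_iff hn i x) (fun _ _ => rfl)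

lemma mul_sA_affine (hn : 3 ≤ n) {w : Equiv.Perm ℤ} (hw : IsAffinePerm n w) (i : ℤ) :
    IsAffinePerm n (w * sA hn i) := by
  constructor
  · intro x
    simp only [Equiv.Perm.mul_apply, sA_add hn i x, hw.1]
  · have key : ∑ x ∈ Finset.Ioc (i-1) (i-1+n), ((w * sA hn i) x - x) = 0 := by
      have e : ∀ x : ℤ, (w * sA hn i) x - x = (w (sA hn i x) - sA hn i x) + (sA hn i x - x) := by
        intro x; simp [Equiv.Perm.mul_apply]
      rw [Finset.sum_congr rfl (fun x _ => e x), Finset.sum_add_distrib]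
      have e1 : ∑ x ∈ Finset.Ioc (i-1) (i-1+n), (w (sA hn i x) - sA hn i x) = 0 := by
        rw [sum_window_comp hn i (fun y => w y - y)]
        exact sum_h_window hn hw _
      have e2 : ∑ x ∈ Finset.Ioc (i-1) (i-1+n), (sA hn i x - x) = 0 := by
        rw [Finset.sum_sub_distrib, sum_window_comp hn i (fun y => y), sub_self]
      rw [e1, e2]
      norm_num
    have hper : ∀ x : ℤ, (w * sA hn i) (x + n) - (x + n) = (w * sA hn i) x - x := by
      intro x
      simp only [Equiv.Perm.mul_apply, sA_add hn i x, hw.1]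
      ring
    rw [Icc_one_eq_Ioc, sum_Ioc_window hn _ hper 0 (i-1)]
    exact key

lemma listProd_sA_affine (hn : 3 ≤ n) (l : List ℤ) : IsAffinePerm n ((l.map (sA hn)).prod) := by
  induction l using List.reverseRecOn with
  | nil => exact one_affine
  | append_singleton l a ih =>
      rw [List.map_append, List.prod_append]
      simpa using mul_sA_affine hn ih a

lemma forall₂_gen (hn : 3 ≤ n) {l : List ℕ} {σs : List (Equiv.Perm ℤ)} (h : List.Forall₂ (IsGenA n) l σs) :
    σs = l.map (fun i : ℕ => sA hn (i:ℤ)) := by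
  induction h with
  | nil => rfl
  | cons h₁ h₂ ih =>
      rw [isGenA_iff hn] at h₁
      simp [h₁, ih]

lemma forall₂_gen_self (hn : 3 ≤ n) (l : List ℕ) :
    List.Forall₂ (IsGenA n) l (l.map (fun i : ℕ => sA hn (i:ℤ))) := by
  induction l with
  | nil => exact List.Forall₂.nil
  | cons a l ih => exact List.Forall₂.cons ((isGenA_iff hn a _).2 rfl) ih

lemma isWordA_iff (hn : 3 ≤ n) (w : Equiv.Perm ℤ) (l : List ℕ) :
    IsWordA n w l ↔ (∀ i ∈ l, i < n) ∧ ((l.map (fun i : ℕ => (i : ℤ))).map (sA hn)).prod = w := by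
  rw [List.map_map]
  show IsWordA n w l ↔ _ ∧ (l.map (fun i : ℕ => sA hn (i:ℤ))).prod = w
  constructor
  · rintro ⟨h1, σs, hf, hp⟩
    rw [forall₂_gen hn hf] at hp
    exact ⟨h1, hp⟩
  · rintro ⟨h1, h2⟩
    exact ⟨h1, _, forall₂_gen_self hn l, h2⟩

lemma isWordA_affine (hn : 3 ≤ n) {w : Equiv.Perm ℤ} {l : List ℕ} (h : IsWordA n w l) :
    IsAffinePerm n w := by
  rw [isWordA_iff hn] at h
  rw [← h.2]
  exact listProd_sA_affine hn _

lemma mul_sA_sA (hn : 3 ≤ n) {w : Equiv.Perm ℤ} (i : ℤ) : w * sA hn i * sA hn i = w := by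
  rw [mul_assoc, sA_sq hn, mul_one]

end S4

section S5
variable {n : ℕ}

/-- The set of inversions of `w` based at `x` with cutoff `c`. -/
def bset (w : Equiv.Perm ℤ) (x c : ℤ) : Set ℤ := {j | x < j ∧ w j < c}

noncomputable def cnum (w : Equiv.Perm ℤ) (x : ℤ) : ℕ := (bset w x (w x)).ncard

lemma bset_finite (hn : 3 ≤ n) {w : Equiv.Perm ℤ} (hw : IsAffinePerm n w) (x c : ℤ) :
    (bset w x c).Finite := by
  apply Set.Finite.subset (Set.finite_Ioo x (c + disA n w))
  rintro j ⟨hj1, hj2⟩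
  have h1 : |w j - j| ≤ disA n w := abs_le_disA hn hw j
  constructor
  · exact hj1
  · have : 0 ≤ disA n w := disA_nonneg w
    rw [abs_le] at h1
    omega

lemma invol_image {f : ℤ → ℤ} (hf : Function.Involutive f) (B : Set ℤ) :
    f '' B = {j | f j ∈ B} := by
  ext j
  constructor
  · rintro ⟨b, hb, rfl⟩
    simpa [hf b] using hb
  · intro hj
    exact ⟨f j, hj, hf j⟩

lemma ncard_sA_set (hn : 3 ≤ n) (i : ℤ) (B : Set ℤ) :
    {j | sA hn i j ∈ B}.ncard = B.ncard := by
  show {j | sFun n i j ∈ B}.ncard = B.ncard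
  rw [← invol_image (sFun_invol hn i) B]
  exact Set.ncard_image_of_injective B (sFun_invol hn i).injective

/-- `x < s j ↔ x < j` provided `x` is not in the class of `i`. -/
lemma lt_sA_iff (hn : 3 ≤ n) {i x : ℤ} (hx : ¬ (n:ℤ) ∣ (x - i)) (j : ℤ) :
    x < sA hn i j ↔ x < j := by
  by_cases h1 : (n:ℤ) ∣ (j - i)
  · rw [sA_apply, sFun_eq1 h1]
    constructor <;> intro h
    · rcases eq_or_lt_of_le (show x ≤ j from by omega) with rfl | h'
      · exact absurd h1 hx
      · exact h'
    · omega
  · by_cases h2 : (n:ℤ) ∣ (j - (i+1))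
    · rw [sA_apply, sFun_eq2 hn h2]
      constructor <;> intro h
      · omega
      · rcases eq_or_lt_of_le (show x ≤ j - 1 from by omega) with he | h'
        · exfalso
          apply hx
          have : x - i = j - (i+1) := by omega
          rw [this]; exact h2
        · omega
    · rw [sA_apply, sFun_eq3 h1 h2]

lemma cnum_dvd_shift (hn : 3 ≤ n) {w : Equiv.Perm ℤ} (hw : IsAffinePerm n w) {x x' : ℤ}
    (h : (n:ℤ) ∣ (x' - x)) : cnum w x' = cnum w x := by
  have himg : bset w x' (w x') = (fun j => j + (x' - x)) '' bset w x (w x) := by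
    ext j
    simp only [bset, Set.mem_setOf_eq, Set.mem_image]
    have hx := aff_dvd_shift hw h
    constructor
    · rintro ⟨hj1, hj2⟩
      refine ⟨j - (x' - x), ⟨by omega, ?_⟩, by ring⟩
      have hj : (n:ℤ) ∣ (j - (x' - x)) - j := by
        rw [show (j - (x' - x)) - j = -(x' - x) from by ring]
        exact h.neg_right
      have := aff_dvd_shift hw hj
      omega
    · rintro ⟨j', ⟨hj1, hj2⟩, rfl⟩
      refine ⟨by omega, ?_⟩
      have hj : (n:ℤ) ∣ (j' + (x' - x)) - j' := by
        rw [show (j' + (x' - x)) - j' = x' - x from by ring]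
        exact h
      have := aff_dvd_shift hw hj
      omega
  rw [cnum, himg, Set.ncard_image_of_injective _ (add_left_injective _)]
  rfl

noncomputable def invA (n : ℕ) (w : Equiv.Perm ℤ) : ℕ := ∑ x ∈ Finset.Icc (1:ℤ) (n:ℤ), cnum w x

lemma invA_window (hn : 3 ≤ n) {w : Equiv.Perm ℤ} (hw : IsAffinePerm n w) (a : ℤ) :
    invA n w = ∑ x ∈ Finset.Ioc a (a + n), cnum w x := by
  rw [invA, Icc_one_eq_Ioc,
    sum_Ioc_window hn (fun x => cnum w x)
      (fun x => cnum_dvd_shift hn hw ⟨1, by ring⟩) 0 a]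

lemma cnum_eq_zero_iff {w : Equiv.Perm ℤ} {x : ℤ} (hfin : (bset w x (w x)).Finite) :
    cnum w x = 0 ↔ ∀ j, x < j → w x < w j := by
  rw [cnum, Set.ncard_eq_zero hfin]
  constructor
  · intro h j hj
    have : j ∉ bset w x (w x) := by rw [h]; exact Set.notMem_empty j
    have h2 : ¬ w j < w x := fun hc => this ⟨hj, hc⟩
    have h3 : w j ≠ w x := fun hc => by
      have := w.injective hc; omega
    omega
  · intro h
    ext j
    simp only [bset, Set.mem_setOf_eq, Set.mem_empty_iff_false, iff_false, not_and]
    intro hj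
    have := h j hj
    omega

end S5

section S6
variable {n : ℕ}

lemma sA_self (hn : 3 ≤ n) (i : ℤ) : sA hn i i = i + 1 := sFun_eq1 (by simp)

lemma sA_succ (hn : 3 ≤ n) (i : ℤ) : sA hn i (i+1) = i := by
  have : sFun n i (i+1) = i + 1 - 1 := sFun_eq2 hn (by simp)
  rw [sA_apply, this]; ring

lemma sA_fix (hn : 3 ≤ n) {i x : ℤ} (h1 : ¬(n:ℤ) ∣ (x - i)) (h2 : ¬(n:ℤ) ∣ (x - (i+1))) :
    sA hn i x = x := sFun_eq3 h1 h2

lemma not_dvd_of_window {i x : ℤ} (hn : 3 ≤ n) (hx : i - 1 < x) (hx2 : x ≤ i - 1 + n)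
    (hne : x ≠ i) : ¬ (n:ℤ) ∣ (x - i) := by
  intro hc
  have := eq_zero_of_dvd_small hn hc (by rw [abs_lt]; omega)
  omega

lemma not_dvd_of_window' {i x : ℤ} (hn : 3 ≤ n) (hx : i - 1 < x) (hx2 : x ≤ i - 1 + n)
    (hne : x ≠ i + 1) : ¬ (n:ℤ) ∣ (x - (i+1)) := by
  intro hc
  have := eq_zero_of_dvd_small hn hc (by rw [abs_lt]; omega)
  omega

lemma setOf_sA_mem_finite (hn : 3 ≤ n) (i : ℤ) {B : Set ℤ} (hB : B.Finite) :
    {j | sA hn i j ∈ B}.Finite := by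
  have he : {j | sA hn i j ∈ B} = (sA hn i) ⁻¹' B := rfl
  rw [he]
  exact Set.Finite.preimage (Set.injOn_of_injective (Equiv.injective _)) hB

lemma bset_mul_sA (hn : 3 ≤ n) (w : Equiv.Perm ℤ) (i c : ℤ) :
    {j : ℤ | i + 1 < j ∧ (w * sA hn i) j < c} = {j | sA hn i j ∈ bset w (i+1) c} := by
  ext j
  simp only [Set.mem_setOf_eq, bset, Equiv.Perm.mul_apply]
  rw [lt_sA_iff hn (by rw [show i + 1 - i = 1 from by ring]; exact not_dvd_one hn) j]

lemma bset_mul_sA_ncard (hn : 3 ≤ n) (w : Equiv.Perm ℤ) (i c : ℤ) :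
    {j : ℤ | i + 1 < j ∧ (w * sA hn i) j < c}.ncard = (bset w (i+1) c).ncard := by
  rw [bset_mul_sA hn w i c, ncard_sA_set hn]

lemma cnum_offpair (hn : 3 ≤ n) (w : Equiv.Perm ℤ) {i x : ℤ}
    (h1 : ¬(n:ℤ) ∣ (x - i)) (h2 : ¬(n:ℤ) ∣ (x - (i+1))) :
    cnum (w * sA hn i) x = cnum w x := by
  have hfix : sA hn i x = x := sA_fix hn h1 h2
  have he : bset (w * sA hn i) x ((w * sA hn i) x) = {j | sA hn i j ∈ bset w x (w x)} := by
    ext j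
    simp only [bset, Set.mem_setOf_eq, Equiv.Perm.mul_apply, hfix]
    rw [lt_sA_iff hn h1 j]
  rw [cnum, he, ncard_sA_set hn]
  rfl

lemma pair_subset_window (hn : 3 ≤ n) (i : ℤ) :
    ({i, i+1} : Finset ℤ) ⊆ Finset.Ioc (i-1) (i-1+n) := by
  intro x hx
  simp only [Finset.mem_insert, Finset.mem_singleton] at hx
  simp only [Finset.mem_Ioc]
  rcases hx with rfl | rfl <;> omega

lemma sum_split_pair (hn : 3 ≤ n) (i : ℤ) (f : ℤ → ℕ) :
    ∑ x ∈ Finset.Ioc (i-1) (i-1+n), f x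
      = ∑ x ∈ Finset.Ioc (i-1) (i-1+n) \ {i, i+1}, f x + f i + f (i+1) := by
  have h := Finset.sum_sdiff (f := f) (pair_subset_window hn i)
  rw [← h, Finset.sum_pair (show i ≠ i + 1 from by omega)]
  ring

/-- Multiplying by `s_i` when `w` ascends at `i` increases the inversion number by 1. -/
lemma invA_mul_ascent (hn : 3 ≤ n) {w : Equiv.Perm ℤ} (hw : IsAffinePerm n w) {i : ℤ}
    (hab : w i < w (i+1)) :
    invA n (w * sA hn i) = invA n w + 1 := by
  set v := w * sA hn i with hv
  have hvi : v i = w (i+1) := by rw [hv]; simp [Equiv.Perm.mul_apply, sA_self hn i]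
  have hvi1 : v (i+1) = w i := by rw [hv]; simp [Equiv.Perm.mul_apply, sA_succ hn i]
  have hrest : ∀ x ∈ Finset.Ioc (i-1) (i-1+n) \ {i, i+1}, cnum v x = cnum w x := by
    intro x hx
    simp only [Finset.mem_sdiff, Finset.mem_Ioc, Finset.mem_insert, Finset.mem_singleton,
      not_or] at hx
    exact cnum_offpair hn w (not_dvd_of_window hn hx.1.1 hx.1.2 hx.2.1)
      (not_dvd_of_window' hn hx.1.1 hx.1.2 hx.2.2)
  -- cnum v i = cnum w (i+1) + 1
  have hci : cnum v i = cnum w (i+1) + 1 := by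
    have hset : bset v i (v i) = insert (i+1) {j : ℤ | i + 1 < j ∧ v j < w (i+1)} := by
      ext j
      simp only [bset, Set.mem_setOf_eq, Set.mem_insert_iff, hvi]
      constructor
      · rintro ⟨hj1, hj2⟩
        rcases eq_or_lt_of_le (show i + 1 ≤ j from by omega) with rfl | h'
        · left; rfl
        · right; exact ⟨h', hj2⟩
      · rintro (rfl | ⟨hj1, hj2⟩)
        · exact ⟨by omega, by rw [hvi1]; exact hab⟩
        · exact ⟨by omega, hj2⟩
    rw [cnum, hset, Set.ncard_insert_of_notMem (by simp)
      (by rw [hv, bset_mul_sA hn w i];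
          exact setOf_sA_mem_finite hn i (bset_finite hn hw (i+1) (w (i+1))))]
    rw [hv, bset_mul_sA_ncard hn w i]
    rfl
  have hci1 : cnum v (i+1) = cnum w i := by
    have h1 : cnum v (i+1) = (bset w (i+1) (w i)).ncard := by
      rw [cnum, hvi1, hv, show bset (w * sA hn i) (i+1) (w i)
        = {j : ℤ | i + 1 < j ∧ (w * sA hn i) j < w i} from rfl, bset_mul_sA_ncard hn w i]
    have h2 : bset w i (w i) = bset w (i+1) (w i) := by
      ext j
      simp only [bset, Set.mem_setOf_eq]
      constructor
      · rintro ⟨hj1, hj2⟩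
        rcases eq_or_lt_of_le (show i + 1 ≤ j from by omega) with rfl | h'
        · omega
        · exact ⟨h', hj2⟩
      · rintro ⟨hj1, hj2⟩
        exact ⟨by omega, hj2⟩
    rw [h1, cnum, h2]
  have hwv : IsAffinePerm n v := mul_sA_affine hn hw i
  rw [invA_window hn hwv (i-1), invA_window hn hw (i-1),
    sum_split_pair hn i, sum_split_pair hn i,
    Finset.sum_congr rfl hrest, hci, hci1]
  ring

/-- Multiplying by `s_i` when `w` descends at `i` decreases the inversion number by 1. -/
lemma invA_mul_descent (hn : 3 ≤ n) {w : Equiv.Perm ℤ} (hw : IsAffinePerm n w) {i : ℤ}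
    (hab : w (i+1) < w i) :
    invA n (w * sA hn i) + 1 = invA n w := by
  set v := w * sA hn i with hv
  have hvi : v i = w (i+1) := by rw [hv]; simp [Equiv.Perm.mul_apply, sA_self hn i]
  have hvi1 : v (i+1) = w i := by rw [hv]; simp [Equiv.Perm.mul_apply, sA_succ hn i]
  have hrest : ∀ x ∈ Finset.Ioc (i-1) (i-1+n) \ {i, i+1}, cnum v x = cnum w x := by
    intro x hx
    simp only [Finset.mem_sdiff, Finset.mem_Ioc, Finset.mem_insert, Finset.mem_singleton,
      not_or] at hx
    exact cnum_offpair hn w (not_dvd_of_window hn hx.1.1 hx.1.2 hx.2.1)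
      (not_dvd_of_window' hn hx.1.1 hx.1.2 hx.2.2)
  have hci : cnum v i = cnum w (i+1) := by
    have hset : bset v i (v i) = {j : ℤ | i + 1 < j ∧ v j < w (i+1)} := by
      ext j
      simp only [bset, Set.mem_setOf_eq, hvi]
      constructor
      · rintro ⟨hj1, hj2⟩
        rcases eq_or_lt_of_le (show i + 1 ≤ j from by omega) with rfl | h'
        · exfalso; rw [hvi1] at hj2; omega
        · exact ⟨h', hj2⟩
      · rintro ⟨hj1, hj2⟩
        exact ⟨by omega, hj2⟩
    rw [cnum, hset, hv, bset_mul_sA_ncard hn w i]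
    rfl
  have hci1 : cnum w i = (bset w (i+1) (w i)).ncard + 1 := by
    have hset : bset w i (w i) = insert (i+1) (bset w (i+1) (w i)) := by
      ext j
      simp only [bset, Set.mem_setOf_eq, Set.mem_insert_iff]
      constructor
      · rintro ⟨hj1, hj2⟩
        rcases eq_or_lt_of_le (show i + 1 ≤ j from by omega) with rfl | h'
        · left; rfl
        · right; exact ⟨h', hj2⟩
      · rintro (rfl | ⟨hj1, hj2⟩)
        · exact ⟨by omega, hab⟩
        · exact ⟨by omega, hj2⟩
    rw [cnum, hset, Set.ncard_insert_of_notMem (by simp [bset]) (bset_finite hn hw (i+1) (w i))]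
  have hvci1 : cnum v (i+1) = (bset w (i+1) (w i)).ncard := by
    rw [cnum, hvi1, hv, show bset (w * sA hn i) (i+1) (w i)
      = {j : ℤ | i + 1 < j ∧ (w * sA hn i) j < w i} from rfl, bset_mul_sA_ncard hn w i]
  have hwv : IsAffinePerm n v := mul_sA_affine hn hw i
  rw [invA_window hn hwv (i-1), invA_window hn hw (i-1),
    sum_split_pair hn i, sum_split_pair hn i,
    Finset.sum_congr rfl hrest, hci, hci1, hvci1]
  ring

end S6

section S7
variable {n : ℕ}

lemma strict_chain {w : Equiv.Perm ℤ} (h : ∀ x : ℤ, w x < w (x+1)) :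
    ∀ x j : ℤ, x < j → w x < w j := by
  have key : ∀ (x : ℤ) (k : ℕ), w x < w (x + 1 + (k:ℤ)) := by
    intro x k
    induction k with
    | zero => simpa using h x
    | succ m ih =>
        have h2 := h (x + 1 + (m:ℤ))
        have e : x + 1 + ((m:ℤ)+1) = (x + 1 + (m:ℤ)) + 1 := by ring
        push_cast
        rw [e]
        omega
  intro x j hxj
  have := key x (j - x - 1).toNat
  rwa [show x + 1 + ((j - x - 1).toNat : ℤ) = j from by omega] at this

lemma mono_affine_eq_one (hn : 3 ≤ n) {w : Equiv.Perm ℤ} (hw : IsAffinePerm n w)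
    (h : ∀ x : ℤ, w x < w (x+1)) : w = 1 := by
  have hstep : ∀ x : ℤ, w (x+1) = w x + 1 := by
    intro x
    have h1 : w x < w (x+1) := h x
    by_contra hne
    obtain ⟨y, hwy⟩ : ∃ y, w y = w x + 1 := ⟨w.symm _, w.apply_symm_apply _⟩
    have hyx : x < y := by
      rcases lt_trichotomy y x with h' | heq | h'
      · have := strict_chain h y x h'; omega
      · rw [heq] at hwy; omega
      · exact h'
    have hyx2 : y < x + 1 := by
      rcases lt_trichotomy y (x+1) with h' | heq | h'
      · exact h'
      · rw [heq] at hwy; omega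
      · have := strict_chain h (x+1) y h'; omega
    omega
  have hconst : ∀ x : ℤ, w x = x + w 0 := by
    intro x
    induction x using Int.induction_on with
    | zero => simp
    | succ k ihp => rw [hstep (k:ℤ), ihp]; ring
    | pred k ihn =>
        have hs := hstep (-(k:ℤ)-1)
        rw [show -(k:ℤ)-1+1 = -(k:ℤ) from by ring] at hs
        omega
  have hsum := hw.2
  have hec : ∀ x ∈ Finset.Icc (1:ℤ) (n:ℤ), w x - x = w 0 := by
    intro x _
    rw [hconst x]; ring
  rw [Finset.sum_congr rfl hec, Finset.sum_const, Int.card_Icc] at hsum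
  have hcard : ((n:ℤ) + 1 - 1).toNat = n := by omega
  rw [hcard] at hsum
  have hw0 : w 0 = 0 := by
    have h2 : ((n:ℤ)) * w 0 = 0 := by
      rwa [nsmul_eq_mul] at hsum
    have hne : (n:ℤ) ≠ 0 := by omega
    exact (mul_eq_zero.1 h2).resolve_left hne
  ext x
  rw [hconst x, hw0]
  simp

lemma exists_window_rep (hn : 3 ≤ n) (x : ℤ) :
    ∃ x₀ : ℤ, 1 ≤ x₀ ∧ x₀ ≤ n ∧ (n:ℤ) ∣ (x - x₀) := by
  refine ⟨(x-1) % n + 1, ?_, ?_, ?_⟩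
  · have := Int.emod_nonneg (x-1) (show (n:ℤ) ≠ 0 from by omega)
    omega
  · have := Int.emod_lt_of_pos (x-1) (show (0:ℤ) < n from by omega)
    omega
  · have h := Int.mul_ediv_add_emod (x-1) n
    refine ⟨(x-1)/n, ?_⟩
    linarith

lemma invA_zero_eq_one (hn : 3 ≤ n) {w : Equiv.Perm ℤ} (hw : IsAffinePerm n w)
    (h0 : invA n w = 0) : w = 1 := by
  apply mono_affine_eq_one hn hw
  intro x
  obtain ⟨x₀, hx1, hx2, hdvd⟩ := exists_window_rep hn x
  have hc : cnum w x = cnum w x₀ := cnum_dvd_shift hn hw hdvd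
  have hc0 : cnum w x₀ = 0 := by
    have := (Finset.sum_eq_zero_iff.1 h0) x₀ (by simp only [Finset.mem_Icc]; omega)
    exact this
  have := (cnum_eq_zero_iff (bset_finite hn hw x (w x))).1 (hc.trans hc0)
  exact this (x+1) (by omega)

lemma invA_one : invA n (1 : Equiv.Perm ℤ) = 0 := by
  apply Finset.sum_eq_zero
  intro x _
  have : bset (1 : Equiv.Perm ℤ) x ((1 : Equiv.Perm ℤ) x) = ∅ := by
    ext j
    simp only [bset, Equiv.Perm.one_apply, Set.mem_setOf_eq, Set.mem_empty_iff_false, iff_false,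
      not_and]
    omega
  rw [cnum, this, Set.ncard_empty]

lemma exists_descent {w : Equiv.Perm ℤ} {x j : ℤ} (hx : x < j) (hv : w j < w x) :
    ∃ y : ℤ, w (y+1) < w y := by
  by_contra hc
  push_neg at hc
  have : ∀ y : ℤ, w y < w (y+1) := by
    intro y
    have h1 := hc y
    have h2 : w y ≠ w (y+1) := fun he => by have := w.injective he; omega
    omega
  have := strict_chain this x j hx
  omega

lemma toNat_emod_lt (hn : 3 ≤ n) (y : ℤ) : (y % (n:ℤ)).toNat < n := by
  have h1 := Int.emod_lt_of_pos y (show (0:ℤ) < n from by omega)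
  have h2 := Int.emod_nonneg y (show (n:ℤ) ≠ 0 from by omega)
  omega

lemma sA_letter (hn : 3 ≤ n) (y : ℤ) : sA hn (((y % (n:ℤ)).toNat : ℕ) : ℤ) = sA hn y := by
  apply sA_congr
  have h2 := Int.emod_nonneg y (show (n:ℤ) ≠ 0 from by omega)
  have h := Int.mul_ediv_add_emod y n
  refine ⟨-(y/n), ?_⟩
  rw [Int.toNat_of_nonneg h2, mul_neg]
  linarith

lemma word_exists (hn : 3 ≤ n) :
    ∀ (N : ℕ) (w : Equiv.Perm ℤ), IsAffinePerm n w → invA n w = N →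
      ∃ l : List ℕ, IsWordA n w l ∧ l.length = N := by
  intro N
  induction N using Nat.strong_induction_on with
  | _ N ih =>
    intro w hw hN
    rcases Nat.eq_zero_or_pos N with rfl | hpos
    · have hw1 : w = 1 := invA_zero_eq_one hn hw hN
      refine ⟨[], ?_, rfl⟩
      rw [isWordA_iff hn, hw1]
      exact ⟨by simp, by simp⟩
    · have hinv : invA n w ≠ 0 := by omega
      have : ∃ x₀ ∈ Finset.Icc (1:ℤ) (n:ℤ), cnum w x₀ ≠ 0 := by
        by_contra hc
        push_neg at hc
        exact hinv (Finset.sum_eq_zero hc)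
      obtain ⟨x₀, _, hx₀⟩ := this
      have hne : (bset w x₀ (w x₀)).Nonempty := Set.nonempty_of_ncard_ne_zero hx₀
      obtain ⟨j, hj1, hj2⟩ := hne
      obtain ⟨y, hy⟩ := exists_descent hj1 hj2
      set p : ℕ := (y % (n:ℤ)).toNat with hp
      have hw'a : IsAffinePerm n (w * sA hn y) := mul_sA_affine hn hw y
      have hdes := invA_mul_descent hn hw hy
      have hinv' : invA n (w * sA hn y) = N - 1 := by omega
      obtain ⟨l', hl', hlen'⟩ := ih (N-1) (by omega) _ hw'a hinv'
      refine ⟨l' ++ [p], ?_, by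
        simp only [List.length_append, List.length_singleton, hlen']
        omega⟩
      rw [isWordA_iff hn] at hl' ⊢
      constructor
      · intro q hq
        rcases List.mem_append.1 hq with h' | h'
        · exact hl'.1 q h'
        · simp only [List.mem_singleton] at h'
          subst h'
          exact toNat_emod_lt hn y
      · rw [List.map_append, List.map_append, List.prod_append, hl'.2]
        simp only [List.map_cons, List.map_nil, List.prod_cons, List.prod_nil, mul_one]
        rw [sA_letter hn y, mul_sA_sA hn]

lemma word_length_ge (hn : 3 ≤ n) :
    ∀ (l : List ℕ) (w : Equiv.Perm ℤ), IsWordA n w l → invA n w ≤ l.length := by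
  intro l
  induction l using List.reverseRecOn with
  | nil =>
      intro w h
      rw [isWordA_iff hn] at h
      have hw1 : w = 1 := by rw [← h.2]; simp
      rw [hw1, invA_one]
      simp
  | append_singleton l' p ih =>
      intro w h
      rw [isWordA_iff hn] at h
      obtain ⟨hlt, hp⟩ := h
      set v : Equiv.Perm ℤ := ((l'.map (fun i : ℕ => (i:ℤ))).map (sA hn)).prod with hv
      have hvw : IsWordA n v l' := by
        rw [isWordA_iff hn]
        exact ⟨fun q hq => hlt q (List.mem_append.2 (Or.inl hq)), rfl⟩
      have hva : IsAffinePerm n v := isWordA_affine hn hvw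
      have hweq : w = v * sA hn (p:ℤ) := by
        rw [← hp, List.map_append, List.map_append, List.prod_append]
        simp [hv]
      have hihv := ih v hvw
      have hne : v (p:ℤ) ≠ v ((p:ℤ)+1) := fun he => by have := v.injective he; omega
      rcases lt_or_gt_of_ne hne with hasc | hdesc
      · have := invA_mul_ascent hn hva hasc
        rw [hweq, this]
        simp only [List.length_append, List.length_singleton]
        omega
      · have := invA_mul_descent hn hva hdesc
        rw [hweq] at *
        simp only [List.length_append, List.length_singleton]
        omega

lemma lenA_eq_invA (hn : 3 ≤ n) {w : Equiv.Perm ℤ} (hw : IsAffinePerm n w) :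
    lenA n w = invA n w := by
  obtain ⟨l, hl, hlen⟩ := word_exists hn (invA n w) w hw rfl
  apply le_antisymm
  · exact Nat.sInf_le ⟨l, hl, hlen⟩
  · have hne : {m | ∃ l : List ℕ, IsWordA n w l ∧ l.length = m}.Nonempty :=
      ⟨invA n w, l, hl, hlen⟩
    obtain ⟨l₀, hl₀, hlen₀⟩ := Nat.sInf_mem hne
    show invA n w ≤ sInf {m | ∃ l : List ℕ, IsWordA n w l ∧ l.length = m}
    rw [← hlen₀]
    exact word_length_ge hn l₀ w hl₀

lemma exists_reduced (hn : 3 ≤ n) {w : Equiv.Perm ℤ} (hw : IsAffinePerm n w) :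
    ∃ l : List ℕ, IsReducedWordA n w l := by
  obtain ⟨l, hl, hlen⟩ := word_exists hn (invA n w) w hw rfl
  exact ⟨l, hl, by rw [hlen, lenA_eq_invA hn hw]⟩

/-- Append a descent letter to a reduced word. -/
lemma reduced_append_letter (hn : 3 ≤ n) {v : Equiv.Perm ℤ} (hv : IsAffinePerm n v) (y : ℤ)
    {m : List ℕ} (hm : IsReducedWordA n v m) (hasc : v y < v (y+1)) :
    IsReducedWordA n (v * sA hn y) (m ++ [(y % (n:ℤ)).toNat]) := by
  obtain ⟨hmw, hmlen⟩ := hm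
  constructor
  · rw [isWordA_iff hn] at hmw ⊢
    constructor
    · intro q hq
      rcases List.mem_append.1 hq with h' | h'
      · exact hmw.1 q h'
      · simp only [List.mem_singleton] at h'
        subst h'
        exact toNat_emod_lt hn y
    · rw [List.map_append, List.map_append, List.prod_append, hmw.2]
      simp only [List.map_cons, List.map_nil, List.prod_cons, List.prod_nil, mul_one]
      rw [sA_letter hn y]
  · have h1 := invA_mul_ascent hn hv hasc
    rw [lenA_eq_invA hn (mul_sA_affine hn hv y), h1, ← lenA_eq_invA hn hv]
    simp [hmlen]

end S7

section S8
variable {n : ℕ}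

lemma sum_split_pair' {M : Type*} [AddCommMonoid M] (hn : 3 ≤ n) (i : ℤ) (f : ℤ → M) :
    ∑ x ∈ Finset.Ioc (i-1) (i-1+n), f x
      = ∑ x ∈ Finset.Ioc (i-1) (i-1+n) \ {i, i+1}, f x + f i + f (i+1) := by
  have h := Finset.sum_sdiff (f := f) (pair_subset_window hn i)
  rw [← h, Finset.sum_pair (show i ≠ i + 1 from by omega)]
  abel

lemma abs_succ_ge {x t : ℤ} (h : t + 1 ≤ x) : |x - t| = |x - (t+1)| + 1 := by
  rw [abs_of_nonneg (by omega), abs_of_nonneg (by omega)]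
  ring

lemma abs_succ_le {x t : ℤ} (h : x ≤ t) : |x - (t+1)| = |x - t| + 1 := by
  rw [abs_of_nonpos (by omega), abs_of_nonpos (by omega)]
  ring

/-- The key disarray step formula. -/
lemma disA_mul (hn : 3 ≤ n) {w : Equiv.Perm ℤ} (hw : IsAffinePerm n w) (i : ℤ) :
    disA n (w * sA hn i) = disA n w
      + (if i + 1 ≤ w (i+1) then 1 else -1) + (if w i ≤ i then 1 else -1) := by
  set v := w * sA hn i with hv
  have hva : IsAffinePerm n v := mul_sA_affine hn hw i
  have hvi : v i = w (i+1) := by rw [hv]; simp [Equiv.Perm.mul_apply, sA_self hn i]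
  have hvi1 : v (i+1) = w i := by rw [hv]; simp [Equiv.Perm.mul_apply, sA_succ hn i]
  have hrest : ∀ x ∈ Finset.Ioc (i-1) (i-1+n) \ {i, i+1}, |v x - x| = |w x - x| := by
    intro x hx
    simp only [Finset.mem_sdiff, Finset.mem_Ioc, Finset.mem_insert, Finset.mem_singleton,
      not_or] at hx
    have hfix : sA hn i x = x := sA_fix hn (not_dvd_of_window hn hx.1.1 hx.1.2 hx.2.1)
      (not_dvd_of_window' hn hx.1.1 hx.1.2 hx.2.2)
    rw [hv]
    simp only [Equiv.Perm.mul_apply, hfix]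
  rw [disA_eq_window hn hva (i-1), disA_eq_window hn hw (i-1),
    sum_split_pair' hn i, sum_split_pair' hn i, Finset.sum_congr rfl hrest, hvi, hvi1]
  have key : |w (i+1) - i| + |w i - (i+1)|
      = |w i - i| + |w (i+1) - (i+1)|
        + (if i + 1 ≤ w (i+1) then 1 else -1) + (if w i ≤ i then 1 else -1) := by
    split_ifs with h1 h2 h2
    · rw [abs_succ_ge h1, abs_succ_le h2]; ring
    · rw [abs_succ_ge h1, abs_succ_ge (show i + 1 ≤ w i from by omega)]; ring
    · rw [abs_succ_le (show w (i+1) ≤ i from by omega), abs_succ_le h2]; ring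
    · rw [abs_succ_le (show w (i+1) ≤ i from by omega),
        abs_succ_ge (show i + 1 ≤ w i from by omega)]; ring
  omega

lemma disA_mul_le (hn : 3 ≤ n) {w : Equiv.Perm ℤ} (hw : IsAffinePerm n w) (i : ℤ) :
    disA n (w * sA hn i) ≤ disA n w + 2 := by
  have := disA_mul hn hw i
  split_ifs at this <;> omega

/-- Product of the word as permutation. -/
noncomputable def wprod {n : ℕ} (hn : 3 ≤ n) (l : List ℕ) : Equiv.Perm ℤ :=
  ((l.map (fun i : ℕ => (i:ℤ))).map (sA hn)).prod

lemma wprod_affine (hn : 3 ≤ n) (l : List ℕ) : IsAffinePerm n (wprod hn l) :=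
  listProd_sA_affine hn _

lemma wprod_append (hn : 3 ≤ n) (l m : List ℕ) :
    wprod hn (l ++ m) = wprod hn l * wprod hn m := by
  rw [wprod, List.map_append, List.map_append, List.prod_append]
  rfl

lemma wprod_singleton (hn : 3 ≤ n) (p : ℕ) : wprod hn [p] = sA hn (p:ℤ) := by
  simp [wprod]

lemma isWordA_iff_wprod (hn : 3 ≤ n) (w : Equiv.Perm ℤ) (l : List ℕ) :
    IsWordA n w l ↔ (∀ i ∈ l, i < n) ∧ wprod hn l = w := isWordA_iff hn w l

lemma disA_wprod_le (hn : 3 ≤ n) (l : List ℕ) :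
    disA n (wprod hn l) ≤ 2 * l.length := by
  induction l using List.reverseRecOn with
  | nil =>
      have : wprod hn ([] : List ℕ) = 1 := by simp [wprod]
      rw [this, disA_one]
      simp
  | append_singleton l' p ih =>
      rw [wprod_append hn l' [p], wprod_singleton hn p]
      have := disA_mul_le hn (wprod_affine hn l') (p:ℤ)
      simp only [List.length_append, List.length_singleton]
      push_cast
      omega

lemma disA_wprod_le' (hn : 3 ≤ n) (m : List ℕ) :
    ∀ r : List ℕ, disA n (wprod hn (m ++ r)) ≤ disA n (wprod hn m) + 2 * r.length := by
  intro r
  induction r using List.reverseRecOn with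
  | nil => simp
  | append_singleton r' p ih =>
      rw [← List.append_assoc, wprod_append hn (m ++ r') [p], wprod_singleton hn p]
      have := disA_mul_le hn (wprod_affine hn (m ++ r')) (p:ℤ)
      simp only [List.length_append, List.length_singleton]
      push_cast
      omega

/-- In a word whose disarray attains twice the length, every step adds exactly 2. -/
lemma step_forced (hn : 3 ≤ n) {l l₁ l₂ : List ℕ} {p : ℕ}
    (hsplit : l = l₁ ++ p :: l₂) (hdis : disA n (wprod hn l) = 2 * l.length) :
    disA n (wprod hn (l₁ ++ [p])) = disA n (wprod hn l₁) + 2 := by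
  have h1 : disA n (wprod hn l) ≤ disA n (wprod hn (l₁ ++ [p])) + 2 * l₂.length := by
    have := disA_wprod_le' hn (l₁ ++ [p]) l₂
    rwa [List.append_assoc, show [p] ++ l₂ = p :: l₂ from rfl, ← hsplit] at this
  have h2 : disA n (wprod hn (l₁ ++ [p])) ≤ disA n (wprod hn l₁) + 2 := by
    rw [wprod_append hn l₁ [p], wprod_singleton hn p]
    exact disA_mul_le hn (wprod_affine hn l₁) (p:ℤ)
  have h3 : disA n (wprod hn l₁) ≤ 2 * l₁.length := disA_wprod_le hn l₁
  have h4 : l.length = l₁.length + 1 + l₂.length := by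
    rw [hsplit]; simp; omega
  rw [h4] at hdis
  push_cast at hdis ⊢
  omega

lemma plus_two_cond (hn : 3 ≤ n) {w : Equiv.Perm ℤ} (hw : IsAffinePerm n w) {i : ℤ}
    (h : disA n (w * sA hn i) = disA n w + 2) :
    i + 1 ≤ w (i+1) ∧ w i ≤ i := by
  have := disA_mul hn hw i
  rw [h] at this
  split_ifs at this with h1 h2 h2
  · exact ⟨h1, h2⟩
  all_goals omega

lemma plus_two_cond_at (hn : 3 ≤ n) {w : Equiv.Perm ℤ} (hw : IsAffinePerm n w) {i : ℤ}
    (h : disA n (w * sA hn i) = disA n w + 2) {t : ℤ} (ht : (n:ℤ) ∣ (t - i)) :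
    t + 1 ≤ w (t+1) ∧ w t ≤ t := by
  obtain ⟨h1, h2⟩ := plus_two_cond hn hw h
  have e1 : w t = w i + (t - i) := aff_dvd_shift hw ht
  have e2 : w (t+1) = w (i+1) + ((t+1) - (i+1)) := aff_dvd_shift hw
    (by rw [show (t+1) - (i+1) = t - i from by ring]; exact ht)
  omega

end S8

section S9
variable {n : ℕ}

lemma not_dvd_neg_one (hn : 3 ≤ n) : ¬ (n:ℤ) ∣ (-1 : ℤ) := fun h => not_dvd_one hn (dvd_neg.1 h)

lemma not_dvd_neg_two (hn : 3 ≤ n) : ¬ (n:ℤ) ∣ (-2 : ℤ) := fun h => not_dvd_two hn (dvd_neg.1 h)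

lemma sA_fix_sub_one (hn : 3 ≤ n) (t : ℤ) : sA hn t (t - 1) = t - 1 := by
  apply sA_fix hn
  · rw [show t - 1 - t = -1 from by ring]; exact not_dvd_neg_one hn
  · rw [show t - 1 - (t+1) = -2 from by ring]; exact not_dvd_neg_two hn

lemma sA_fix_add_two (hn : 3 ≤ n) (t : ℤ) : sA hn t (t + 2) = t + 2 := by
  apply sA_fix hn
  · rw [show t + 2 - t = 2 from by ring]; exact not_dvd_two hn
  · rw [show t + 2 - (t+1) = 1 from by ring]; exact not_dvd_one hn

lemma bad_factor_contra (hn : 3 ≤ n) {l l₁ l₂ : List ℕ} {i j : ℕ}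
    (hi1 : 1 ≤ i) (hin : i + 1 ≤ n) (hij : j = (i+1) % n ∨ i = j + 1)
    (hsplit : l = l₁ ++ [i, j, i] ++ l₂)
    (hdis : disA n (wprod hn l) = 2 * l.length) : False := by
  have hs1 : l = l₁ ++ i :: (j :: i :: l₂) := by rw [hsplit]; simp
  have hs2 : l = (l₁ ++ [i]) ++ j :: (i :: l₂) := by rw [hsplit]; simp
  have hs3 : l = ((l₁ ++ [i]) ++ [j]) ++ i :: l₂ := by rw [hsplit]; simp
  have c1 := step_forced hn hs1 hdis
  have c2 := step_forced hn hs2 hdis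
  have c3 := step_forced hn hs3 hdis
  set u₀ : Equiv.Perm ℤ := wprod hn l₁ with hu₀def
  have hu₀ : IsAffinePerm n u₀ := wprod_affine hn l₁
  have e1 : wprod hn (l₁ ++ [i]) = u₀ * sA hn (i:ℤ) := by
    rw [wprod_append hn l₁ [i], wprod_singleton hn i]
  have hu₁ : IsAffinePerm n (u₀ * sA hn (i:ℤ)) := mul_sA_affine hn hu₀ _
  have e2 : wprod hn ((l₁ ++ [i]) ++ [j]) = (u₀ * sA hn (i:ℤ)) * sA hn (j:ℤ) := by
    rw [wprod_append hn (l₁ ++ [i]) [j], wprod_singleton hn j, e1]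
  have hu₂ : IsAffinePerm n ((u₀ * sA hn (i:ℤ)) * sA hn (j:ℤ)) := mul_sA_affine hn hu₁ _
  have e3 : wprod hn (((l₁ ++ [i]) ++ [j]) ++ [i])
      = ((u₀ * sA hn (i:ℤ)) * sA hn (j:ℤ)) * sA hn (i:ℤ) := by
    rw [wprod_append hn ((l₁ ++ [i]) ++ [j]) [i], wprod_singleton hn i, e2]
  rw [e1] at c1
  rw [e2, e1] at c2
  rw [e3, e2] at c3
  have cond1 := plus_two_cond hn hu₀ c1
  have cond3 := plus_two_cond hn hu₂ c3
  have hu₁i : (u₀ * sA hn (i:ℤ)) (i:ℤ) = u₀ ((i:ℤ)+1) := by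
    rw [Equiv.Perm.mul_apply, sA_self hn]
  rcases hij with hj | hj
  · -- j ≡ i + 1 (mod n)
    have hdvd : (n:ℤ) ∣ (((i:ℤ)+1) - (j:ℤ)) := by
      have hq := Nat.div_add_mod (i+1) n
      refine ⟨(((i+1)/n : ℕ) : ℤ), ?_⟩
      have hq' : ((n:ℤ) * (((i+1)/n : ℕ) : ℤ) + (((i+1) % n : ℕ) : ℤ)) = ((i:ℤ)+1) := by
        exact_mod_cast congrArg (fun x : ℕ => (x : ℤ)) hq
      rw [hj]
      push_cast at hq' ⊢
      linarith
    have hcong : sA hn (j:ℤ) = sA hn ((i:ℤ)+1) := by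
      apply sA_congr
      rw [show (j:ℤ) - ((i:ℤ)+1) = -(((i:ℤ)+1) - (j:ℤ)) from by ring]
      exact dvd_neg.2 hdvd
    have hu₂i : ((u₀ * sA hn (i:ℤ)) * sA hn (j:ℤ)) (i:ℤ) = (u₀ * sA hn (i:ℤ)) (i:ℤ) := by
      rw [Equiv.Perm.mul_apply, hcong]
      congr 1
      have := sA_fix_sub_one hn ((i:ℤ)+1)
      rwa [show (i:ℤ)+1-1 = (i:ℤ) from by ring] at this
    have h1 : ((i:ℤ)+1) ≤ u₀ ((i:ℤ)+1) := cond1.1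
    have h2 := cond3.2
    rw [hu₂i, hu₁i] at h2
    omega
  · -- i = j + 1
    have he : (i:ℤ) = (j:ℤ) + 1 := by exact_mod_cast hj
    have hu₂i1 : ((u₀ * sA hn (i:ℤ)) * sA hn (j:ℤ)) ((i:ℤ)+1) = u₀ (i:ℤ) := by
      rw [Equiv.Perm.mul_apply]
      have hfix : sA hn (j:ℤ) ((i:ℤ)+1) = (i:ℤ)+1 := by
        rw [he, show (j:ℤ)+1+1 = (j:ℤ)+2 from by ring]
        exact sA_fix_add_two hn (j:ℤ)
      rw [hfix, Equiv.Perm.mul_apply, sA_succ hn]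
    have h1 := cond1.2
    have h3 := cond3.1
    rw [hu₂i1] at h3
    omega

/-- Forward direction: if `dis w = 2 len w` then no reduced word contains a bad factor. -/
lemma forward_dir (hn : 3 ≤ n) {w : Equiv.Perm ℤ}
    (hdis : disA n w = 2 * (lenA n w : ℤ)) :
    ∀ l : List ℕ, IsReducedWordA n w l → ¬ HasBadFactorA n l := by
  rintro l ⟨hword, hlen⟩ ⟨i, j, hi1, hin, hij, hinf⟩
  obtain ⟨l₁, l₂, hsp⟩ := hinf
  have hwp : wprod hn l = w := ((isWordA_iff_wprod hn w l).1 hword).2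
  refine bad_factor_contra hn hi1 hin hij hsp.symm ?_
  rw [hwp, hlen, hdis]
end S9

section S10
variable {n : ℕ}

lemma two_mul_sum_Ioc (y : ℤ) (k : ℕ) :
    2 * ∑ v ∈ Finset.Ioc (y - (k:ℤ)) y, v = (k:ℤ) * (2*y - k + 1) := by
  induction k with
  | zero => simp
  | succ m ih =>
      push_cast
      rw [Ioc_insert_bot (show y - ((m:ℤ)+1) < y from by omega),
        Finset.sum_insert (by simp),
        show y - ((m:ℤ)+1)+1 = y - (m:ℤ) from by ring]
      push_cast at ih
      linear_combination ih

lemma two_mul_sum_Ioc' (y : ℤ) (k : ℕ) :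
    2 * ∑ v ∈ Finset.Ioc y (y + (k:ℤ)), v = (k:ℤ) * (2*y + k + 1) := by
  have h := two_mul_sum_Ioc (y + (k:ℤ)) k
  rw [show y + (k:ℤ) - (k:ℤ) = y from by ring] at h
  linear_combination h

lemma sum_le_max_interval :
    ∀ (c : ℕ) (s : Finset ℤ) (y : ℤ), s.card = c → (∀ v ∈ s, v ≤ y) →
      ∑ v ∈ s, v ≤ ∑ v ∈ Finset.Ioc (y - (c:ℤ)) y, v := by
  intro c
  induction c with
  | zero =>
      intro s y hc _
      rw [Finset.card_eq_zero.1 hc]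
      simp
  | succ m ih =>
      intro s y hc hb
      have hne : s.Nonempty := by rw [← Finset.card_pos, hc]; omega
      set mx := s.max' hne with hmxdef
      have hmx : mx ∈ s := s.max'_mem hne
      have hmy : mx ≤ y := hb mx hmx
      have hcard : (s.erase mx).card = m := by
        rw [Finset.card_erase_of_mem hmx, hc]
        omega
      have hball : ∀ v ∈ s.erase mx, v ≤ mx - 1 := by
        intro v hv
        have h1 := Finset.le_max' s v (Finset.mem_of_mem_erase hv)
        have h2 : v ≠ mx := Finset.ne_of_mem_erase hv
        omega
      have hih := ih (s.erase mx) (mx - 1) hcard hball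
      have hsum : ∑ v ∈ s.erase mx, v + mx = ∑ v ∈ s, v := Finset.sum_erase_add s _ hmx
      have hclose0 := two_mul_sum_Ioc (mx - 1) m
      have hclose1 := two_mul_sum_Ioc y (m+1)
      push_cast at hclose1 ⊢
      have hkey : (m:ℤ) * (2*(mx-1) - m + 1) + 2*mx ≤ ((m:ℤ)+1) * (2*y - ((m:ℤ)+1) + 1) := by
        nlinarith [mul_nonneg (show (0:ℤ) ≤ (m:ℤ)+1 from by positivity)
          (show (0:ℤ) ≤ y - mx from by omega)]
      linarith

lemma min_interval_le_sum :
    ∀ (c : ℕ) (s : Finset ℤ) (y : ℤ), s.card = c → (∀ v ∈ s, y < v) →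
      ∑ v ∈ Finset.Ioc y (y + (c:ℤ)), v ≤ ∑ v ∈ s, v := by
  intro c
  induction c with
  | zero =>
      intro s y hc _
      rw [Finset.card_eq_zero.1 hc]
      simp
  | succ m ih =>
      intro s y hc hb
      have hne : s.Nonempty := by rw [← Finset.card_pos, hc]; omega
      set mn := s.min' hne with hmndef
      have hmn : mn ∈ s := s.min'_mem hne
      have hmy : y < mn := hb mn hmn
      have hcard : (s.erase mn).card = m := by
        rw [Finset.card_erase_of_mem hmn, hc]
        omega
      have hball : ∀ v ∈ s.erase mn, mn < v := by
        intro v hv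
        have h1 := Finset.min'_le s v (Finset.mem_of_mem_erase hv)
        have h2 : v ≠ mn := Finset.ne_of_mem_erase hv
        omega
      have hih := ih (s.erase mn) mn hcard hball
      have hsum : ∑ v ∈ s.erase mn, v + mn = ∑ v ∈ s, v := Finset.sum_erase_add s _ hmn
      have hclose0 := two_mul_sum_Ioc' mn m
      have hclose1 := two_mul_sum_Ioc' y (m+1)
      push_cast at hclose1 ⊢
      have hkey : ((m:ℤ)+1) * (2*y + ((m:ℤ)+1) + 1) ≤ (m:ℤ) * (2*mn + m + 1) + 2*mn := by
        nlinarith [mul_nonneg (show (0:ℤ) ≤ (m:ℤ)+1 from by positivity)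
          (show (0:ℤ) ≤ mn - y - 1 from by omega)]
      linarith

/-- Counting lemma 1: an affine permutation cannot map all of `(-∞, x]` below `y < x`. -/
lemma cnt1 (hn : 3 ≤ n) {u : Equiv.Perm ℤ} (hw : IsAffinePerm n u) {x y : ℤ}
    (hyx : y < x) (h : ∀ j ≤ x, u j ≤ y) : False := by
  have hzero := sum_h_window hn hw (x - n)
  rw [show x - (n:ℤ) + n = x from by ring] at hzero
  set W := Finset.Ioc (x - (n:ℤ)) x with hWdef
  have hsub : ∑ j ∈ W, (u j - j) = (∑ j ∈ W, u j) - ∑ j ∈ W, j := Finset.sum_sub_distrib (fun j => u j) (fun j => j)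
  have himg : ∑ v ∈ W.image u, v = ∑ j ∈ W, u j :=
    Finset.sum_image (fun a _ b _ hab => u.injective hab)
  have hcard : (W.image u).card = n := by
    rw [Finset.card_image_of_injective _ u.injective, hWdef, Int.card_Ioc,
      show x - (x - (n:ℤ)) = (n:ℤ) from by ring, Int.toNat_natCast]
  have hbound : ∀ v ∈ W.image u, v ≤ y := by
    intro v hv
    obtain ⟨j, hj, rfl⟩ := Finset.mem_image.1 hv
    rw [hWdef, Finset.mem_Ioc] at hj
    exact h j hj.2
  have hle := sum_le_max_interval n (W.image u) y hcard hbound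
  have c1 := two_mul_sum_Ioc y n
  have c2 := two_mul_sum_Ioc x n
  have h2 : (n:ℤ) * (2*x - n + 1) ≤ (n:ℤ) * (2*y - n + 1) := by linarith
  have h3 : 2*x - (n:ℤ) + 1 ≤ 2*y - n + 1 :=
    le_of_mul_le_mul_left h2 (show (0:ℤ) < n from by omega)
  omega

/-- Counting lemma 2: an affine permutation cannot map all of `(x, ∞)` above `y > x`. -/
lemma cnt2 (hn : 3 ≤ n) {u : Equiv.Perm ℤ} (hw : IsAffinePerm n u) {x y : ℤ}
    (hxy : x < y) (h : ∀ j, x < j → y < u j) : False := by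
  have hzero := sum_h_window hn hw x
  set W := Finset.Ioc x (x + (n:ℤ)) with hWdef
  have hsub : ∑ j ∈ W, (u j - j) = (∑ j ∈ W, u j) - ∑ j ∈ W, j := Finset.sum_sub_distrib (fun j => u j) (fun j => j)
  have himg : ∑ v ∈ W.image u, v = ∑ j ∈ W, u j :=
    Finset.sum_image (fun a _ b _ hab => u.injective hab)
  have hcard : (W.image u).card = n := by
    rw [Finset.card_image_of_injective _ u.injective, hWdef, Int.card_Ioc,
      show x + (n:ℤ) - x = (n:ℤ) from by ring, Int.toNat_natCast]
  have hbound : ∀ v ∈ W.image u, y < v := by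
    intro v hv
    obtain ⟨j, hj, rfl⟩ := Finset.mem_image.1 hv
    rw [hWdef, Finset.mem_Ioc] at hj
    exact h j hj.1
  have hge := min_interval_le_sum n (W.image u) y hcard hbound
  have c1 := two_mul_sum_Ioc' y n
  have c2 := two_mul_sum_Ioc' x n
  have h2 : (n:ℤ) * (2*y + n + 1) ≤ (n:ℤ) * (2*x + n + 1) := by linarith
  have h3 : 2*y + (n:ℤ) + 1 ≤ 2*x + n + 1 :=
    le_of_mul_le_mul_left h2 (show (0:ℤ) < n from by omega)
  omega

end S10

section S11a
variable {n : ℕ}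

lemma not_dvd_shift {a c : ℤ} (h : (n:ℤ) ∣ a) (hc : ¬(n:ℤ) ∣ c) : ¬(n:ℤ) ∣ (a + c) := by
  intro h2
  exact hc (by have := dvd_sub h2 h; rwa [show a + c - a = c from by ring] at this)

/-- The braid relation, in right-associated form. -/
lemma braid (hn : 3 ≤ n) (r : ℤ) :
    sA hn r * (sA hn (r+1) * sA hn r) = sA hn (r+1) * (sA hn r * sA hn (r+1)) := by
  have nd1 := not_dvd_one hn
  have nd2 := not_dvd_two hn
  have ndm1 := not_dvd_neg_one hn
  have ndm2 := not_dvd_neg_two hn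
  ext x
  simp only [Equiv.Perm.mul_apply]
  by_cases hx1 : (n:ℤ) ∣ (x - r)
  · have e1 : sA hn r x = x + 1 := sFun_eq1 hx1
    have e2 : sA hn (r+1) (x+1) = x + 2 := by
      rw [sA_apply, sFun_eq1 (by rw [show x + 1 - (r+1) = x - r from by ring]; exact hx1)]
      ring
    have e3 : sA hn r (x+2) = x+2 := by
      apply sA_fix hn
      · rw [show x + 2 - r = (x - r) + 2 from by ring]; exact not_dvd_shift hx1 nd2
      · rw [show x + 2 - (r+1) = (x - r) + 1 from by ring]; exact not_dvd_shift hx1 nd1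
    have e4 : sA hn (r+1) x = x := by
      apply sA_fix hn
      · rw [show x - (r+1) = (x - r) + -1 from by ring]; exact not_dvd_shift hx1 ndm1
      · rw [show x - (r+1+1) = (x - r) + -2 from by ring]; exact not_dvd_shift hx1 ndm2
    simp [e1, e2, e3, e4]
  · by_cases hx2 : (n:ℤ) ∣ (x - (r+1))
    · have f1 : sA hn r x = x - 1 := sFun_eq2 hn hx2
      have f2 : sA hn (r+1) (x-1) = x - 1 := by
        apply sA_fix hn
        · rw [show x - 1 - (r+1) = (x - (r+1)) + -1 from by ring]; exact not_dvd_shift hx2 ndm1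
        · rw [show x - 1 - (r+1+1) = (x - (r+1)) + -2 from by ring]; exact not_dvd_shift hx2 ndm2
      have f3 : sA hn r (x-1) = x := by
        rw [sA_apply, sFun_eq1 (by rw [show x - 1 - r = x - (r+1) from by ring]; exact hx2)]
        ring
      have f4 : sA hn (r+1) x = x + 1 := sFun_eq1 hx2
      have f5 : sA hn r (x+1) = x+1 := by
        apply sA_fix hn
        · rw [show x + 1 - r = (x - (r+1)) + 2 from by ring]; exact not_dvd_shift hx2 nd2
        · rw [show x + 1 - (r+1) = (x - (r+1)) + 1 from by ring]; exact not_dvd_shift hx2 nd1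
      have f6 : sA hn (r+1) (x+1) = x := by
        rw [sA_apply, sFun_eq2 hn (by rw [show x + 1 - (r+1+1) = x - (r+1) from by ring]; exact hx2)]
        ring
      simp [f1, f2, f3, f4, f5, f6]
    · by_cases hx3 : (n:ℤ) ∣ (x - (r+2))
      · have g1 : sA hn r x = x := by
          apply sA_fix hn
          · rw [show x - r = (x - (r+2)) + 2 from by ring]; exact not_dvd_shift hx3 nd2
          · rw [show x - (r+1) = (x - (r+2)) + 1 from by ring]; exact not_dvd_shift hx3 nd1
        have g2 : sA hn (r+1) x = x - 1 := by
          rw [sA_apply, sFun_eq2 hn (by rw [show x - (r+1+1) = x - (r+2) from by ring]; exact hx3)]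
        have g3 : sA hn r (x-1) = x - 2 := by
          rw [sA_apply, sFun_eq2 hn (by rw [show x - 1 - (r+1) = x - (r+2) from by ring]; exact hx3)]
          ring
        have g4 : sA hn (r+1) (x-2) = x-2 := by
          apply sA_fix hn
          · rw [show x - 2 - (r+1) = (x - (r+2)) + -1 from by ring]; exact not_dvd_shift hx3 ndm1
          · rw [show x - 2 - (r+1+1) = (x - (r+2)) + -2 from by ring]; exact not_dvd_shift hx3 ndm2
        simp [g1, g2, g3, g4]
      · have k1 : sA hn r x = x := by
          apply sA_fix hn
          · exact hx1
          · exact fun hc => hx2 hc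
        have k2 : sA hn (r+1) x = x := by
          apply sA_fix hn
          · exact hx2
          · exact fun hc => hx3 (by rwa [show x - (r+1+1) = x - (r+2) from by ring] at hc)
        simp [k1, k2]

end S11a

section S11b
variable {n : ℕ}

lemma toNat_mod_succ (hn : 3 ≤ n) (y : ℤ) :
    ((y+1) % (n:ℤ)).toNat = (((y % (n:ℤ)).toNat) + 1) % n := by
  have h1 : 0 ≤ y % (n:ℤ) := Int.emod_nonneg y (by omega)
  have h2 : y % (n:ℤ) < n := Int.emod_lt_of_pos y (by omega)
  have h3 : (y+1) % (n:ℤ) = (y % n + 1) % n := by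
    rw [Int.add_emod, Int.emod_eq_of_lt (show (0:ℤ) ≤ 1 from by norm_num) (by omega)]
  rcases eq_or_lt_of_le (show y % (n:ℤ) + 1 ≤ n from by omega) with he | hlt
  · rw [h3, he, Int.emod_self]
    have hcast : (y % (n:ℤ)).toNat + 1 = n := by omega
    rw [hcast, Nat.mod_self]
    rfl
  · rw [h3, Int.emod_eq_of_lt (by omega) hlt, Nat.mod_eq_of_lt (by omega)]
    omega

lemma bad_persists {m : List ℕ} (p : ℕ) (h : HasBadFactorA n m) : HasBadFactorA n (m ++ [p]) := by
  obtain ⟨i, j, h1, h2, h3, s, t, hst⟩ := h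
  exact ⟨i, j, h1, h2, h3, s, t ++ [p], by rw [← hst]; simp⟩

lemma bad_extend (hn : 3 ≤ n) {w : Equiv.Perm ℤ} (hw : IsAffinePerm n w) {y : ℤ}
    (hdesc : w (y+1) < w y)
    (H : ∃ l, IsReducedWordA n (w * sA hn y) l ∧ HasBadFactorA n l) :
    ∃ l, IsReducedWordA n w l ∧ HasBadFactorA n l := by
  obtain ⟨m, hm, hbad⟩ := H
  have hwa : IsAffinePerm n (w * sA hn y) := mul_sA_affine hn hw y
  have hasc : (w * sA hn y) y < (w * sA hn y) (y+1) := by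
    rw [Equiv.Perm.mul_apply, Equiv.Perm.mul_apply, sA_self hn, sA_succ hn]
    exact hdesc
  have hred := reduced_append_letter hn hwa y hm hasc
  rw [mul_sA_sA hn] at hred
  exact ⟨_, hred, bad_persists _ hbad⟩

lemma triple_descent_bad (hn : 3 ≤ n) {w : Equiv.Perm ℤ} (hw : IsAffinePerm n w) {y : ℤ}
    (h21 : w (y+2) < w (y+1)) (h10 : w (y+1) < w y) :
    ∃ l, IsReducedWordA n w l ∧ HasBadFactorA n l := by
  set p : ℕ := (y % (n:ℤ)).toNat with hpdef
  set q : ℕ := ((y+1) % (n:ℤ)).toNat with hqdef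
  set w₁ := w * sA hn y with hw₁
  set w₂ := w₁ * sA hn (y+1) with hw₂
  set w₃ := w₂ * sA hn y with hw₃
  have hw₁a : IsAffinePerm n w₁ := mul_sA_affine hn hw y
  have hw₂a : IsAffinePerm n w₂ := mul_sA_affine hn hw₁a (y+1)
  have hw₃a : IsAffinePerm n w₃ := mul_sA_affine hn hw₂a y
  have hv1y : w₁ y = w (y+1) := by rw [hw₁, Equiv.Perm.mul_apply, sA_self hn]
  have hv1y1 : w₁ (y+1) = w y := by rw [hw₁, Equiv.Perm.mul_apply, sA_succ hn]
  have hv1y2 : w₁ (y+2) = w (y+2) := by rw [hw₁, Equiv.Perm.mul_apply, sA_fix_add_two hn]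
  have hsfix : sA hn (y+1) y = y := by
    have := sA_fix_sub_one hn (y+1)
    rwa [show y+1-1 = y from by ring] at this
  have hv2y : w₂ y = w (y+1) := by
    rw [hw₂, Equiv.Perm.mul_apply, hsfix, hv1y]
  have hv2y1 : w₂ (y+1) = w (y+2) := by
    rw [hw₂, Equiv.Perm.mul_apply, sA_self hn, show y+1+1 = y+2 from by ring, hv1y2]
  have hv2y2 : w₂ (y+2) = w y := by
    rw [hw₂, Equiv.Perm.mul_apply, show y+2 = y+1+1 from by ring, sA_succ hn, hv1y1]
  have hv3y : w₃ y = w (y+2) := by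
    rw [hw₃, Equiv.Perm.mul_apply, sA_self hn, hv2y1]
  have hv3y1 : w₃ (y+1) = w (y+1) := by
    rw [hw₃, Equiv.Perm.mul_apply, sA_succ hn, hv2y]
  obtain ⟨m, hm⟩ := exists_reduced hn hw₃a
  have a1 : w₃ y < w₃ (y+1) := by rw [hv3y, hv3y1]; exact h21
  have r1 := reduced_append_letter hn hw₃a y hm a1
  rw [hw₃, mul_sA_sA hn] at r1
  have a2 : w₂ (y+1) < w₂ (y+1+1) := by
    rw [hv2y1, show y+1+1 = y+2 from by ring, hv2y2]
    exact lt_trans h21 h10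
  have r2 := reduced_append_letter hn hw₂a (y+1) r1 a2
  rw [hw₂, mul_sA_sA hn] at r2
  have a3 : w₁ y < w₁ (y+1) := by rw [hv1y, hv1y1]; exact h10
  have r3 := reduced_append_letter hn hw₁a y r2 a3
  rw [hw₁, mul_sA_sA hn] at r3
  have hlist : ((m ++ [p]) ++ [q]) ++ [p] = m ++ [p, q, p] := by simp
  rw [hlist] at r3
  have hq : q = (p + 1) % n := toNat_mod_succ hn y
  have hpn : p < n := toNat_emod_lt hn y
  have hqn : q < n := toNat_emod_lt hn (y+1)
  by_cases hp1 : 1 ≤ p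
  · exact ⟨_, r3, ⟨p, q, hp1, by omega, Or.inl hq, m, [], by simp⟩⟩
  · have hp0 : p = 0 := by omega
    have hq1 : q = 1 := by rw [hq, hp0]; exact Nat.mod_eq_of_lt (by omega)
    have hwprod : wprod hn (m ++ [p,q,p]) = w := by
      have h := r3.1
      rw [isWordA_iff_wprod hn] at h
      exact h.2
    have hlp : sA hn (p:ℤ) = sA hn y := by rw [hpdef]; exact sA_letter hn y
    have hlq : sA hn (q:ℤ) = sA hn (y+1) := by rw [hqdef]; exact sA_letter hn (y+1)
    have hprod3 : wprod hn [p,q,p] = sA hn y * (sA hn (y+1) * sA hn y) := by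
      simp [wprod, hlp, hlq]
    have hprod3' : wprod hn [q,p,q] = sA hn (y+1) * (sA hn y * sA hn (y+1)) := by
      simp [wprod, hlp, hlq]
    have hweq : wprod hn (m ++ [q,p,q]) = w := by
      rw [wprod_append hn m [q,p,q], hprod3', ← braid hn y, ← hprod3,
        ← wprod_append hn m [p,q,p], hwprod]
    have hword : IsWordA n w (m ++ [q,p,q]) := by
      rw [isWordA_iff_wprod hn]
      refine ⟨?_, hweq⟩
      intro a ha
      rcases List.mem_append.1 ha with h' | h'
      · exact (r3.1).1 a (List.mem_append.2 (Or.inl h'))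
      · simp only [List.mem_cons, List.mem_singleton, List.not_mem_nil, or_false] at h'
        rcases h' with rfl | rfl | rfl
        · omega
        · omega
        · omega
    have hlen : (m ++ [q,p,q]).length = lenA n w := by
      have h := r3.2
      simpa using h
    exact ⟨_, ⟨hword, hlen⟩, ⟨q, p, by omega, by omega, Or.inr (by omega), m, [], by simp⟩⟩

end S11b

section S12
variable {n : ℕ}

lemma dvd_ge_n {a : ℤ} (hn : 3 ≤ n) (h : (n:ℤ) ∣ a) (ha : 0 < a) : (n:ℤ) ≤ a := by
  exact Int.le_of_dvd ha h

/-- Pattern `(j, q, q+1)` with `w j > w q > w (q+1)` yields a bad reduced word. -/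
lemma W1 (hn : 3 ≤ n) :
    ∀ (g : ℕ) (w : Equiv.Perm ℤ), IsAffinePerm n w → ∀ j q : ℤ, j < q → (q - j).toNat = g →
      w q < w j → w (q+1) < w q →
      ∃ l, IsReducedWordA n w l ∧ HasBadFactorA n l := by
  intro g
  induction g using Nat.strong_induction_on with
  | _ g ih =>
    intro w hw j q hjq hg h1 h2
    by_cases hcol : (n:ℤ) ∣ (q - (j+1))
    · rcases eq_or_lt_of_le (show j + 1 ≤ q from hjq) with he | hlt
      · refine triple_descent_bad hn hw (y := j) ?_ ?_
        · rw [show j+2 = (j+1)+1 from by ring, he]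
          exact h2
        · rw [he]
          exact h1
      · -- translation downwards
        have hge : (n:ℤ) ≤ q - (j+1) := dvd_ge_n hn hcol (by omega)
        have hs1 : w (q - n) = w q - n := by
          have := aff_dvd_shift hw (show (n:ℤ) ∣ (q - n) - q from ⟨-1, by ring⟩)
          omega
        have hs2 : w (q - n + 1) = w (q+1) - n := by
          have := aff_dvd_shift hw (show (n:ℤ) ∣ (q - n + 1) - (q+1) from ⟨-1, by ring⟩)
          omega
        refine ih (g - n) (by omega) w hw j (q - n) (by omega) (by omega) ?_ ?_
        · rw [hs1]; omega
        · rw [hs2, hs1]; omega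
    · have hlt : j + 1 < q := by
        rcases eq_or_lt_of_le (show j+1 ≤ q from hjq) with he | h'
        · exfalso; apply hcol; rw [← he]; simp
        · exact h'
      by_cases hc2 : w q < w (j+1)
      · exact ih (g-1) (by omega) w hw (j+1) q hlt (by omega) hc2 h2
      · have hj1q : w (j+1) < w q := by
          have hne : w (j+1) ≠ w q := fun hc => by have := w.injective hc; omega
          omega
        have hdesc : w (j+1) < w j := lt_trans hj1q h1
        have hqj : ¬ (n:ℤ) ∣ (q - j) := fun hc => by
          have := aff_dvd_shift hw hc
          omega
        have hq1j : ¬ (n:ℤ) ∣ (q + 1 - j) := fun hc => by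
          have := aff_dvd_shift hw hc
          omega
        have hwa' : IsAffinePerm n (w * sA hn j) := mul_sA_affine hn hw j
        have hv1 : (w * sA hn j) (j+1) = w j := by
          rw [Equiv.Perm.mul_apply, sA_succ hn]
        have hvq : (w * sA hn j) q = w q := by
          rw [Equiv.Perm.mul_apply, sA_fix hn hqj hcol]
        have hvq1 : (w * sA hn j) (q+1) = w (q+1) := by
          rw [Equiv.Perm.mul_apply, sA_fix hn ?_ ?_]
          · rwa [show q + 1 - j = q + 1 - j from rfl]
          · rwa [show q + 1 - (j+1) = q - j from by ring]
        have H := ih (g-1) (by omega) (w * sA hn j) hwa' (j+1) q hlt (by omega)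
          (by rw [hvq, hv1]; exact h1) (by rw [hvq1, hvq]; exact h2)
        exact bad_extend hn hw hdesc H

/-- Pattern `(q, q+1, k)` with `w q > w (q+1) > w k` yields a bad reduced word. -/
lemma W2 (hn : 3 ≤ n) :
    ∀ (g : ℕ) (w : Equiv.Perm ℤ), IsAffinePerm n w → ∀ q k : ℤ, q + 1 < k → (k - q).toNat = g →
      w (q+1) < w q → w k < w (q+1) →
      ∃ l, IsReducedWordA n w l ∧ HasBadFactorA n l := by
  intro g
  induction g using Nat.strong_induction_on with
  | _ g ih =>
    intro w hw q k hqk hg h1 h2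
    by_cases hcol : (n:ℤ) ∣ (k - (q+2))
    · rcases eq_or_lt_of_le (show q + 2 ≤ k from by omega) with he | hlt
      · refine triple_descent_bad hn hw (y := q) ?_ h1
        rw [show q+2 = q+1+1 from by ring] at he
        rw [show q+2 = q+1+1 from by ring, he]
        exact h2
      · have hge : (n:ℤ) ≤ k - (q+2) := dvd_ge_n hn hcol (by omega)
        have hs1 : w (q + n) = w q + n := by
          have := aff_dvd_shift hw (show (n:ℤ) ∣ (q + n) - q from ⟨1, by ring⟩)
          omega
        have hs2 : w (q + n + 1) = w (q+1) + n := by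
          have := aff_dvd_shift hw (show (n:ℤ) ∣ (q + n + 1) - (q+1) from ⟨1, by ring⟩)
          omega
        refine ih (g - n) (by omega) w hw (q + n) k (by omega) (by omega) ?_ ?_
        · rw [hs2, hs1]; omega
        · rw [hs2]; omega
    · have hlt : q + 2 < k := by
        rcases eq_or_lt_of_le (show q + 2 ≤ k from by omega) with he | h'
        · exfalso; apply hcol; rw [← he]; simp
        · exact h'
      by_cases hc2 : w (k-1) < w (q+1)
      · exact ih (g-1) (by omega) w hw q (k-1) (by omega) (by omega) h1 hc2
      · have hk1 : w (q+1) < w (k-1) := by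
          have hne : w (k-1) ≠ w (q+1) := fun hc => by have := w.injective hc; omega
          omega
        have hdesc : w ((k-1)+1) < w (k-1) := by
          rw [show k-1+1 = k from by ring]
          exact lt_trans h2 hk1
        have hkq1 : ¬ (n:ℤ) ∣ (k - (q+1)) := fun hc => by
          have := aff_dvd_shift hw hc
          omega
        have hkq : ¬ (n:ℤ) ∣ (k - q) := fun hc => by
          have := aff_dvd_shift hw hc
          omega
        have hwa' : IsAffinePerm n (w * sA hn (k-1)) := mul_sA_affine hn hw (k-1)
        have hvk1 : (w * sA hn (k-1)) (k-1) = w k := by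
          rw [Equiv.Perm.mul_apply, sA_self hn, show k-1+1 = k from by ring]
        have hvq : (w * sA hn (k-1)) q = w q := by
          rw [Equiv.Perm.mul_apply, sA_fix hn ?_ ?_]
          · rw [show q - (k-1) = -(k - (q+1)) from by ring]
            exact fun hc => hkq1 (dvd_neg.1 hc)
          · rw [show q - (k-1+1) = -(k - q) from by ring]
            exact fun hc => hkq (dvd_neg.1 hc)
        have hvq1 : (w * sA hn (k-1)) (q+1) = w (q+1) := by
          rw [Equiv.Perm.mul_apply, sA_fix hn ?_ ?_]
          · rw [show q + 1 - (k-1) = -(k - (q+2)) from by ring]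
            exact fun hc => hcol (dvd_neg.1 hc)
          · rw [show q + 1 - (k-1+1) = -(k - (q+1)) from by ring]
            exact fun hc => hkq1 (dvd_neg.1 hc)
        have H := ih (g-1) (by omega) (w * sA hn (k-1)) hwa' q (k-1) (by omega) (by omega)
          (by rw [hvq1, hvq]; exact h1) (by rw [hvk1, hvq1]; exact h2)
        exact bad_extend hn hw hdesc H

end S12

section S13
variable {n : ℕ}

lemma dis_le_two_len (hn : 3 ≤ n) {w : Equiv.Perm ℤ} (hw : IsAffinePerm n w) :
    disA n w ≤ 2 * (lenA n w : ℤ) := by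
  obtain ⟨l, hword, hlen⟩ := word_exists hn (invA n w) w hw rfl
  have hb := disA_wprod_le hn l
  have hwp : wprod hn l = w := ((isWordA_iff_wprod hn w l).1 hword).2
  rw [hwp, hlen] at hb
  rw [lenA_eq_invA hn hw]
  exact hb

lemma backward_dir (hn : 3 ≤ n) :
    ∀ (L : ℕ) (w : Equiv.Perm ℤ), IsAffinePerm n w → lenA n w = L →
      disA n w ≠ 2 * (L:ℤ) → ∃ l, IsReducedWordA n w l ∧ HasBadFactorA n l := by
  intro L
  induction L using Nat.strong_induction_on with
  | _ L ih =>
    intro w hw hL hne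
    have hle := dis_le_two_len hn hw
    rw [hL] at hle
    have hlt : disA n w < 2 * (L:ℤ) := lt_of_le_of_ne hle hne
    rcases Nat.eq_zero_or_pos L with rfl | hpos
    · exfalso
      have h0 : invA n w = 0 := by rw [← lenA_eq_invA hn hw, hL]
      have hw1 := invA_zero_eq_one hn hw h0
      rw [hw1, disA_one] at hlt
      simp at hlt
    · obtain ⟨l, hl⟩ := exists_reduced hn hw
      rcases l.eq_nil_or_concat with rfl | ⟨l', p, rfl⟩
      · exfalso
        have h2 := hl.2
        simp only [List.length_nil] at h2
        omega
      · rw [List.concat_eq_append] at hl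
        have hword := hl.1
        rw [isWordA_iff_wprod hn] at hword
        obtain ⟨hlet, hprod⟩ := hword
        have hlen : l'.length + 1 = L := by
          have h2 := hl.2
          rw [hL] at h2
          simpa using h2
        set v := wprod hn l' with hv
        have hva : IsAffinePerm n v := wprod_affine hn l'
        have hvword : IsWordA n v l' := by
          rw [isWordA_iff_wprod hn]
          exact ⟨fun a ha => hlet a (List.mem_append.2 (Or.inl ha)), rfl⟩
        have hwv : w = v * sA hn (p:ℤ) := by
          rw [← hprod, wprod_append hn l' [p], wprod_singleton hn p]
        have hinvw : invA n w = L := by rw [← lenA_eq_invA hn hw, hL]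
        have hinvv_le : invA n v ≤ L - 1 := by
          have := word_length_ge hn l' v hvword
          omega
        have hne' : v (p:ℤ) ≠ v ((p:ℤ)+1) := fun hc => by have := v.injective hc; omega
        have hasc : v (p:ℤ) < v ((p:ℤ)+1) := by
          rcases lt_or_gt_of_ne hne' with h' | h'
          · exact h'
          · exfalso
            have hd := invA_mul_descent hn hva h'
            rw [← hwv] at hd
            omega
        have hinc := invA_mul_ascent hn hva hasc
        rw [← hwv] at hinc
        have hinvv : invA n v = L - 1 := by omega
        have hlenv : lenA n v = L - 1 := by rw [lenA_eq_invA hn hva, hinvv]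
        by_cases hdv : disA n v = 2 * ((L-1 : ℕ) : ℤ)
        · have hdmul := disA_mul hn hva (p:ℤ)
          rw [← hwv] at hdmul
          have hdvz : disA n v = 2*(L:ℤ) - 2 := by
            rw [hdv]
            push_cast
            omega
          have hwp' : w (p:ℤ) = v ((p:ℤ)+1) := by
            rw [hwv, Equiv.Perm.mul_apply, sA_self hn]
          have hwp1 : w ((p:ℤ)+1) = v (p:ℤ) := by
            rw [hwv, Equiv.Perm.mul_apply, sA_succ hn]
          split_ifs at hdmul with he1 he2 he2
          · omega
          · -- both values ≥ p+1 : pattern (p, p+1, k)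
            push_neg at he2
            have hk : ∃ k, (p:ℤ) - 1 < k ∧ w k ≤ v (p:ℤ) - 1 := by
              by_contra hno
              push_neg at hno
              exact cnt2 hn hw (show (p:ℤ)-1 < v (p:ℤ) - 1 from by omega)
                (fun jj hjj => by have := hno jj hjj; omega)
            obtain ⟨k, hk1, hk2⟩ := hk
            have hkp : k ≠ (p:ℤ) := fun hc => by rw [hc, hwp'] at hk2; omega
            have hkp1 : k ≠ (p:ℤ)+1 := fun hc => by rw [hc, hwp1] at hk2; omega
            have hkgt : (p:ℤ)+1 < k := by omega
            refine W2 hn (k - (p:ℤ)).toNat w hw (p:ℤ) k hkgt rfl ?_ ?_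
            · rw [hwp1, hwp']; exact hasc
            · rw [hwp1]; omega
          · -- both values ≤ p : pattern (j0, p, p+1)
            have hj : ∃ j0, j0 ≤ (p:ℤ)+1 ∧ v ((p:ℤ)+1) + 1 ≤ w j0 := by
              by_contra hno
              push_neg at hno
              exact cnt1 hn hw (show v ((p:ℤ)+1) < (p:ℤ)+1 from by omega)
                (fun jj hjj => by have := hno jj hjj; omega)
            obtain ⟨j0, hj1, hj2⟩ := hj
            have hjp : j0 ≠ (p:ℤ) := fun hc => by rw [hc, hwp'] at hj2; omega
            have hjp1 : j0 ≠ (p:ℤ)+1 := fun hc => by rw [hc, hwp1] at hj2; omega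
            have hjlt : j0 < (p:ℤ) := by omega
            refine W1 hn ((p:ℤ) - j0).toNat w hw j0 (p:ℤ) hjlt rfl ?_ ?_
            · rw [hwp']; omega
            · rw [hwp1, hwp']; exact hasc
          · push_neg at he1 he2
            omega
        · have hl'red : IsReducedWordA n v l' := ⟨hvword, by rw [hlenv]; omega⟩
          obtain ⟨m, hmred, hmbad⟩ := ih (L-1) (by omega) v hva hlenv hdv
          have hext := reduced_append_letter hn hva (p:ℤ) hmred hasc
          rw [← hwv] at hext
          have hpn : p < n := hlet p (List.mem_append.2 (Or.inr (by simp)))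
          have hplet : (((p:ℤ) % (n:ℤ)).toNat) = p := by
            rw [Int.emod_eq_of_lt (Int.natCast_nonneg p) (by exact_mod_cast hpn)]
            exact Int.toNat_natCast p
          rw [hplet] at hext
          exact ⟨_, hext, bad_persists _ hmbad⟩

end S13

-- SECTIONS_GO_HERE

theorem stmt_7 (n : ℕ) (hn : 3 ≤ n) (w : Equiv.Perm ℤ) (hw : IsAffinePerm n w) :
    disA n w = 2 * (lenA n w : ℤ) ↔
      ∀ l : List ℕ, IsReducedWordA n w l → ¬ HasBadFactorA n l := by
  constructor
  · exact fun hdis => forward_dir hn hdis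
  · intro hno
    by_contra hne
    obtain ⟨l, hred, hbad⟩ := backward_dir hn (lenA n w) w hw rfl hne
    exact hno l hred hbad

end Stmt7
end

section
/- Let n ≥ 3 and let w be an element of the affine symmetric group 𝑆̃_n. Then no reduced word for w contains three consecutive letters i (i±1) i for some i ∈ {1,…,n−1} (letter indices read modulo n) if and only if in every reduced word for w, for every i ∈ {1,…,n−1}, any two occurrences of the letter i are separated by at least one occurrence of the letter i−1 and at least one occurrence of the letter i+1, where the letter n is identified with the letter 0. -/
set_option maxHeartbeats 1000000


namespace Stmt8

/-- `w` is an element of the affine symmetric group `𝑆̃_n`: a bijection of `ℤ`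
with `w(i + n) = w(i) + n` for all `i` and `∑_{i=1}^n (w(i) - i) = 0`. -/
def IsAffinePerm (n : ℕ) (w : Equiv.Perm ℤ) : Prop :=
  (∀ i : ℤ, w (i + (n : ℤ)) = w i + (n : ℤ)) ∧
    ∑ i ∈ Finset.Icc (1 : ℤ) (n : ℤ), (w i - i) = 0

/-- `σ` is the Coxeter generator `sᵢ` of `𝑆̃_n`: it swaps `j` and `j + 1` for
every integer `j ≡ i (mod n)` and fixes all other integers. -/
def IsGenA (n : ℕ) (i : ℕ) (σ : Equiv.Perm ℤ) : Prop :=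
  ∀ j : ℤ, (j ≡ (i : ℤ) [ZMOD (n : ℤ)] → σ j = j + 1 ∧ σ (j + 1) = j) ∧
    ((¬ j ≡ (i : ℤ) [ZMOD (n : ℤ)] ∧ ¬ j ≡ (i : ℤ) + 1 [ZMOD (n : ℤ)]) → σ j = j)

/-- `l` is a word for `w` in the letters `{0, …, n-1}`:
`w = s_{i₁} ⋯ s_{i_ℓ}` where `l = [i₁, …, i_ℓ]`. -/
def IsWordA (n : ℕ) (w : Equiv.Perm ℤ) (l : List ℕ) : Prop :=
  (∀ i ∈ l, i < n) ∧
    ∃ σs : List (Equiv.Perm ℤ), List.Forall₂ (IsGenA n) l σs ∧ σs.prod = w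

/-- The Coxeter length of `w`: the minimal length of a word for `w`. -/
noncomputable def lenA (n : ℕ) (w : Equiv.Perm ℤ) : ℕ :=
  sInf {m | ∃ l : List ℕ, IsWordA n w l ∧ l.length = m}

/-- The disarray `dis(w) = ∑_{i=1}^n |w(i) - i|`. -/
noncomputable def disA (n : ℕ) (w : Equiv.Perm ℤ) : ℤ :=
  ∑ i ∈ Finset.Icc (1 : ℤ) (n : ℤ), |w i - i|

/-- `l` is a reduced word for `w`. -/
def IsReducedWordA (n : ℕ) (w : Equiv.Perm ℤ) (l : List ℕ) : Prop :=
  IsWordA n w l ∧ l.length = lenA n w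

/-- `l` contains three consecutive letters of the form `i (i±1) i` for some
`i ∈ {1, …, n-1}`, where letter indices are read modulo `n`. -/
def HasBadFactorA (n : ℕ) (l : List ℕ) : Prop :=
  ∃ i j : ℕ, 1 ≤ i ∧ i + 1 ≤ n ∧ (j = (i + 1) % n ∨ i = j + 1) ∧ [i, j, i] <:+: l

/-- In `l`, for every `i ∈ {1, …, n-1}`, any two occurrences of the letter `i`
are separated by at least one occurrence of the letter `i-1` and at least one
occurrence of the letter `i+1`, where the letter `n` is identified with the
letter `0` (i.e. the second separating letter is `(i+1) mod n`). -/
def SeparatedOccurrencesA (n : ℕ) (l : List ℕ) : Prop :=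
  ∀ i : ℕ, 1 ≤ i → i + 1 ≤ n →
    ∀ p q : Fin l.length, p < q → l.get p = i → l.get q = i →
      (∃ r : Fin l.length, p < r ∧ r < q ∧ l.get r + 1 = i) ∧
      (∃ r : Fin l.length, p < r ∧ r < q ∧ l.get r = (i + 1) % n)

def gf (n a : ℤ) (j : ℤ) : ℤ :=
  if (a + 1) % n = a % n then j
  else if j % n = a % n then j + 1
  else if j % n = (a + 1) % n then j - 1
  else j

lemma madd {n x y : ℤ} (h : x % n = y % n) : (x + 1) % n = (y + 1) % n :=
  Int.ModEq.add_right 1 h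

lemma msub {n x y : ℤ} (h : x % n = y % n) : (x - 1) % n = (y - 1) % n :=
  Int.ModEq.sub_right 1 h

lemma guard_false {n : ℤ} (hn : 2 ≤ n) (a : ℤ) : (a + 1) % n ≠ a % n := by
  intro h
  have h2 : n ∣ a - (a + 1) := Int.ModEq.dvd h
  have h3 : n ∣ 1 := by
    have e : a - (a+1) = -1 := by ring
    rw [e] at h2
    exact (dvd_neg.mp h2)
  have := Int.le_of_dvd one_pos h3
  omega

lemma two_ne {n : ℤ} (hn : 3 ≤ n) (a : ℤ) : (a + 2) % n ≠ a % n := by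
  intro h
  have h2 : n ∣ a - (a + 2) := Int.ModEq.dvd h
  have h3 : n ∣ 2 := by
    have e : a - (a+2) = -2 := by ring
    rw [e] at h2
    exact (dvd_neg.mp h2)
  have := Int.le_of_dvd two_pos h3
  omega

lemma gf_app1 {n a j : ℤ} (hg : (a + 1) % n ≠ a % n) (h : j % n = a % n) :
    gf n a j = j + 1 := by
  unfold gf; rw [if_neg hg, if_pos h]

lemma gf_app2 {n a j : ℤ} (hg : (a + 1) % n ≠ a % n) (h : j % n = (a + 1) % n) :
    gf n a j = j - 1 := by
  unfold gf
  rw [if_neg hg, if_neg (by rw [h]; exact hg), if_pos h]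

lemma gf_app3 {n a j : ℤ} (h1 : j % n ≠ a % n) (h2 : j % n ≠ (a + 1) % n) :
    gf n a j = j := by
  unfold gf
  by_cases g : (a + 1) % n = a % n
  · rw [if_pos g]
  · rw [if_neg g, if_neg h1, if_neg h2]

lemma gf_invol (n a : ℤ) : Function.Involutive (gf n a) := by
  intro j
  by_cases hg : (a + 1) % n = a % n
  · unfold gf; rw [if_pos hg, if_pos hg]
  · by_cases h1 : j % n = a % n
    · rw [gf_app1 hg h1, gf_app2 hg (madd h1)]
      ring
    · by_cases h2 : j % n = (a + 1) % n
      · have h3 : (j - 1) % n = a % n := by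
          have := msub h2; simpa using this
        rw [gf_app2 hg h2, gf_app1 hg h3]
        ring
      · rw [gf_app3 h1 h2, gf_app3 h1 h2]

lemma mcancel {n x y : ℤ} (h : (x + 1) % n = (y + 1) % n) : x % n = y % n := by
  have := msub h; simpa using this

lemma gf_comm {n : ℤ} (hn : 2 ≤ n) {a b : ℤ}
    (h1 : b % n ≠ a % n) (h2 : b % n ≠ (a + 1) % n) (h3 : (b + 1) % n ≠ a % n) :
    ∀ j, gf n a (gf n b j) = gf n b (gf n a j) := by
  intro j
  have ga := guard_false hn a
  have gb := guard_false hn b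
  by_cases c1 : j % n = a % n
  · have d1 : j % n ≠ b % n := by rw [c1]; exact fun e => h1 e.symm
    have d2 : j % n ≠ (b + 1) % n := by rw [c1]; exact fun e => h3 e.symm
    have e1 : (j + 1) % n ≠ b % n := by
      rw [madd c1]; exact fun e => h2 e.symm
    have e2 : (j + 1) % n ≠ (b + 1) % n := fun e => h1 (by rw [← mcancel e, c1])
    have s1 : gf n b j = j := gf_app3 d1 d2
    have s2 : gf n a j = j + 1 := gf_app1 ga c1
    have s3 : gf n b (j + 1) = j + 1 := gf_app3 e1 e2
    rw [s1, s2, s3]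
  · by_cases c2 : j % n = (a + 1) % n
    · have d1 : j % n ≠ b % n := by rw [c2]; exact fun e => h2 e.symm
      have d2 : j % n ≠ (b + 1) % n := by
        rw [c2]; intro e; exact h1 (mcancel e).symm
      have h4 : (j - 1) % n = a % n := by have := msub c2; simpa using this
      have e1 : (j - 1) % n ≠ b % n := by rw [h4]; exact fun e => h1 e.symm
      have e2 : (j - 1) % n ≠ (b + 1) % n := by rw [h4]; exact fun e => h3 e.symm
      have s1 : gf n b j = j := gf_app3 d1 d2
      have s2 : gf n a j = j - 1 := gf_app2 ga c2
      have s3 : gf n b (j - 1) = j - 1 := gf_app3 e1 e2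
      rw [s1, s2, s3]
    · by_cases c3 : j % n = b % n
      · have f1 : (j + 1) % n = (b + 1) % n := madd c3
        have f2 : (j + 1) % n ≠ a % n := by rw [f1]; exact h3
        have f3 : (j + 1) % n ≠ (a + 1) % n := by
          rw [f1]; intro e; exact h1 (mcancel e)
        have s1 : gf n b j = j + 1 := gf_app1 gb c3
        have s2 : gf n a (j + 1) = j + 1 := gf_app3 f2 f3
        have s3 : gf n a j = j := gf_app3 c1 c2
        simp only [s1, s2, s3]
      · by_cases c4 : j % n = (b + 1) % n
        · have h4 : (j - 1) % n = b % n := by have := msub c4; simpa using this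
          have f2 : (j - 1) % n ≠ a % n := by rw [h4]; exact h1
          have f3 : (j - 1) % n ≠ (a + 1) % n := by rw [h4]; exact h2
          have s1 : gf n b j = j - 1 := gf_app2 gb c4
          have s2 : gf n a (j - 1) = j - 1 := gf_app3 f2 f3
          have s3 : gf n a j = j := gf_app3 c1 c2
          simp only [s1, s2, s3]
        · have s1 : gf n b j = j := gf_app3 c3 c4
          have s2 : gf n a j = j := gf_app3 c1 c2
          simp only [s1, s2]

lemma gf_braid {n : ℤ} (hn : 3 ≤ n) {a b : ℤ} (hab : b % n = (a + 1) % n) :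
    ∀ j, gf n a (gf n b (gf n a j)) = gf n b (gf n a (gf n b j)) := by
  intro j
  have hn2 : (2:ℤ) ≤ n := by omega
  have ga := guard_false hn2 a
  have gb := guard_false hn2 b
  have hb1 : (b + 1) % n = (a + 2) % n := by
    have h := madd hab
    have e : a + 1 + 1 = a + 2 := by ring
    rw [e] at h; exact h
  have t2 := two_ne hn a
  have t21 : (a + 2) % n ≠ (a + 1) % n := by
    intro e
    have e2 : (a + 1 + 1) % n = (a + 1) % n := by
      have h : a + 1 + 1 = a + 2 := by ring
      rw [h]; exact e
    exact guard_false hn2 (a + 1) e2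
  by_cases c1 : j % n = a % n
  · have e1 : (j + 1) % n = b % n := by rw [madd c1, ← hab]
    have f1 : (j + 1 + 1) % n = (a + 2) % n := by
      have h : a + 2 = a + 1 + 1 := by ring
      rw [h]; exact madd (madd c1)
    have f2 : (j + 1 + 1) % n ≠ a % n := by rw [f1]; exact t2
    have f3 : (j + 1 + 1) % n ≠ (a + 1) % n := by rw [f1]; exact t21
    have d1 : j % n ≠ b % n := by rw [c1, hab]; exact fun e => ga e.symm
    have d2 : j % n ≠ (b + 1) % n := by rw [c1, hb1]; exact fun e => t2 e.symm
    have s1 : gf n a j = j + 1 := gf_app1 ga c1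
    have s2 : gf n b (j + 1) = j + 1 + 1 := gf_app1 gb e1
    have s3 : gf n a (j + 1 + 1) = j + 1 + 1 := gf_app3 f2 f3
    have s4 : gf n b j = j := gf_app3 d1 d2
    simp only [s1, s2, s3, s4]
  · by_cases c2 : j % n = (a + 1) % n
    · have cb : j % n = b % n := by rw [c2, ← hab]
      have hsub : (j - 1) % n = a % n := by have := msub c2; simpa using this
      have d1 : (j - 1) % n ≠ b % n := by rw [hsub, hab]; exact fun e => ga e.symm
      have d2 : (j - 1) % n ≠ (b + 1) % n := by rw [hsub, hb1]; exact fun e => t2 e.symm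
      have e1 : (j + 1) % n = (a + 2) % n := by
        have h : a + 2 = a + 1 + 1 := by ring
        rw [h]; exact madd c2
      have f2 : (j + 1) % n ≠ a % n := by rw [e1]; exact t2
      have f3 : (j + 1) % n ≠ (a + 1) % n := by rw [e1]; exact t21
      have s1 : gf n a j = j - 1 := gf_app2 ga c2
      have s2 : gf n b (j - 1) = j - 1 := gf_app3 d1 d2
      have s3 : gf n a (j - 1) = j - 1 + 1 := gf_app1 ga hsub
      have s4 : gf n b j = j + 1 := gf_app1 gb cb
      have s5 : gf n a (j + 1) = j + 1 := gf_app3 f2 f3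
      have s6 : gf n b (j + 1) = j + 1 - 1 := gf_app2 gb (by rw [e1, ← hb1])
      rw [s1, s2, s3, s4, s5, s6]
      ring
    · by_cases c3 : j % n = (a + 2) % n
      · have cb1 : j % n = (b + 1) % n := by rw [c3, ← hb1]
        have hsub : (j - 1) % n = (a + 1) % n := by
          have h := msub c3
          have e : a + 2 - 1 = a + 1 := by ring
          rw [e] at h; exact h
        have hsub2 : (j - 1 - 1) % n = a % n := by have := msub hsub; simpa using this
        have f1 : (j - 1 - 1) % n ≠ b % n := by rw [hsub2, hab]; exact fun e => ga e.symm
        have f2 : (j - 1 - 1) % n ≠ (b + 1) % n := by rw [hsub2, hb1]; exact fun e => t2 e.symm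
        have s1 : gf n a j = j := gf_app3 (by rw [c3]; exact t2) (by rw [c3]; exact t21)
        have s2 : gf n b j = j - 1 := gf_app2 gb cb1
        have s3 : gf n a (j - 1) = j - 1 - 1 := gf_app2 ga hsub
        have s4 : gf n b (j - 1 - 1) = j - 1 - 1 := gf_app3 f1 f2
        simp only [s1, s2, s3, s4]
      · have d1 : j % n ≠ b % n := by rw [hab]; exact c2
        have d2 : j % n ≠ (b + 1) % n := by rw [hb1]; exact c3
        have s1 : gf n a j = j := gf_app3 c1 c2
        have s2 : gf n b j = j := gf_app3 d1 d2
        simp only [s1, s2]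


def genPerm (n a : ℕ) : Equiv.Perm ℤ := Function.Involutive.toPerm _ (gf_invol (n:ℤ) (a:ℤ))

lemma genPerm_apply (n a : ℕ) (j : ℤ) : genPerm n a j = gf (n:ℤ) (a:ℤ) j := rfl

lemma genPerm_sq (n a : ℕ) : genPerm n a * genPerm n a = 1 := by
  ext j
  simp only [Equiv.Perm.mul_apply, genPerm_apply, Equiv.Perm.one_apply]
  exact gf_invol (n:ℤ) (a:ℤ) j

lemma isGenA_genPerm {n : ℕ} (hn : 2 ≤ n) (i : ℕ) : IsGenA n i (genPerm n i) := by
  intro j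
  have ga := guard_false (show (2:ℤ) ≤ (n:ℤ) by exact_mod_cast hn) (i:ℤ)
  constructor
  · intro h
    have h' : j % (n:ℤ) = (i:ℤ) % (n:ℤ) := h
    constructor
    · rw [genPerm_apply]; exact gf_app1 ga h'
    · rw [genPerm_apply]
      rw [gf_app2 ga (madd h')]
      ring
  · rintro ⟨h1, h2⟩
    rw [genPerm_apply]
    exact gf_app3 h1 h2

lemma isGenA_unique {n : ℕ} (hn : 2 ≤ n) {i : ℕ} {σ : Equiv.Perm ℤ} (h : IsGenA n i σ) :
    σ = genPerm n i := by
  have ga := guard_false (show (2:ℤ) ≤ (n:ℤ) by exact_mod_cast hn) (i:ℤ)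
  apply Equiv.ext
  intro j
  by_cases c1 : j % (n:ℤ) = (i:ℤ) % (n:ℤ)
  · rw [genPerm_apply, gf_app1 ga c1]
    exact ((h j).1 c1).1
  · by_cases c2 : j % (n:ℤ) = ((i:ℤ) + 1) % (n:ℤ)
    · have h4 : (j - 1) % (n:ℤ) = (i:ℤ) % (n:ℤ) := by have := msub c2; simpa using this
      have := ((h (j - 1)).1 h4).2
      rw [genPerm_apply, gf_app2 ga c2]
      have e : j - 1 + 1 = j := by ring
      rw [e] at this
      exact this
    · rw [genPerm_apply, gf_app3 c1 c2]
      exact (h j).2 ⟨c1, c2⟩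

lemma forall2_iff {n : ℕ} (hn : 2 ≤ n) {l : List ℕ} {σs : List (Equiv.Perm ℤ)} :
    List.Forall₂ (IsGenA n) l σs ↔ σs = l.map (genPerm n) := by
  constructor
  · intro h
    induction h with
    | nil => rfl
    | cons h _ ih => simp [isGenA_unique hn h, ih]
  · rintro rfl
    induction l with
    | nil => exact List.Forall₂.nil
    | cons x xs ih => exact List.Forall₂.cons (isGenA_genPerm hn x) ih

lemma isWordA_iff {n : ℕ} (hn : 2 ≤ n) {w : Equiv.Perm ℤ} {l : List ℕ} :
    IsWordA n w l ↔ (∀ i ∈ l, i < n) ∧ (l.map (genPerm n)).prod = w := by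
  constructor
  · rintro ⟨h1, σs, h2, h3⟩
    exact ⟨h1, by rw [← (forall2_iff hn).mp h2]; exact h3⟩
  · rintro ⟨h1, h2⟩
    exact ⟨h1, l.map (genPerm n), (forall2_iff hn).mpr rfl, h2⟩

lemma lenA_le {n : ℕ} {w : Equiv.Perm ℤ} {l : List ℕ} (h : IsWordA n w l) :
    lenA n w ≤ l.length :=
  Nat.sInf_le ⟨l, h, rfl⟩

def Pres (n a x : ℕ) : Prop :=
  (x:ℤ) % (n:ℤ) ≠ (a:ℤ) % (n:ℤ) ∧ (x:ℤ) % (n:ℤ) ≠ ((a:ℤ) + 1) % (n:ℤ) ∧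
    ((x:ℤ) + 1) % (n:ℤ) ≠ (a:ℤ) % (n:ℤ)

lemma pres_commute {n a x : ℕ} (hn : 2 ≤ n) (h : Pres n a x) :
    Commute (genPerm n a) (genPerm n x) := by
  obtain ⟨h1, h2, h3⟩ := h
  have hn' : (2:ℤ) ≤ (n:ℤ) := by exact_mod_cast hn
  apply Equiv.ext
  intro j
  exact gf_comm hn' h1 h2 h3 j

lemma genPerm_braid {n a b : ℕ} (hn : 3 ≤ n)
    (hab : (b:ℤ) % (n:ℤ) = ((a:ℤ) + 1) % (n:ℤ)) :
    genPerm n a * genPerm n b * genPerm n a = genPerm n b * genPerm n a * genPerm n b := by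
  have hn' : (3:ℤ) ≤ (n:ℤ) := by exact_mod_cast hn
  apply Equiv.ext
  intro j
  exact gf_braid hn' hab j

lemma swap_assoc {G : Type*} [Group G] {a b : G} (h : a * b = b * a) (x : G) :
    a * (b * x) = b * (a * x) := by
  rw [← mul_assoc, h, mul_assoc]

lemma braid_chain {G : Type*} [Group G] {a b : G} (h : a * b * a = b * a * b) (x : G) :
    a * (b * (a * x)) = b * (a * (b * x)) := by
  rw [← mul_assoc, ← mul_assoc, h, mul_assoc, mul_assoc]

lemma prod_pair {n : ℕ} (a : ℕ) (u v t : List ℕ)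
    (hc : ∀ x ∈ v, Commute (genPerm n a) (genPerm n x)) :
    ((u ++ [a] ++ v ++ [a] ++ t).map (genPerm n)).prod =
      ((u ++ v ++ t).map (genPerm n)).prod := by
  have hcv : Commute (genPerm n a) ((v.map (genPerm n)).prod) :=
    Commute.list_prod_right _ _ (fun y hy => by
      obtain ⟨x, hx, rfl⟩ := List.mem_map.mp hy; exact hc x hx)
  simp only [List.map_append, List.prod_append, List.map_cons, List.prod_cons,
    List.map_nil, List.prod_nil, mul_one, one_mul, mul_assoc]
  congr 1
  rw [swap_assoc hcv.eq]
  congr 1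
  rw [← mul_assoc, genPerm_sq, one_mul]

lemma prod_triple {n : ℕ} (a b : ℕ) (u v1 v2 t : List ℕ)
    (hc1 : ∀ x ∈ v1, Commute (genPerm n a) (genPerm n x))
    (hc2 : ∀ x ∈ v2, Commute (genPerm n a) (genPerm n x)) :
    ((u ++ [a] ++ v1 ++ [b] ++ v2 ++ [a] ++ t).map (genPerm n)).prod =
      ((u ++ v1 ++ [a, b, a] ++ v2 ++ t).map (genPerm n)).prod := by
  have hcv1 : Commute (genPerm n a) ((v1.map (genPerm n)).prod) :=
    Commute.list_prod_right _ _ (fun y hy => by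
      obtain ⟨x, hx, rfl⟩ := List.mem_map.mp hy; exact hc1 x hx)
  have hcv2 : Commute (genPerm n a) ((v2.map (genPerm n)).prod) :=
    Commute.list_prod_right _ _ (fun y hy => by
      obtain ⟨x, hx, rfl⟩ := List.mem_map.mp hy; exact hc2 x hx)
  simp only [List.map_append, List.prod_append, List.map_cons, List.prod_cons,
    List.map_nil, List.prod_nil, mul_one, one_mul, mul_assoc]
  congr 1
  rw [swap_assoc hcv1.eq]
  congr 1
  congr 1
  congr 1
  rw [swap_assoc hcv2.eq.symm]

lemma prod_aba_bab {n : ℕ} (a b : ℕ) (u t : List ℕ)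
    (E : genPerm n a * genPerm n b * genPerm n a = genPerm n b * genPerm n a * genPerm n b) :
    ((u ++ [a, b, a] ++ t).map (genPerm n)).prod =
      ((u ++ [b, a, b] ++ t).map (genPerm n)).prod := by
  simp only [List.map_append, List.prod_append, List.map_cons, List.prod_cons,
    List.map_nil, List.prod_nil, mul_one, one_mul, mul_assoc]
  congr 1
  exact braid_chain E _

lemma nat_of_mod {n u v : ℕ} (hu : u < n) (h : (u:ℤ) % (n:ℤ) = (v:ℤ) % (n:ℤ)) :
    u = v % n := by
  have h1 : (u:ℤ) = ((v % n : ℕ) : ℤ) := by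
    rw [Int.natCast_mod]
    rw [← h]
    exact (Int.emod_eq_of_lt (by positivity) (by exact_mod_cast hu)).symm
  exact_mod_cast h1

lemma bad_of_triple {n : ℕ} (hn : 3 ≤ n) {l' : List ℕ} {x y : ℕ} (hx : x < n) (hy : y < n)
    (hx1 : 1 ≤ x)
    (hrel : ((y:ℤ) % (n:ℤ) = ((x:ℤ) + 1) % (n:ℤ)) ∨ (((y:ℤ) + 1) % (n:ℤ) = (x:ℤ) % (n:ℤ)))
    (hinf : [x, y, x] <:+: l') : HasBadFactorA n l' := by
  refine ⟨x, y, hx1, hx, ?_, hinf⟩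
  rcases hrel with h | h
  · left
    have : ((x:ℤ) + 1) % (n:ℤ) = (((x + 1 : ℕ)):ℤ) % (n:ℤ) := by push_cast; ring_nf
    rw [this] at h
    exact nat_of_mod hy h
  · right
    -- (y+1) ≡ x, 1 ≤ x < n, y < n ⇒ x = y + 1
    have h' : (((y + 1 : ℕ)):ℤ) % (n:ℤ) = (x:ℤ) % (n:ℤ) := by push_cast; push_cast at h; exact h
    have hx' : x = (y + 1) % n := nat_of_mod hx h'.symm
    rcases Nat.lt_or_ge (y + 1) n with hlt | hge
    · rw [Nat.mod_eq_of_lt hlt] at hx'; omega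
    · have : y + 1 = n := by omega
      rw [this, Nat.mod_self] at hx'
      omega

lemma letters_lt {n : ℕ} {w : Equiv.Perm ℤ} {l : List ℕ} (h : IsWordA n w l) :
    ∀ i ∈ l, i < n := h.1

lemma pair_contra {n : ℕ} (hn : 3 ≤ n) {w : Equiv.Perm ℤ} {l u v t : List ℕ} {a : ℕ}
    (hl : IsReducedWordA n w l) (hd : l = u ++ [a] ++ v ++ [a] ++ t)
    (hv : ∀ x ∈ v, Pres n a x) : False := by
  have hn2 : 2 ≤ n := by omega
  have hword := (isWordA_iff hn2).mp hl.1
  have hw' : IsWordA n w (u ++ v ++ t) := by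
    refine (isWordA_iff hn2).mpr ⟨?_, ?_⟩
    · intro i hi
      apply hword.1
      rw [hd]
      simp only [List.mem_append, List.mem_singleton] at hi ⊢
      tauto
    · rw [← hword.2, hd]
      exact (prod_pair a u v t (fun x hx => pres_commute hn2 (hv x hx))).symm
  have hle := lenA_le hw'
  have hlen : l.length = u.length + v.length + t.length + 2 := by
    rw [hd]; simp [List.length_append]; omega
  have hlen' : (u ++ v ++ t).length = u.length + v.length + t.length := by
    simp [List.length_append]; omega
  have := hl.2
  omega

lemma triple_contra {n : ℕ} (hn : 3 ≤ n) {w : Equiv.Perm ℤ} {l u v1 v2 t : List ℕ} {a b : ℕ}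
    (hl : IsReducedWordA n w l)
    (hLHS : ∀ l' : List ℕ, IsReducedWordA n w l' → ¬ HasBadFactorA n l')
    (hd : l = u ++ [a] ++ v1 ++ [b] ++ v2 ++ [a] ++ t)
    (h1 : ∀ x ∈ v1, Pres n a x) (h2 : ∀ x ∈ v2, Pres n a x)
    (hab : (b:ℤ) % (n:ℤ) = ((a:ℤ) + 1) % (n:ℤ) ∨ ((b:ℤ) + 1) % (n:ℤ) = (a:ℤ) % (n:ℤ)) :
    False := by
  have hn2 : 2 ≤ n := by omega
  have hn2' : (2:ℤ) ≤ (n:ℤ) := by exact_mod_cast hn2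
  have hword := (isWordA_iff hn2).mp hl.1
  have ha : a < n := by
    apply hword.1; rw [hd]; simp
  have hb : b < n := by
    apply hword.1; rw [hd]; simp
  have E : genPerm n a * genPerm n b * genPerm n a
      = genPerm n b * genPerm n a * genPerm n b := by
    rcases hab with h | h
    · exact genPerm_braid hn h
    · exact (genPerm_braid hn h.symm).symm
  have hb0 : 1 ≤ b ∨ 1 ≤ a := by
    by_contra hcon
    push_neg at hcon
    obtain ⟨e1, e2⟩ := hcon
    interval_cases a
    interval_cases b
    rcases hab with h | h
    · exact guard_false hn2' 0 h.symm
    · exact guard_false hn2' 0 h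
  -- the two replacement words
  have hlen : l.length = u.length + v1.length + v2.length + t.length + 3 := by
    rw [hd]; simp [List.length_append]; omega
  have hprod := prod_triple a b u v1 v2 t
    (fun x hx => pres_commute hn2 (h1 x hx))
    (fun x hx => pres_commute hn2 (h2 x hx))
  have hmem : ∀ i, (i ∈ u ∨ i ∈ v1 ∨ i ∈ v2 ∨ i ∈ t ∨ i = a ∨ i = b) → i < n := by
    rintro i (hi|hi|hi|hi|rfl|rfl)
    · exact hword.1 i (by rw [hd]; simp [hi])
    · exact hword.1 i (by rw [hd]; simp [hi])
    · exact hword.1 i (by rw [hd]; simp [hi])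
    · exact hword.1 i (by rw [hd]; simp [hi])
    · exact ha
    · exact hb
  have hlett : ∀ i ∈ u ++ v1 ++ [a, b, a] ++ v2 ++ t, i < n := by
    intro i hi
    apply hmem
    simp only [List.mem_append, List.mem_cons, List.not_mem_nil, or_false] at hi
    tauto
  rcases Nat.lt_or_ge 0 a with hpos | ha0
  · -- a ≥ 1 : use [a, b, a]
    have hw' : IsReducedWordA n w (u ++ v1 ++ [a, b, a] ++ v2 ++ t) := by
      refine ⟨(isWordA_iff hn2).mpr ⟨hlett, ?_⟩, ?_⟩
      · rw [← hword.2, hd]; exact hprod.symm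
      · rw [← hl.2, hlen]; simp [List.length_append]; omega
    exact hLHS _ hw' (bad_of_triple hn ha hb hpos hab
      ⟨u ++ v1, v2 ++ t, by simp⟩)
  · -- a = 0 : braid to [b, a, b]
    have ha0' : a = 0 := by omega
    have hb1 : 1 ≤ b := by omega
    have hprod2 := prod_aba_bab a b (u ++ v1) (v2 ++ t) E
    have hshape : u ++ v1 ++ [a, b, a] ++ v2 ++ t = (u ++ v1) ++ [a, b, a] ++ (v2 ++ t) := by
      simp
    have hshape2 : (u ++ v1) ++ [b, a, b] ++ (v2 ++ t) = u ++ v1 ++ [b, a, b] ++ v2 ++ t := by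
      simp
    have hlett2 : ∀ i ∈ u ++ v1 ++ [b, a, b] ++ v2 ++ t, i < n := by
      intro i hi
      apply hmem
      simp only [List.mem_append, List.mem_cons, List.not_mem_nil, or_false] at hi
      tauto
    have hw'' : IsReducedWordA n w (u ++ v1 ++ [b, a, b] ++ v2 ++ t) := by
      refine ⟨(isWordA_iff hn2).mpr ⟨hlett2, ?_⟩, ?_⟩
      · rw [← hword.2, hd, hprod, hshape, hprod2, hshape2]
      · rw [← hl.2, hlen]; simp [List.length_append]; omega
    refine hLHS _ hw'' (bad_of_triple hn hb ha hb1 ?_ ⟨u ++ v1, v2 ++ t, by simp⟩)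
    rcases hab with h | h
    · right; rw [← h]
    · left; rw [← h]

lemma tri {α : Type*} (b : α) (P : α → Prop) :
    ∀ v : List α, (∀ x ∈ v, x = b ∨ P x) →
      (∀ x ∈ v, P x) ∨
      (∃ v1 v2, v = v1 ++ b :: v2 ∧ (∀ x ∈ v1, P x) ∧ (∀ x ∈ v2, P x)) ∨
      (∃ v1 v2 v3, v = v1 ++ b :: v2 ++ b :: v3) := by
  intro v
  induction v with
  | nil => intro _; left; simp
  | cons x w ih =>
    intro h
    have hw := ih (fun y hy => h y (List.mem_cons_of_mem _ hy))
    by_cases hPx : P x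
    · rcases hw with h1 | ⟨v1, v2, rfl, hp1, hp2⟩ | ⟨v1, v2, v3, rfl⟩
      · left
        intro y hy
        rcases List.mem_cons.mp hy with rfl | hy
        · exact hPx
        · exact h1 y hy
      · right; left
        refine ⟨x :: v1, v2, rfl, ?_, hp2⟩
        intro y hy
        rcases List.mem_cons.mp hy with rfl | hy
        · exact hPx
        · exact hp1 y hy
      · right; right; exact ⟨x :: v1, v2, v3, rfl⟩
    · have hxb : x = b := (h x List.mem_cons_self).resolve_right hPx
      subst hxb
      rcases hw with h1 | ⟨v1, v2, rfl, hp1, hp2⟩ | ⟨v1, v2, v3, rfl⟩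
      · right; left; exact ⟨[], w, rfl, by simp, h1⟩
      · right; right; exact ⟨[], v1, v2, rfl⟩
      · right; right; exact ⟨[], v1, v2 ++ x :: v3, by simp⟩

lemma decomp_of_lt (l : List ℕ) (p q : Fin l.length) (hpq : p < q) :
    ∃ u v t, l = u ++ [l.get p] ++ v ++ [l.get q] ++ t ∧
      (∀ x ∈ v, ∃ r : Fin l.length, p < r ∧ r < q ∧ l.get r = x) ∧
      v.length ≤ l.length := by
  have hP : (p : ℕ) < l.length := p.isLt
  have hQ : (q : ℕ) < l.length := q.isLt
  have hPQ : (p : ℕ) < (q : ℕ) := hpq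
  refine ⟨l.take (p : ℕ), (l.drop ((p : ℕ) + 1)).take ((q : ℕ) - (p : ℕ) - 1),
    l.drop ((q : ℕ) + 1), ?_, ?_, ?_⟩
  · conv_lhs => rw [← List.take_append_drop (p : ℕ) l]
    rw [List.drop_eq_getElem_cons hP]
    conv_lhs =>
      rw [← List.take_append_drop ((q : ℕ) - (p : ℕ) - 1) (l.drop ((p : ℕ) + 1))]
    rw [List.drop_drop]
    have he : ((p : ℕ) + 1) + ((q : ℕ) - (p : ℕ) - 1) = (q : ℕ) := by omega
    rw [he, List.drop_eq_getElem_cons hQ]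
    simp only [List.get_eq_getElem, List.append_assoc, List.cons_append, List.singleton_append, List.nil_append]
  · intro x hx
    obtain ⟨k, hk, hkx⟩ := List.mem_iff_getElem.mp hx
    have hk1 : k < (q : ℕ) - (p : ℕ) - 1 := by
      have := hk
      simp [List.length_take, List.length_drop] at this
      omega
    have hk2 : (p : ℕ) + 1 + k < l.length := by omega
    refine ⟨⟨(p : ℕ) + 1 + k, hk2⟩, ?_, ?_, ?_⟩
    · simp only [Fin.lt_def]; omega
    · simp only [Fin.lt_def]; omega
    · rw [List.get_eq_getElem]
      have e1 : ((l.drop ((p : ℕ) + 1)).take ((q : ℕ) - (p : ℕ) - 1))[k] =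
          (l.drop ((p : ℕ) + 1))[k]'(by simp [List.length_drop]; omega) :=
        List.getElem_take
      have e2 : (l.drop ((p : ℕ) + 1))[k]'(by simp [List.length_drop]; omega) =
          l[(p : ℕ) + 1 + k] := List.getElem_drop
      rw [← hkx, e1, e2]
  · simp only [List.length_take, List.length_drop]
    omega

lemma key {n : ℕ} (hn : 3 ≤ n) {w : Equiv.Perm ℤ} {l : List ℕ}
    (hl : IsReducedWordA n w l)
    (hLHS : ∀ l' : List ℕ, IsReducedWordA n w l' → ¬ HasBadFactorA n l') :
    ∀ N : ℕ, ∀ (u : List ℕ) (a : ℕ) (v t : List ℕ), v.length ≤ N → l = u ++ [a] ++ v ++ [a] ++ t →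
      (∃ x ∈ v, (x:ℤ) % (n:ℤ) = ((a:ℤ) - 1) % (n:ℤ)) ∧
      (∃ x ∈ v, (x:ℤ) % (n:ℤ) = ((a:ℤ) + 1) % (n:ℤ)) := by
  intro N
  induction N using Nat.strong_induction_on with
  | _ N IH =>
  intro u a v t hvN hd
  have hn2 : 2 ≤ n := by omega
  have hn2' : (2:ℤ) ≤ (n:ℤ) := by exact_mod_cast hn2
  have hnpos : 0 < n := by omega
  have hword := (isWordA_iff hn2).mp hl.1
  have ha : a < n := hword.1 a (by rw [hd]; simp)
  have hvlt : ∀ x ∈ v, x < n := fun x hx => hword.1 x (by rw [hd]; simp [hx])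
  by_cases hav : a ∈ v
  · obtain ⟨v1, v2, rfl⟩ := List.append_of_mem hav
    have hd2 : l = u ++ [a] ++ v1 ++ [a] ++ (v2 ++ [a] ++ t) := by rw [hd]; simp
    have hlt : v1.length < N := by
      have h2 : (v1 ++ a :: v2).length = v1.length + v2.length + 1 := by simp; omega
      omega
    obtain ⟨h1, h2⟩ := IH v1.length hlt u a v1 (v2 ++ [a] ++ t) le_rfl hd2
    constructor
    · obtain ⟨x, hx, hx2⟩ := h1; exact ⟨x, by simp [hx], hx2⟩
    · obtain ⟨x, hx, hx2⟩ := h2; exact ⟨x, by simp [hx], hx2⟩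
  · have hne : ∀ x ∈ v, (x:ℤ) % (n:ℤ) ≠ (a:ℤ) % (n:ℤ) := by
      intro x hx he
      have hxa : x = a % n := nat_of_mod (hvlt x hx) he
      rw [Nat.mod_eq_of_lt ha] at hxa
      exact hav (hxa ▸ hx)
    constructor
    · -- ∃ x ∈ v, x ≡ a - 1 : if not, non-Pres letters are ≡ a + 1
      by_contra hno
      push_neg at hno
      set b : ℕ := (a + 1) % n with hbdef
      have hblt : b < n := Nat.mod_lt _ hnpos
      have hbmod : (b:ℤ) % (n:ℤ) = ((a:ℤ) + 1) % (n:ℤ) := by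
        rw [hbdef]
        rw [Int.natCast_mod]
        push_cast
        rw [Int.emod_emod_of_dvd _ dvd_rfl]
      have hclass : ∀ x ∈ v, x = b ∨ Pres n a x := by
        intro x hx
        by_cases e1 : (x:ℤ) % (n:ℤ) = ((a:ℤ) + 1) % (n:ℤ)
        · left
          have hx2 : x = (a + 1) % n := by
            apply nat_of_mod (hvlt x hx)
            rw [e1]; push_cast; ring_nf
          exact hx2.trans hbdef.symm
        · right
          refine ⟨hne x hx, e1, ?_⟩
          intro e2
          apply hno x hx
          have := msub e2
          simpa using this
      rcases tri b (Pres n a) v hclass with hall | ⟨v1, v2, hveq, hp1, hp2⟩ | ⟨v1, v2, v3, hveq⟩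
      · exact pair_contra hn hl hd hall
      · have hdd : l = u ++ [a] ++ v1 ++ [b] ++ v2 ++ [a] ++ t := by rw [hd, hveq]; simp
        exact triple_contra hn hl hLHS hdd hp1 hp2 (Or.inl hbmod)
      · have hd3 : l = (u ++ [a] ++ v1) ++ [b] ++ v2 ++ [b] ++ (v3 ++ [a] ++ t) := by
          rw [hd, hveq]; simp
        have hlt2 : v2.length < N := by
          have h2 : (v1 ++ b :: v2 ++ b :: v3).length
              = v1.length + v2.length + v3.length + 2 := by simp; omega
          rw [hveq] at hvN
          omega
        obtain ⟨hminus, _⟩ := IH v2.length hlt2 _ b v2 _ le_rfl hd3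
        obtain ⟨x, hxv2, hxm⟩ := hminus
        have hxv : x ∈ v := by rw [hveq]; simp [hxv2]
        apply hne x hxv
        have h4 : ((b:ℤ) - 1) % (n:ℤ) = (a:ℤ) % (n:ℤ) := by
          have h5 := msub hbmod
          simpa using h5
        rw [hxm, h4]
    · -- ∃ x ∈ v, x ≡ a + 1 : if not, non-Pres letters are ≡ a - 1
      by_contra hno
      push_neg at hno
      set c : ℕ := (a + n - 1) % n with hcdef
      have hclt : c < n := Nat.mod_lt _ hnpos
      have hcmod : (c:ℤ) % (n:ℤ) = ((a:ℤ) - 1) % (n:ℤ) := by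
        rw [hcdef, Int.natCast_mod]
        have e : ((a + n - 1 : ℕ) : ℤ) = (a:ℤ) - 1 + (n:ℤ) := by
          have : 1 ≤ a + n := by omega
          push_cast [Nat.cast_sub this]
          ring
        rw [e, Int.emod_emod_of_dvd _ dvd_rfl]
        simpa using Int.add_mul_emod_self_left (a := (a:ℤ) - 1) (b := (n:ℤ)) (c := 1)
      have hclass : ∀ x ∈ v, x = c ∨ Pres n a x := by
        intro x hx
        by_cases e1 : (x:ℤ) % (n:ℤ) = ((a:ℤ) - 1) % (n:ℤ)
        · left
          have hxc : x = c := by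
            have h1 : (x:ℤ) % (n:ℤ) = (c:ℤ) % (n:ℤ) := by rw [e1, hcmod]
            have h2 : x = c % n := nat_of_mod (hvlt x hx) h1
            rw [Nat.mod_eq_of_lt hclt] at h2
            exact h2
          exact hxc
        · right
          refine ⟨hne x hx, ?_, ?_⟩
          · intro e2
            exact hno x hx e2
          · intro e2
            apply e1
            have := msub e2
            simpa using this
      rcases tri c (Pres n a) v hclass with hall | ⟨v1, v2, hveq, hp1, hp2⟩ | ⟨v1, v2, v3, hveq⟩
      · exact pair_contra hn hl hd hall
      · have hdd : l = u ++ [a] ++ v1 ++ [c] ++ v2 ++ [a] ++ t := by rw [hd, hveq]; simp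
        refine triple_contra hn hl hLHS hdd hp1 hp2 (Or.inr ?_)
        have := madd hcmod
        have e : (a:ℤ) - 1 + 1 = (a:ℤ) := by ring
        rw [e] at this
        exact this
      · have hd3 : l = (u ++ [a] ++ v1) ++ [c] ++ v2 ++ [c] ++ (v3 ++ [a] ++ t) := by
          rw [hd, hveq]; simp
        have hlt2 : v2.length < N := by
          have h2 : (v1 ++ c :: v2 ++ c :: v3).length
              = v1.length + v2.length + v3.length + 2 := by simp; omega
          rw [hveq] at hvN
          omega
        obtain ⟨_, hplus⟩ := IH v2.length hlt2 _ c v2 _ le_rfl hd3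
        obtain ⟨x, hxv2, hxm⟩ := hplus
        have hxv : x ∈ v := by rw [hveq]; simp [hxv2]
        apply hne x hxv
        rw [hxm]
        have := madd hcmod
        have e : (a:ℤ) - 1 + 1 = (a:ℤ) := by ring
        rw [e] at this
        exact this

theorem stmt_8 (n : ℕ) (hn : 3 ≤ n) (w : Equiv.Perm ℤ) (hw : IsAffinePerm n w) :
    (∀ l : List ℕ, IsReducedWordA n w l → ¬ HasBadFactorA n l) ↔
      ∀ l : List ℕ, IsReducedWordA n w l → SeparatedOccurrencesA n l := by
  have hn2 : 2 ≤ n := by omega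
  constructor
  · intro hLHS l hl
    intro i hi1 hi2 p q hpq hgp hgq
    obtain ⟨u, v, t, hd, hmem, hvb⟩ := decomp_of_lt l p q hpq
    rw [hgp, hgq] at hd
    obtain ⟨h1, h2⟩ := key hn hl hLHS l.length u i v t hvb hd
    have hlett : ∀ x ∈ v, x < n := by
      intro x hx
      exact hl.1.1 x (by rw [hd]; simp [hx])
    constructor
    · obtain ⟨x, hxv, hx⟩ := h1
      obtain ⟨r, hr1, hr2, hr3⟩ := hmem x hxv
      refine ⟨r, hr1, hr2, ?_⟩
      have hxlt : x < n := hlett x hxv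
      have e1 : ((i:ℤ) - 1) % (n:ℤ) = (i:ℤ) - 1 :=
        Int.emod_eq_of_lt (by omega) (by omega)
      have e2 : (x:ℤ) % (n:ℤ) = (x:ℤ) :=
        Int.emod_eq_of_lt (by positivity) (by exact_mod_cast hxlt)
      rw [e1, e2] at hx
      rw [hr3]
      omega
    · obtain ⟨x, hxv, hx⟩ := h2
      obtain ⟨r, hr1, hr2, hr3⟩ := hmem x hxv
      refine ⟨r, hr1, hr2, ?_⟩
      have hxlt : x < n := hlett x hxv
      have hx' : (x:ℤ) % (n:ℤ) = ((i + 1 : ℕ):ℤ) % (n:ℤ) := by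
        rw [hx]; push_cast; ring_nf
      rw [hr3]
      exact nat_of_mod hxlt hx'
  · intro hRHS l hl hbad
    obtain ⟨i, j, hi1, hin, _, u, t, heq⟩ := hbad
    have heq' : u ++ ([i, j, i] ++ t) = l := by rw [← heq]; simp
    have hlen : u.length + 3 + t.length = l.length := by
      rw [← heq']; simp; omega
    have hget : ∀ k (hk : k < 3), ∀ (h : u.length + k < l.length),
        l[u.length + k] = [i, j, i][k]'(by simpa using hk) := by
      intro k hk h
      rw [List.getElem_of_eq heq'.symm h,
        List.getElem_append_right (Nat.le_add_right _ _)]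
      simp only [Nat.add_sub_cancel_left]
      exact List.getElem_append_left (by simpa using hk)
    have hp : u.length < l.length := by omega
    have hq : u.length + 2 < l.length := by omega
    set p : Fin l.length := ⟨u.length, hp⟩
    set q : Fin l.length := ⟨u.length + 2, hq⟩
    have hgp : l.get p = i := by
      have := hget 0 (by omega) (by omega)
      simpa using this
    have hgq : l.get q = i := by
      have := hget 2 (by omega) hq
      simpa using this
    obtain ⟨⟨r1, hr11, hr12, hr13⟩, ⟨r2, hr21, hr22, hr23⟩⟩ :=
      hRHS l hl i hi1 hin p q (by simp [Fin.lt_def, p, q]) hgp hgq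
    have hr1v : (r1 : ℕ) = u.length + 1 := by
      have a1 : (p : ℕ) < (r1 : ℕ) := hr11
      have a2 : (r1 : ℕ) < (q : ℕ) := hr12
      simp [p, q] at a1 a2
      omega
    have hr2v : (r2 : ℕ) = u.length + 1 := by
      have a1 : (p : ℕ) < (r2 : ℕ) := hr21
      have a2 : (r2 : ℕ) < (q : ℕ) := hr22
      simp [p, q] at a1 a2
      omega
    have hgetj : ∀ (r : Fin l.length), (r : ℕ) = u.length + 1 → l.get r = j := by
      intro r hr
      rw [List.get_eq_getElem]
      have := hget 1 (by omega) (by omega)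
      simp only [hr]
      simpa using this
    have hj1 : j + 1 = i := by rw [← hgetj r1 hr1v]; exact hr13
    have hj2 : j = (i + 1) % n := by rw [← hgetj r2 hr2v]; exact hr23
    rcases Nat.lt_or_ge (i + 1) n with hlt | hge
    · rw [Nat.mod_eq_of_lt hlt] at hj2; omega
    · have hieq : i + 1 = n := by omega
      rw [hieq, Nat.mod_self] at hj2
      omega

end Stmt8
end
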